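/- arXiv:2005.09204 — 12 statements merged into one kernel-verified Lean document; each statement's English description precedes it below -/
import Mathlib

section
/- If (T, J) and (T, J') are both pairs of subsets of ℕ^n such that T ⊕ J = ℕ^n and T ⊕ J' = ℕ^n (direct sums), then J = J'. -/
open Pointwise

/-- Unique decompositions: every sum `a + b` with `a ∈ A`, `b ∈ B` determines `a` and `b`. -/
def UniqueSumsOn {α : Type*} [Add α] (A B : Set α) : Prop :=
  ∀ a ∈ A, ∀ b ∈ B, ∀ a' ∈ A, ∀ b' ∈ B, a + b = a' + b' → a = a' ∧ b = b'

/-- `C = A ⊕ B`: `C` is the direct sum of `A` and `B`. -/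
def IsDirectSum {α : Type*} [Add α] (A B C : Set α) : Prop :=
  C = A + B ∧ UniqueSumsOn A B

theorem stmt0 {n : ℕ} (T J J' : Set (Fin n → ℕ))
    (h : IsDirectSum T J Set.univ) (h' : IsDirectSum T J' Set.univ) :
    J = J' := by
  obtain ⟨hC, hU⟩ := h
  obtain ⟨hC', hU'⟩ := h'
  have h0 : ∀ (A B : Set (Fin n → ℕ)), Set.univ = A + B →
      (0 : Fin n → ℕ) ∈ A ∧ (0 : Fin n → ℕ) ∈ B := by
    intro A B hAB
    have hm : (0 : Fin n → ℕ) ∈ A + B := hAB ▸ Set.mem_univ _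
    obtain ⟨a, ha, b, hb, hab⟩ := hm
    have ha0 : a = 0 ∧ b = 0 := by
      constructor <;> funext i <;>
      · have := congrFun hab i
        simp only [Pi.add_apply, Pi.zero_apply] at this ⊢
        omega
    exact ⟨ha0.1 ▸ ha, ha0.2 ▸ hb⟩
  obtain ⟨hT0, hJ0⟩ := h0 T J hC
  obtain ⟨_, hJ'0⟩ := h0 T J' hC'
  have key : ∀ m : ℕ, ∀ x : Fin n → ℕ, (∑ i, x i) = m → (x ∈ J ↔ x ∈ J') := by
    intro m
    induction m using Nat.strong_induction_on with
    | _ m IH =>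
      intro x hx
      have split : ∀ (t j : Fin n → ℕ), t + j = x → t ≠ 0 → (∑ i, j i) < m := by
        intro t j htj ht0
        have hsum : (∑ i, t i) + (∑ i, j i) = m := by
          rw [← Finset.sum_add_distrib, ← hx]
          exact Finset.sum_congr rfl fun i _ => (congrFun htj i)
        have : ∃ i, t i ≠ 0 := by
          by_contra hc
          push_neg at hc
          exact ht0 (funext fun i => hc i)
        obtain ⟨i, hi⟩ := this
        have hle : t i ≤ ∑ k, t k :=
          Finset.single_le_sum (fun k _ => Nat.zero_le _) (Finset.mem_univ i)
        omega
      constructor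
      · intro hxJ
        have hm : x ∈ T + J' := hC' ▸ Set.mem_univ x
        obtain ⟨t, ht, j, hj, htj'⟩ := hm
        have htj : t + j = x := htj'
        by_cases ht0 : t = 0
        · subst ht0
          rw [zero_add] at htj
          exact htj ▸ hj
        · have hlt := split t j htj ht0
          have hjJ : j ∈ J := (IH _ hlt j rfl).mpr hj
          have := hU (0 : Fin n → ℕ) hT0 x hxJ t ht j hjJ (by rw [zero_add, htj])
          exact absurd this.1.symm ht0
      · intro hxJ'
        have hm : x ∈ T + J := hC ▸ Set.mem_univ x
        obtain ⟨t, ht, j, hj, htj'⟩ := hm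
        have htj : t + j = x := htj'
        by_cases ht0 : t = 0
        · subst ht0
          rw [zero_add] at htj
          exact htj ▸ hj
        · have hlt := split t j htj ht0
          have hjJ' : j ∈ J' := (IH _ hlt j rfl).mp hj
          have := hU' (0 : Fin n → ℕ) hT0 x hxJ' t ht j hjJ' (by rw [zero_add, htj])
          exact absurd this.1.symm ht0
  ext x
  exact key (∑ i, x i) x rfl
end

section
/- If (T, J) is an ℕ^{n+m}-pair such that T = I₁ × I₂ with I₁ ⊆ ℕ^n and I₂ ⊆ ℕ^m, then J can be written as J₁ × J₂ with J₁ ⊆ ℕ^n and J₂ ⊆ ℕ^m; moreover (I₁, J₁) is an ℕ^n-pair and (I₂, J₂) is an ℕ^m-pair. -/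
open Pointwise

/-- Products of direct sums are direct sums. -/
lemma isDirectSum_prod {α β : Type*} [Add α] [Add β] {A₁ B₁ : Set α} {A₂ B₂ : Set β}
    (h₁ : IsDirectSum A₁ B₁ Set.univ) (h₂ : IsDirectSum A₂ B₂ Set.univ) :
    IsDirectSum (A₁ ×ˢ A₂) (B₁ ×ˢ B₂) Set.univ := by
  constructor
  · ext ⟨x, y⟩
    simp only [Set.mem_univ, true_iff]
    have hx : x ∈ A₁ + B₁ := by rw [← h₁.1]; trivial
    have hy : y ∈ A₂ + B₂ := by rw [← h₂.1]; trivial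
    obtain ⟨a₁, ha₁, b₁, hb₁, hab₁⟩ := hx
    obtain ⟨a₂, ha₂, b₂, hb₂, hab₂⟩ := hy
    exact Set.mem_add.2 ⟨(a₁, a₂), ⟨ha₁, ha₂⟩, (b₁, b₂), ⟨hb₁, hb₂⟩,
      Prod.ext hab₁ hab₂⟩
  · rintro ⟨a₁, a₂⟩ ⟨ha₁, ha₂⟩ ⟨b₁, b₂⟩ ⟨hb₁, hb₂⟩ ⟨a₁', a₂'⟩ ⟨ha₁', ha₂'⟩
      ⟨b₁', b₂'⟩ ⟨hb₁', hb₂'⟩ heq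
    have e1 := congrArg Prod.fst heq
    have e2 := congrArg Prod.snd heq
    simp only [Prod.fst_add, Prod.snd_add] at e1 e2
    obtain ⟨u1, v1⟩ := h₁.2 a₁ ha₁ b₁ hb₁ a₁' ha₁' b₁' hb₁' e1
    obtain ⟨u2, v2⟩ := h₂.2 a₂ ha₂ b₂ hb₂ a₂' ha₂' b₂' hb₂' e2
    exact ⟨Prod.ext u1 u2, Prod.ext v1 v2⟩

/-- Complements in a direct sum decomposition are unique, given an additive
degree function that vanishes only at `0`. -/
lemma complement_unique {α : Type*} [AddCommMonoid α] (deg : α → ℕ)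
    (hadd : ∀ a b, deg (a + b) = deg a + deg b)
    (h0 : ∀ a, deg a = 0 → a = 0)
    {T J J' : Set α}
    (hJ : IsDirectSum T J Set.univ) (hJ' : IsDirectSum T J' Set.univ) : J = J' := by
  have deg0 : deg 0 = 0 := by
    have := hadd 0 0; simp at this; omega
  -- 0 ∈ T and 0 ∈ J, 0 ∈ J'
  have mem0 : ∀ (K : Set α), IsDirectSum T K Set.univ → 0 ∈ T ∧ 0 ∈ K := by
    intro K hK
    have : (0 : α) ∈ T + K := by rw [← hK.1]; trivial
    obtain ⟨t, ht, s, hs, hts⟩ := this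
    have hts' : t + s = 0 := hts
    have hdt : deg t = 0 ∧ deg s = 0 := by
      have := hadd t s; rw [hts', deg0] at this; omega
    have ht0 : t = 0 := h0 t hdt.1
    have hs0 : s = 0 := h0 s hdt.2
    exact ⟨ht0 ▸ ht, hs0 ▸ hs⟩
  obtain ⟨h0T, h0J⟩ := mem0 J hJ
  obtain ⟨-, h0J'⟩ := mem0 J' hJ'
  -- main asymmetric step
  have step : ∀ (K K' : Set α), IsDirectSum T K Set.univ → IsDirectSum T K' Set.univ →
      ∀ z, (∀ w, deg w < deg z → (w ∈ K' → w ∈ K)) → z ∈ K → z ∈ K' := by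
    intro K K' hK hK' z ih hzK
    have : z ∈ T + K' := by rw [← hK'.1]; trivial
    obtain ⟨t, ht, s, hs, hts⟩ := this
    have hts' : t + s = z := hts
    by_cases ht0 : t = 0
    · subst ht0; rw [zero_add] at hts'; exact hts' ▸ hs
    · have hdt : 0 < deg t := by
        rcases Nat.eq_zero_or_pos (deg t) with h | h
        · exact absurd (h0 t h) ht0
        · exact h
      have hds : deg s < deg z := by
        have := hadd t s; rw [hts'] at this; omega
      have hsK : s ∈ K := ih s hds hs
      have := hK.2 t ht s hsK 0 h0T z hzK (by rw [zero_add, hts'])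
      exact absurd this.1 ht0
  ext z
  -- strong induction on degree
  have main : ∀ N z, deg z ≤ N → (z ∈ J ↔ z ∈ J') := by
    intro N
    induction N with
    | zero =>
      intro z hz
      have : z = 0 := h0 z (Nat.le_zero.1 hz)
      subst this
      exact ⟨fun _ => h0J', fun _ => h0J⟩
    | succ N ih =>
      intro z hz
      constructor
      · intro hzJ
        refine step J J' hJ hJ' z (fun w hw hwJ' => ?_) hzJ
        exact (ih w (by omega)).2 hwJ'
      · intro hzJ'
        refine step J' J hJ' hJ z (fun w hw hwJ => ?_) hzJ'
        exact (ih w (by omega)).1 hwJ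
  exact main (deg z) z le_rfl

theorem stmt2 {n m : ℕ} (I₁ : Set (Fin n → ℕ)) (I₂ : Set (Fin m → ℕ))
    (J : Set ((Fin n → ℕ) × (Fin m → ℕ)))
    (h : IsDirectSum (I₁ ×ˢ I₂) J (Set.univ : Set ((Fin n → ℕ) × (Fin m → ℕ)))) :
    ∃ (J₁ : Set (Fin n → ℕ)) (J₂ : Set (Fin m → ℕ)),
      J = J₁ ×ˢ J₂ ∧ IsDirectSum I₁ J₁ Set.univ ∧ IsDirectSum I₂ J₂ Set.univ := by
  classical
  set J₁ : Set (Fin n → ℕ) := {a | (a, 0) ∈ J} with hJ₁def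
  set J₂ : Set (Fin m → ℕ) := {b | ((0 : Fin n → ℕ), b) ∈ J} with hJ₂def
  -- 0 ∈ I₁, 0 ∈ I₂
  have h00 : ((0 : Fin n → ℕ), (0 : Fin m → ℕ)) ∈ I₁ ×ˢ I₂ := by
    have : ((0, 0) : (Fin n → ℕ) × (Fin m → ℕ)) ∈ I₁ ×ˢ I₂ + J := by rw [← h.1]; trivial
    obtain ⟨t, ht, s, hs, hts⟩ := this
    have hts' : t + s = (0, 0) := hts
    have ht0 : t = 0 := by
      have e1 := congrArg Prod.fst hts'
      have e2 := congrArg Prod.snd hts'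
      simp only [Prod.fst_add, Prod.snd_add, Prod.fst_zero, Prod.snd_zero] at e1 e2
      ext i
      · have := congrFun e1 i
        simp only [Pi.add_apply, Pi.zero_apply, Prod.fst_zero, Prod.snd_zero] at this ⊢
        omega
      · have := congrFun e2 i
        simp only [Pi.add_apply, Pi.zero_apply, Prod.fst_zero, Prod.snd_zero] at this ⊢
        omega
    rw [ht0] at ht
    simpa using ht
  have h0I₁ : (0 : Fin n → ℕ) ∈ I₁ := h00.1
  have h0I₂ : (0 : Fin m → ℕ) ∈ I₂ := h00.2
  -- (I₁, J₁) is a pair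
  have hp₁ : IsDirectSum I₁ J₁ Set.univ := by
    constructor
    · ext x
      simp only [Set.mem_univ, true_iff]
      have : ((x, (0 : Fin m → ℕ))) ∈ I₁ ×ˢ I₂ + J := by rw [← h.1]; trivial
      obtain ⟨⟨t₁, t₂⟩, ht, ⟨s₁, s₂⟩, hs, hts⟩ := this
      have hts' : ((t₁, t₂) : (Fin n → ℕ) × (Fin m → ℕ)) + (s₁, s₂) = _ := hts
      have e1 := congrArg Prod.fst hts'
      have e2 := congrArg Prod.snd hts'
      simp only [Prod.fst_add, Prod.snd_add] at e1 e2
      have hs₂ : t₂ = 0 ∧ s₂ = 0 := by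
        constructor <;> ext i <;>
        · have := congrFun e2 i
          simp only [Pi.add_apply, Pi.zero_apply] at this ⊢
          omega
      refine Set.mem_add.2 ⟨t₁, ht.1, s₁, ?_, e1⟩
      show (s₁, (0 : Fin m → ℕ)) ∈ J
      rw [← hs₂.2]; exact hs
    · intro a ha b hb a' ha' b' hb' heq
      have := h.2 (a, 0) ⟨ha, h0I₂⟩ (b, 0) hb (a', 0) ⟨ha', h0I₂⟩ (b', 0) hb'
        (by ext <;> simp [heq])
      exact ⟨congrArg Prod.fst this.1, congrArg Prod.fst this.2⟩
  have hp₂ : IsDirectSum I₂ J₂ Set.univ := by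
    constructor
    · ext y
      simp only [Set.mem_univ, true_iff]
      have : (((0 : Fin n → ℕ), y)) ∈ I₁ ×ˢ I₂ + J := by rw [← h.1]; trivial
      obtain ⟨⟨t₁, t₂⟩, ht, ⟨s₁, s₂⟩, hs, hts⟩ := this
      have hts' : ((t₁, t₂) : (Fin n → ℕ) × (Fin m → ℕ)) + (s₁, s₂) = _ := hts
      have e1 := congrArg Prod.fst hts'
      have e2 := congrArg Prod.snd hts'
      simp only [Prod.fst_add, Prod.snd_add] at e1 e2
      have hs₁ : t₁ = 0 ∧ s₁ = 0 := by
        constructor <;> ext i <;>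
        · have := congrFun e1 i
          simp only [Pi.add_apply, Pi.zero_apply] at this ⊢
          omega
      refine Set.mem_add.2 ⟨t₂, ht.2, s₂, ?_, e2⟩
      show ((0 : Fin n → ℕ), s₂) ∈ J
      rw [← hs₁.2]; exact hs
    · intro a ha b hb a' ha' b' hb' heq
      have := h.2 (0, a) ⟨h0I₁, ha⟩ (0, b) hb (0, a') ⟨h0I₁, ha'⟩ (0, b') hb'
        (by ext <;> simp [heq])
      exact ⟨congrArg Prod.snd this.1, congrArg Prod.snd this.2⟩
  -- J₁ ×ˢ J₂ is also a complement of I₁ ×ˢ I₂, so J = J₁ ×ˢ J₂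
  have hprod : IsDirectSum (I₁ ×ˢ I₂) (J₁ ×ˢ J₂) Set.univ := isDirectSum_prod hp₁ hp₂
  have hJeq : J = J₁ ×ˢ J₂ := by
    refine complement_unique (fun z => (∑ i, z.1 i) + (∑ i, z.2 i)) ?_ ?_ h hprod
    · intro a b
      simp [Finset.sum_add_distrib]
      ring
    · intro a hdeg
      have hdeg' : (∑ i, a.1 i) + (∑ i, a.2 i) = 0 := hdeg
      have h1 : ∀ i, a.1 i = 0 := by
        intro i
        have : ∑ i, a.1 i = 0 := by omega
        exact (Finset.sum_eq_zero_iff.1 this) i (Finset.mem_univ i)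
      have h2 : ∀ i, a.2 i = 0 := by
        intro i
        have : ∑ i, a.2 i = 0 := by omega
        exact (Finset.sum_eq_zero_iff.1 this) i (Finset.mem_univ i)
      exact Prod.ext (funext h1) (funext h2)
  exact ⟨J₁, J₂, hJeq, hp₁, hp₂⟩
end

section
/- Let (T, J) be an ℕ^n-pair, N ≥ 2 an integer, and (C, D) a {0,1,…,N−1}-pair (i.e., C ⊕ D = {0,…,N−1}). Fix a coordinate index j. Define T* = {c·e_j + φ_j^N(t) : c ∈ C, t ∈ T} and J* = {d·e_j + φ_j^N(s) : d ∈ D, s ∈ J}, where φ_j^N multiplies the j-th coordinate by N and leaves other coordinates fixed. Then (T*, J*) is an ℕ^n-pair. -/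
open Pointwise

lemma divmod_unique (N r r' q q' : ℕ) (hN : 0 < N) (hr : r < N) (hr' : r' < N)
    (h : r + N * q = r' + N * q') : r = r' ∧ q = q' := by
  have h1 : r = (r + N * q) % N := by
    rw [Nat.add_mul_mod_self_left, Nat.mod_eq_of_lt hr]
  have h2 : r' = (r' + N * q') % N := by
    rw [Nat.add_mul_mod_self_left, Nat.mod_eq_of_lt hr']
  have hrr : r = r' := by rw [h1, h2, h]
  refine ⟨hrr, ?_⟩
  have : N * q = N * q' := by omega
  exact Nat.eq_of_mul_eq_mul_left hN this

theorem stmt4 {n : ℕ} (T J : Set (Fin n → ℕ)) (h : IsDirectSum T J Set.univ)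
    (N : ℕ) (hN : 2 ≤ N) (C D : Set ℕ) (hCD : IsDirectSum C D (Set.Iio N)) (j : Fin n) :
    IsDirectSum
      {x : Fin n → ℕ | ∃ c ∈ C, ∃ t ∈ T, x = Pi.single j c + Function.update t j (N * t j)}
      {x : Fin n → ℕ | ∃ d ∈ D, ∃ s ∈ J, x = Pi.single j d + Function.update s j (N * s j)}
      Set.univ := by
  obtain ⟨hTJ, hTJu⟩ := h
  obtain ⟨hCDeq, hCDu⟩ := hCD
  have hNpos : 0 < N := by omega
  have hsum : ∀ c ∈ C, ∀ d ∈ D, c + d < N := by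
    intro c hc d hd
    have : c + d ∈ Set.Iio N := hCDeq ▸ Set.add_mem_add hc hd
    exact this
  constructor
  · ext x
    simp only [Set.mem_univ, true_iff]
    have hr : x j % N ∈ Set.Iio N := Set.mem_Iio.mpr (Nat.mod_lt _ hNpos)
    rw [hCDeq] at hr
    obtain ⟨c, hc, d, hd, hcd⟩ := Set.mem_add.mp hr
    have hy : Function.update x j (x j / N) ∈ T + J := by
      rw [← hTJ]; trivial
    obtain ⟨t, ht, s, hs, hts⟩ := Set.mem_add.mp hy
    refine Set.mem_add.mpr ⟨_, ⟨c, hc, t, ht, rfl⟩, _, ⟨d, hd, s, hs, rfl⟩, ?_⟩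
    funext i
    have hi := congrFun hts i
    by_cases hij : i = j
    · subst hij
      simp only [Pi.add_apply, Function.update_self, Pi.single_eq_same] at hi ⊢
      have : c + N * t i + (d + N * s i) = (c + d) + N * (t i + s i) := by ring
      rw [this, hcd, hi]; exact Nat.mod_add_div _ _
    · simp only [Pi.add_apply, Function.update_of_ne hij, Pi.single_eq_of_ne hij] at hi ⊢
      omega
  · rintro a ⟨c, hc, t, ht, rfl⟩ b ⟨d, hd, s, hs, rfl⟩ a' ⟨c', hc', t', ht', rfl⟩
      b' ⟨d', hd', s', hs', rfl⟩ heq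
    have hj := congrFun heq j
    simp only [Pi.add_apply, Function.update_self, Pi.single_eq_same] at hj
    have hj' : (c + d) + N * (t j + s j) = (c' + d') + N * (t' j + s' j) := by
      rw [Nat.mul_add, Nat.mul_add]; omega
    obtain ⟨hcd, hq⟩ := divmod_unique N _ _ _ _ hNpos (hsum c hc d hd) (hsum c' hc' d' hd') hj'
    have hts : t + s = t' + s' := by
      funext i
      by_cases hij : i = j
      · subst hij; simpa using hq
      · have hi := congrFun heq i
        simp only [Pi.add_apply, Function.update_of_ne hij, Pi.single_eq_of_ne hij] at hi
        simp only [Pi.add_apply]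
        omega
    obtain ⟨ht1, hs1⟩ := hTJu t ht s hs t' ht' s' hs' hts
    obtain ⟨hc1, hd1⟩ := hCDu c hc d hd c' hc' d' hd' hcd
    subst ht1; subst hs1; subst hc1; subst hd1
    exact ⟨rfl, rfl⟩
end

section
/- Let (T, J) be an ℕ^n-pair, m ≥ 2, a ∈ (ℕ\{0})^m, and L_a = ℕ^m \ (ℕ^m + a). Define (substituting the first coordinate by the monomial with exponent vector a and multiplying T by L_a): T* = {ℓ + k·a ⊕ t̄ : ℓ ∈ L_a, (k, t̄) ∈ T with k the first coordinate of t} viewed in ℕ^{m + n − 1}, i.e., T* = L_a ⊕ {(k·a, t̄) : (k, t̄) ∈ T} and J* = {(k·a, s̄) : (k, s̄) ∈ J}. Then (T*, J*) is an ℕ^{n+m−1}-pair. -/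
open Pointwise

/-- `L_a = ℕ^m \ (ℕ^m + a)`. -/
def La {m : ℕ} (a : Fin m → ℕ) : Set (Fin m → ℕ) :=
  Set.univ \ {x | ∃ y : Fin m → ℕ, x = y + a}

lemma mem_La_iff {m : ℕ} (a x : Fin m → ℕ) : x ∈ La a ↔ ∃ i, x i < a i := by
  simp only [La, Set.mem_diff, Set.mem_univ, Set.mem_setOf_eq, true_and]
  constructor
  · intro hx
    by_contra hc
    push_neg at hc
    exact hx ⟨fun i => x i - a i, funext fun i => by have := hc i; simp; omega⟩
  · rintro ⟨i, hi⟩ ⟨y, hy⟩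
    have := congrFun hy i
    simp at this; omega

lemma La_exists {m : ℕ} (hm : 0 < m) (a : Fin m → ℕ) (ha : ∀ i, 0 < a i)
    (x : Fin m → ℕ) : ∃ ℓ ∈ La a, ∃ k : ℕ, x = ℓ + k • a := by
  have hne : (Finset.univ : Finset (Fin m)).Nonempty := by
    simpa [Finset.univ_nonempty_iff, Fin.pos_iff_nonempty] using hm
  set k := Finset.univ.inf' hne fun i => x i / a i with hk
  have hle : ∀ i, k * a i ≤ x i := fun i =>
    le_trans (Nat.mul_le_mul_right _ (Finset.inf'_le _ (Finset.mem_univ i)))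
      (Nat.div_mul_le_self _ _)
  refine ⟨fun i => x i - k * a i, ?_, k, funext fun i => by simp [hle i]⟩
  rw [mem_La_iff]
  obtain ⟨i, _, hi⟩ := Finset.exists_mem_eq_inf' hne fun i => x i / a i
  refine ⟨i, ?_⟩
  have h1 : x i / a i * a i + x i % a i = x i := Nat.div_add_mod' _ _
  have h2 : x i % a i < a i := Nat.mod_lt _ (ha i)
  have hkk : k * a i = x i / a i * a i := by rw [hk, hi]
  omega

lemma La_unique {m : ℕ} (a : Fin m → ℕ) (ha : ∀ i, 0 < a i)
    {ℓ ℓ' : Fin m → ℕ} {k k' : ℕ} (hℓ : ℓ ∈ La a) (hℓ' : ℓ' ∈ La a)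
    (heq : ℓ + k • a = ℓ' + k' • a) : ℓ = ℓ' ∧ k = k' := by
  have hpt : ∀ i, ℓ i + k * a i = ℓ' i + k' * a i := fun i => congrFun heq i
  have hkk : k = k' := by
    by_contra hne
    rcases Nat.lt_or_ge k k' with hlt | hge
    · rw [mem_La_iff] at hℓ
      obtain ⟨i, hi⟩ := hℓ
      have := hpt i
      have : a i ≤ (k' - k) * a i := Nat.le_mul_of_pos_left _ (by omega)
      nlinarith [hpt i, Nat.sub_add_cancel hlt.le]
    · have hlt : k' < k := by omega
      rw [mem_La_iff] at hℓ'
      obtain ⟨i, hi⟩ := hℓ'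
      have : a i ≤ (k - k') * a i := Nat.le_mul_of_pos_left _ (by omega)
      nlinarith [hpt i, Nat.sub_add_cancel hlt.le]
  subst hkk
  exact ⟨funext fun i => by have := hpt i; omega, rfl⟩

/-- Second type extension (with `δ = 1`): `ℕ^n` is identified with `ℕ × ℕ^(n-1)`
(first coordinate singled out), and `ℕ^(n+m-1)` with `ℕ^m × ℕ^(n-1)`. -/
theorem stmt5 {n' m : ℕ} (hm : 2 ≤ m) (T J : Set (ℕ × (Fin n' → ℕ)))
    (h : IsDirectSum T J Set.univ) (a : Fin m → ℕ) (ha : ∀ i, 0 < a i) :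
    IsDirectSum
      {p : (Fin m → ℕ) × (Fin n' → ℕ) | ∃ ℓ ∈ La a, ∃ t ∈ T, p = (ℓ + t.1 • a, t.2)}
      {p : (Fin m → ℕ) × (Fin n' → ℕ) | ∃ s ∈ J, p = (s.1 • a, s.2)}
      Set.univ := by
  obtain ⟨hcov, huniq⟩ := h
  constructor
  · ext p
    simp only [Set.mem_univ, true_iff]
    obtain ⟨ℓ, hℓ, k, hx⟩ := La_exists (by omega) a ha p.1
    have hmem : (k, p.2) ∈ T + J := by rw [← hcov]; trivial
    obtain ⟨t, ht, s, hs, hts⟩ := hmem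
    refine Set.mem_add.mpr ⟨(ℓ + t.1 • a, t.2), ⟨ℓ, hℓ, t, ht, rfl⟩,
      (s.1 • a, s.2), ⟨s, hs, rfl⟩, ?_⟩
    have h1 : t.1 + s.1 = k := congrArg Prod.fst hts
    have h2 : t.2 + s.2 = p.2 := congrArg Prod.snd hts
    have : p = (p.1, p.2) := rfl
    rw [this, hx, ← h1, ← h2]
    simp [Prod.ext_iff, add_smul]
    abel
  · rintro x ⟨ℓ, hℓ, t, ht, rfl⟩ y ⟨s, hs, rfl⟩ x' ⟨ℓ', hℓ', t', ht', rfl⟩ y' ⟨s', hs', rfl⟩ heq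
    simp only [Prod.mk_add_mk, Prod.mk.injEq] at heq
    obtain ⟨h1, h2⟩ := heq
    have h1' : ℓ + (t.1 + s.1) • a = ℓ' + (t'.1 + s'.1) • a := by
      rw [add_smul, add_smul, ← add_assoc, ← add_assoc]; exact h1
    obtain ⟨hll, hkk⟩ := La_unique a ha hℓ hℓ' h1'
    have hts : (t.1 + s.1, t.2 + s.2) = (t'.1 + s'.1, t'.2 + s'.2) := by
      rw [Prod.mk.injEq]; exact ⟨hkk, h2⟩
    have := huniq t ht s hs t' ht' s' hs' (by rw [Prod.ext_iff]; exact ⟨hkk, h2⟩)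
    obtain ⟨htt, hss⟩ := this
    constructor
    · rw [hll, htt]
    · rw [hss]
end

section
/- Let n ≥ 2 and let (T, J) be an ℕ^n-pair such that L₀ ⊆ J, where L₀ = {a ∈ ℕ^n : some coordinate of a is 0}. Then T is totally ordered by the strict partial order a < b defined by b − a ∈ (ℕ\{0})^n: for any distinct a, b ∈ T, either a < b or b < a. -/
open Pointwise

theorem stmt8 {n : ℕ} (hn : 2 ≤ n) (T J : Set (Fin n → ℕ))
    (h : IsDirectSum T J Set.univ)
    (hL : {x : Fin n → ℕ | ∃ i, x i = 0} ⊆ J) :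
    ∀ a ∈ T, ∀ b ∈ T, a ≠ b → (∀ i, a i < b i) ∨ (∀ i, b i < a i) := by
  intro a ha b hb hab
  by_contra hcon
  push_neg at hcon
  obtain ⟨⟨i, hi⟩, ⟨k, hk⟩⟩ := hcon
  obtain ⟨-, h2⟩ := h
  set c : Fin n → ℕ := fun j => max (a j) (b j) with hc
  have hu : (fun j => c j - a j) ∈ J := by
    apply hL
    exact ⟨i, Nat.sub_eq_zero_of_le (max_le le_rfl hi)⟩
  have hv : (fun j => c j - b j) ∈ J := by
    apply hL
    exact ⟨k, Nat.sub_eq_zero_of_le (max_le hk le_rfl)⟩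
  have heq : a + (fun j => c j - a j) = b + (fun j => c j - b j) := by
    funext j
    show a j + (c j - a j) = b j + (c j - b j)
    rw [Nat.add_sub_cancel' (le_max_left _ _), Nat.add_sub_cancel' (le_max_right _ _)]
  exact hab (h2 a ha _ hu b hb _ hv heq).1
end

section
/- Let (T, J) be an ℕ-pair with both T and J nonsingleton (equivalently, T ≠ {0} and J ≠ {0}). Then there exists an integer p ≥ 2 and an ℕ-pair (A, B) such that either T = pA and J = {0,1,…,p−1} ⊕ pB, or J = pA and T = {0,1,…,p−1} ⊕ pB. (Stated without the nontriviality assumption: for every ℕ-pair (T,J) there exist p ≥ 2 and an ℕ-pair (A,B) with T = pA, J = {0,…,p−1} ⊕ pB, or the roles of T and J reversed.) -/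
open Pointwise

namespace Stmt11Aux

lemma rep {T J : Set ℕ} (h : IsDirectSum T J Set.univ) (n : ℕ) :
    ∃ t ∈ T, ∃ j ∈ J, t + j = n := by
  have hn : n ∈ T + J := by rw [← h.1]; trivial
  simpa [Set.mem_add] using hn

lemma zero_mem {T J : Set ℕ} (h : IsDirectSum T J Set.univ) : 0 ∈ T ∧ 0 ∈ J := by
  obtain ⟨t, ht, j, hj, hs⟩ := rep h 0
  have ht0 : t = 0 := by omega
  have hj0 : j = 0 := by omega
  exact ⟨ht0 ▸ ht, hj0 ▸ hj⟩

lemma swap {T J : Set ℕ} (h : IsDirectSum T J Set.univ) : IsDirectSum J T Set.univ := by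
  refine ⟨by rw [h.1, add_comm], ?_⟩
  intro a ha b hb a' ha' b' hb' e
  have u := h.2 b hb a ha b' hb' a' ha' (by omega)
  exact ⟨u.2, u.1⟩

lemma key (T J : Set ℕ) (h : IsDirectSum T J Set.univ) (h1 : 1 ∈ J) :
    ∃ p : ℕ, 2 ≤ p ∧ ∃ A B : Set ℕ, IsDirectSum A B Set.univ ∧
      T = (p * ·) '' A ∧ IsDirectSum (Set.Iio p) ((p * ·) '' B) J := by
  obtain ⟨hT0, hJ0⟩ := zero_mem h
  by_cases hTtriv : ∀ t ∈ T, t = 0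
  · -- T = {0}, J = univ
    have hJuniv : J = Set.univ := by
      ext n
      simp only [Set.mem_univ, iff_true]
      obtain ⟨t, ht, j, hj, hs⟩ := rep h n
      have : t = 0 := hTtriv t ht
      have : j = n := by omega
      exact this ▸ hj
    refine ⟨2, le_refl 2, {0}, Set.univ, ⟨?_, ?_⟩, ?_, ?_, ?_⟩
    · ext n
      simp only [Set.mem_univ, true_iff, Set.mem_add, Set.mem_singleton_iff]
      exact ⟨0, rfl, n, trivial, by omega⟩
    · intro a ha b _ a' ha' b' _ e
      simp only [Set.mem_singleton_iff] at ha ha'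
      omega
    · ext t
      simp only [Set.image_singleton, Set.mem_singleton_iff, mul_zero]
      constructor
      · exact fun ht => hTtriv t ht
      · rintro rfl; exact hT0
    · rw [hJuniv]
      ext n
      simp only [Set.mem_univ, true_iff, Set.mem_add, Set.mem_Iio, Set.mem_image,
        Set.mem_univ]
      exact ⟨n % 2, by omega, 2 * (n / 2), ⟨n / 2, trivial, rfl⟩, by omega⟩
    · intro a ha b hb a' ha' b' hb' e
      simp only [Set.mem_Iio] at ha ha'
      simp only [Set.mem_image, Set.mem_univ, true_and] at hb hb'
      obtain ⟨k, hk⟩ := hb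
      obtain ⟨k', hk'⟩ := hb'
      subst hk hk'
      omega
  · -- T nontrivial
    push_neg at hTtriv
    obtain ⟨t0, ht0T, ht0ne⟩ := hTtriv
    have hex : ∃ n, 0 < n ∧ n ∈ T := ⟨t0, Nat.pos_of_ne_zero ht0ne, ht0T⟩
    classical
    set p := Nat.find hex with hpdef
    obtain ⟨hppos, hpT⟩ : 0 < p ∧ p ∈ T := Nat.find_spec hex
    have hmin : ∀ m, m < p → 0 < m → m ∉ T := by
      intro m hm hm0 hmT
      exact Nat.find_min hex hm ⟨hm0, hmT⟩
    have hp2 : 2 ≤ p := by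
      rcases Nat.lt_or_ge p 2 with hlt | hge
      · -- p = 1, so 1 ∈ T, contradiction with 1 ∈ J
        have hp1 : p = 1 := by omega
        have h1T : (1 : ℕ) ∈ T := hp1 ▸ hpT
        have u := h.2 1 h1T 0 hJ0 0 hT0 1 h1 (by omega)
        omega
      · exact hge
    have hp0 : 0 < p := by omega
    -- every m < p is in J
    have blocksub : ∀ m, m < p → m ∈ J := by
      intro m hm
      obtain ⟨t, ht, j, hj, hs⟩ := rep h m
      have ht0' : t = 0 := by
        by_contra hne
        exact hmin t (by omega) (Nat.pos_of_ne_zero hne) ht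
      have : j = m := by omega
      exact this ▸ hj
    -- z-trick
    have zkey : ∀ m r, p ≤ m → 0 < r → r < p → m ∈ J → m + r ∉ T := by
      intro m r hm hr0 hrp hmJ htT
      have hpr : p - r ∈ J := blocksub _ (by omega)
      obtain ⟨e1, e2⟩ := h.2 (m + r) htT (p - r) hpr p hpT m hmJ (by omega)
      omega
    -- main structure by strong induction
    have main : ∀ n, (n ∈ T → p ∣ n) ∧ (n ∈ J → ∀ r, r < p → p * (n / p) + r ∈ J) := by
      intro n
      induction n using Nat.strong_induction_on with
      | _ n IH =>
      constructor
      · -- n ∈ T → p ∣ n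
        intro hnT
        rcases Nat.lt_or_ge n p with hlt | hge
        · have : n = 0 := by
            by_contra h0
            exact hmin n hlt (Nat.pos_of_ne_zero h0) hnT
          simp [this]
        · by_contra hdvd
          have hsne : n % p ≠ 0 := fun h0 => hdvd (Nat.dvd_of_mod_eq_zero h0)
          have hM := Nat.div_add_mod n p
          set M := p * (n / p) with hMdef
          set s := n % p with hsdef
          have hslt : s < p := Nat.mod_lt _ hp0
          have hspos : 0 < s := Nat.pos_of_ne_zero hsne
          have hMlt : M < n := by omega
          obtain ⟨t₂, ht₂T, j₂, hj₂J, hsum⟩ := rep h M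
          have ht₂d : p ∣ t₂ := (IH t₂ (by omega)).1 ht₂T
          have hj₂d : p ∣ j₂ := by
            have hMd : p ∣ M := Dvd.intro (n / p) rfl
            have : j₂ = M - t₂ := by omega
            rw [this]
            exact Nat.dvd_sub hMd ht₂d
          have hbl := (IH j₂ (by omega)).2 hj₂J s hslt
          rw [Nat.mul_div_cancel' hj₂d] at hbl
          obtain ⟨e1, e2⟩ := h.2 n hnT 0 hJ0 t₂ ht₂T (j₂ + s) hbl (by omega)
          omega
      · -- n ∈ J → block
        intro hnJ r hr
        rcases Nat.lt_or_ge n p with hlt | hge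
        · rw [Nat.div_eq_of_lt hlt, mul_zero, zero_add]
          exact blocksub r hr
        · have hM := Nat.div_add_mod n p
          set M := p * (n / p) with hMdef
          set s := n % p with hsdef
          have hslt : s < p := Nat.mod_lt _ hp0
          have hpM : p ≤ M := Nat.le_mul_of_pos_right p (Nat.div_pos hge hp0)
          by_cases hs : s = 0
          · -- n = M ∈ J
            have hMn : M = n := by omega
            rcases Nat.eq_zero_or_pos r with hr0 | hrpos
            · rw [hr0, add_zero, hMn]; exact hnJ
            · obtain ⟨t, htT, j, hjJ, hsum⟩ := rep h (M + r)
              rcases Nat.eq_zero_or_pos t with ht0 | htpos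
              · have : j = M + r := by omega
                exact this ▸ hjJ
              · exfalso
                rcases Nat.lt_or_ge t n with htn | htn
                · -- 0 < t < n
                  have htd : p ∣ t := (IH t htn).1 htT
                  have htp : p ≤ t := by
                    by_contra hc
                    exact hmin t (by omega) htpos htT
                  have hjlt : j < n := by omega
                  have hjr : p ∣ (j - r) := by
                    have hMd : p ∣ M := Dvd.intro (n / p) rfl
                    have : j - r = M - t := by omega
                    rw [this]
                    exact Nat.dvd_sub hMd htd
                  have hrj : r ≤ j := by omega
                  have hbl := (IH j hjlt).2 hjJ 0 hp0
                  rw [add_zero] at hbl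
                  have hquot : p * (j / p) = j - r := by
                    obtain ⟨k, hk⟩ := hjr
                    have hje : j = p * k + r := by omega
                    rw [hje, Nat.mul_add_div hp0, Nat.div_eq_of_lt hr, add_zero]
                    omega
                  rw [hquot] at hbl
                  obtain ⟨e1, e2⟩ := h.2 t htT (j - r) hbl 0 hT0 n hnJ (by omega)
                  omega
                · -- t ≥ n
                  rcases Nat.eq_or_lt_of_le htn with hteq | htgt
                  · -- t = n : n ∈ T ∩ J
                    have hnT : n ∈ T := hteq ▸ htT
                    obtain ⟨e1, e2⟩ := h.2 n hnT 0 hJ0 0 hT0 n hnJ (by omega)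
                    omega
                  · -- t > n : t = M + r'' with 0 < r'' ≤ r
                    have hMJ : M ∈ J := hMn ▸ hnJ
                    have := zkey M (t - M) hpM (by omega) (by omega) hMJ
                    have ht' : t = M + (t - M) := by omega
                    exact this (ht' ▸ htT)
          · -- s > 0
            have hspos : 0 < s := Nat.pos_of_ne_zero hs
            have hMlt : M < n := by omega
            obtain ⟨t₂, ht₂T, j₂, hj₂J, hsum⟩ := rep h M
            have ht₂d : p ∣ t₂ := (IH t₂ (by omega)).1 ht₂T
            have hj₂d : p ∣ j₂ := by
              have hMd : p ∣ M := Dvd.intro (n / p) rfl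
              have : j₂ = M - t₂ := by omega
              rw [this]
              exact Nat.dvd_sub hMd ht₂d
            have hbl := (IH j₂ (by omega)).2 hj₂J
            rw [Nat.mul_div_cancel' hj₂d] at hbl
            obtain ⟨e1, e2⟩ := h.2 0 hT0 n hnJ t₂ ht₂T (j₂ + s) (hbl s hslt) (by omega)
            have hj₂M : j₂ = M := by omega
            have := hbl r hr
            rwa [hj₂M] at this
    -- extract global facts
    have Tdiv : ∀ t ∈ T, p ∣ t := fun t ht => (main t).1 ht
    have Jblock : ∀ n ∈ J, ∀ r, r < p → p * (n / p) + r ∈ J := fun n hn => (main n).2 hn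
    refine ⟨p, hp2, {a | p * a ∈ T}, {b | p * b ∈ J}, ⟨?_, ?_⟩, ?_, ?_, ?_⟩
    · -- univ = A + B
      ext m
      simp only [Set.mem_univ, true_iff, Set.mem_add, Set.mem_setOf_eq]
      obtain ⟨t, htT, j, hjJ, hsum⟩ := rep h (p * m)
      obtain ⟨a, ha⟩ := Tdiv t htT
      have hjd : p ∣ j := by
        have : j = p * m - t := by omega
        rw [this]
        exact Nat.dvd_sub (Dvd.intro m rfl) ⟨a, ha⟩
      obtain ⟨b, hb⟩ := hjd
      refine ⟨a, by rwa [← ha], b, by rwa [← hb], ?_⟩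
      have : p * a + p * b = p * m := by rw [← ha, ← hb]; exact hsum
      have hme : p * (a + b) = p * m := by rw [mul_add]; exact this
      exact Nat.eq_of_mul_eq_mul_left hp0 hme
    · -- unique sums on A B
      intro a ha b hb a' ha' b' hb' e
      simp only [Set.mem_setOf_eq] at ha hb ha' hb'
      have : p * a + p * b = p * a' + p * b' := by
        rw [← mul_add, ← mul_add, e]
      obtain ⟨e1, e2⟩ := h.2 (p * a) ha (p * b) hb (p * a') ha' (p * b') hb' this
      constructor
      · exact Nat.eq_of_mul_eq_mul_left hp0 e1
      · exact Nat.eq_of_mul_eq_mul_left hp0 e2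
    · -- T = p '' A
      ext t
      simp only [Set.mem_image, Set.mem_setOf_eq]
      constructor
      · intro htT
        obtain ⟨a, ha⟩ := Tdiv t htT
        exact ⟨a, by rwa [← ha], ha.symm⟩
      · rintro ⟨a, haT, rfl⟩
        exact haT
    · -- J = Iio p + p '' B
      ext n
      simp only [Set.mem_add, Set.mem_Iio, Set.mem_image, Set.mem_setOf_eq]
      constructor
      · intro hnJ
        have hb0 : p * (n / p) + 0 ∈ J := Jblock n hnJ 0 hp0
        rw [add_zero] at hb0
        exact ⟨n % p, Nat.mod_lt _ hp0, p * (n / p), ⟨n / p, hb0, rfl⟩, by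
          have := Nat.div_add_mod n p; omega⟩
      · rintro ⟨s, hs, _, ⟨b, hbJ, rfl⟩, rfl⟩
        have := Jblock (p * b) hbJ s hs
        rw [Nat.mul_div_cancel_left b hp0] at this
        rwa [add_comm]
    · -- unique sums on Iio p, p '' B
      intro a ha b hb a' ha' b' hb' e
      simp only [Set.mem_Iio] at ha ha'
      simp only [Set.mem_image, Set.mem_setOf_eq] at hb hb'
      obtain ⟨k, hkJ, rfl⟩ := hb
      obtain ⟨k', hk'J, rfl⟩ := hb'
      have hae : a = a' := by
        have h1' : (a + p * k) % p = a := by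
          rw [Nat.add_mul_mod_self_left, Nat.mod_eq_of_lt ha]
        have h2' : (a' + p * k') % p = a' := by
          rw [Nat.add_mul_mod_self_left, Nat.mod_eq_of_lt ha']
        rw [← h1', ← h2', e]
      refine ⟨hae, ?_⟩
      subst hae
      have : p * k = p * k' := by omega
      have : k = k' := Nat.eq_of_mul_eq_mul_left hp0 this
      rw [this]

end Stmt11Aux

theorem stmt11 (T J : Set ℕ) (h : IsDirectSum T J Set.univ) :
    ∃ p : ℕ, 2 ≤ p ∧ ∃ A B : Set ℕ, IsDirectSum A B Set.univ ∧
      ((T = (p * ·) '' A ∧ IsDirectSum (Set.Iio p) ((p * ·) '' B) J) ∨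
       (J = (p * ·) '' A ∧ IsDirectSum (Set.Iio p) ((p * ·) '' B) T)) := by
  obtain ⟨t, htT, j, hjJ, hsum⟩ := Stmt11Aux.rep h 1
  rcases (by omega : t = 0 ∧ j = 1 ∨ t = 1 ∧ j = 0) with ⟨ht, hj⟩ | ⟨ht, hj⟩
  · -- 1 ∈ J
    obtain ⟨p, hp, A, B, hAB, h1, h2⟩ := Stmt11Aux.key T J h (hj ▸ hjJ)
    exact ⟨p, hp, A, B, hAB, Or.inl ⟨h1, h2⟩⟩
  · -- 1 ∈ T
    obtain ⟨p, hp, A, B, hAB, h1, h2⟩ := Stmt11Aux.key J T (Stmt11Aux.swap h) (ht ▸ htT)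
    exact ⟨p, hp, A, B, hAB, Or.inr ⟨h1, h2⟩⟩
end

section
/- If (C, D) is a {0,1,…,N−1}-pair with N ≥ 2, then there exists an integer p ≥ 2 with p dividing N, and a {0,1,…,N/p−1}-pair (C̃, D̃), such that C = pC̃ and D = pD̃ + {0,1,…,p−1}, or the same with the roles of C and D reversed. -/
open Pointwise

private lemma mod_eq_of_dvd_add' {p c d m : ℕ} (hc : p ∣ c) (h : c + d = m) :
    d % p = m % p := by
  obtain ⟨x, rfl⟩ := hc
  subst h
  rw [Nat.mul_add_mod]

private lemma mod_pred' {p n : ℕ} (h : n % p ≠ 0) : (n - 1) % p = n % p - 1 := by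
  rcases Nat.eq_zero_or_pos p with rfl | hp
  · simp [Nat.mod_zero]
  have hq := Nat.mod_add_div n p
  have hlt : n % p < p := Nat.mod_lt n hp
  have h1 : n - 1 = p * (n / p) + (n % p - 1) := by omega
  rw [h1, Nat.mul_add_mod, Nat.mod_eq_of_lt (by omega)]

private lemma key' (N : ℕ) (hN : 2 ≤ N) (C D : Set ℕ)
    (h : IsDirectSum C D (Set.Iio N)) (h0C : 0 ∈ C) (h0D : 0 ∈ D) (h1D : (1:ℕ) ∈ D) :
    ∃ p : ℕ, 2 ≤ p ∧ p ∣ N ∧ ∃ C' D' : Set ℕ,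
      IsDirectSum C' D' (Set.Iio (N / p)) ∧
      C = (p * ·) '' C' ∧ D = (p * ·) '' D' + Set.Iio p := by
  classical
  obtain ⟨hsum, huniq⟩ := h
  have memN : ∀ c ∈ C, ∀ d ∈ D, c + d < N := by
    intro c hc d hd
    have : c + d ∈ C + D := Set.add_mem_add hc hd
    rw [← hsum] at this
    exact this
  have rep : ∀ n < N, ∃ c ∈ C, ∃ d ∈ D, c + d = n := by
    intro n hn
    have : n ∈ C + D := by rw [← hsum]; exact hn
    exact Set.mem_add.1 this
  by_cases hC : ∀ c ∈ C, c = 0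
  · -- C = {0}, take p = N
    have hDeq : D = Set.Iio N := by
      ext x
      constructor
      · intro hx
        exact Set.mem_Iio.2 (by simpa using memN 0 h0C x hx)
      · intro hx
        obtain ⟨c, hc, d, hd, he⟩ := rep x (Set.mem_Iio.1 hx)
        have hc0 : c = 0 := hC c hc
        have : d = x := by omega
        rwa [← this]
    refine ⟨N, hN, dvd_refl N, {0}, {0}, ⟨?_, ?_⟩, ?_, ?_⟩
    · rw [Nat.div_self (by omega : 0 < N)]
      ext x
      simp [Set.mem_add, Nat.lt_one_iff]
    · intro a ha b hb a' ha' b' hb' _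
      simp only [Set.mem_singleton_iff] at ha hb ha' hb'
      exact ⟨by omega, by omega⟩
    · ext x
      simp only [Set.image_singleton, Set.mem_singleton_iff, Nat.mul_zero]
      constructor
      · intro hx; exact hC x hx
      · intro hx; rwa [hx]
    · rw [hDeq]
      ext x
      simp only [Set.image_singleton, Nat.mul_zero, Set.singleton_add, Set.image_add_left,
        Set.mem_preimage]
      constructor
      · intro hx; simpa using hx
      · intro hx; simpa using hx
  · push_neg at hC
    obtain ⟨c₀, hc₀C, hc₀⟩ := hC
    have hex : ∃ k, 0 < k ∧ k ∈ C := ⟨c₀, by omega, hc₀C⟩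
    set p := Nat.find hex with hpdef
    obtain ⟨hppos, hpC⟩ : 0 < p ∧ p ∈ C := Nat.find_spec hex
    have hmin : ∀ c ∈ C, 0 < c → p ≤ c := by
      intro c hc hcpos
      exact Nat.find_min' hex ⟨hcpos, hc⟩
    have hp2 : 2 ≤ p := by
      by_contra hlt
      have hp1 : p = 1 := by omega
      have h1C : (1:ℕ) ∈ C := hp1 ▸ hpC
      have := huniq 1 h1C 0 h0D 0 h0C 1 h1D (by omega)
      omega
    have hpN : p < N := by simpa using memN p hpC 0 h0D
    have hIio : ∀ r < p, r ∈ D := by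
      intro r hr
      obtain ⟨c, hc, d, hd, he⟩ := rep r (by omega)
      have hc0 : c = 0 := by
        by_contra hne
        have := hmin c hc (by omega)
        omega
      have : d = r := by omega
      rwa [← this]
    -- main structural induction
    have Q : ∀ n : ℕ, ∀ c ∈ C, ∀ d ∈ D, c + d = n → p ∣ c ∧ ∀ s ≤ d % p, d - s ∈ D := by
      intro n
      induction n using Nat.strong_induction_on with
      | _ n IH =>
        intro c hc d hd hcd
        have hnN : n < N := hcd ▸ memN c hc d hd
        -- upward closure, below n
        have up : ∀ b ∈ D, p ∣ b → ∀ r < p, b + r < n → b + r ∈ D := by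
          intro b hb hpb r hr hlt
          obtain ⟨c₂, hc₂, d₂, hd₂, he⟩ := rep (b + r) (by omega)
          obtain ⟨hdvd, hdown⟩ := IH (b + r) hlt c₂ hc₂ d₂ hd₂ he
          have hd₂r : d₂ % p = r := by
            have h1 : d₂ % p = (b + r) % p := mod_eq_of_dvd_add' hdvd he
            obtain ⟨y, rfl⟩ := hpb
            rw [h1, Nat.mul_add_mod, Nat.mod_eq_of_lt hr]
          have hrle : r ≤ d₂ := hd₂r ▸ Nat.mod_le d₂ p
          have hbase : d₂ - r ∈ D := hdown r (le_of_eq hd₂r.symm)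
          have heq : (0 : ℕ) + b = c₂ + (d₂ - r) := by omega
          obtain ⟨h0c₂, -⟩ := huniq 0 h0C b hb c₂ hc₂ (d₂ - r) hbase heq
          have : d₂ = b + r := by omega
          rwa [← this]
        have aux : ∀ c₁ ∈ C, ∀ d₁ ∈ D, c₁ + d₁ + 1 = n → 0 < c₁ → n % p ≠ 0 →
            d₁ + 1 ∈ D := by
          intro c₁ hc₁ d₁ hd₁ he1 hc₁pos ht
          have hc₁p : p ≤ c₁ := hmin c₁ hc₁ hc₁pos
          obtain ⟨hdvd₁, hdown₁⟩ := IH (n - 1) (by omega) c₁ hc₁ d₁ hd₁ (by omega)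
          have hd₁m : d₁ % p = n % p - 1 := by
            rw [mod_eq_of_dvd_add' hdvd₁ (by omega : c₁ + d₁ = n - 1), mod_pred' ht]
          have hnpp : n % p < p := Nat.mod_lt n hppos
          have hbD : d₁ - (n % p - 1) ∈ D := hdown₁ (n % p - 1) (by omega)
          have hmle : d₁ % p ≤ d₁ := Nat.mod_le d₁ p
          have hpb : p ∣ (d₁ - (n % p - 1)) := by
            have h1 := Nat.mod_add_div d₁ p
            exact ⟨d₁ / p, by omega⟩
          have hfin := up (d₁ - (n % p - 1)) hbD hpb (n % p) hnpp (by omega)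
          have : d₁ - (n % p - 1) + n % p = d₁ + 1 := by omega
          rwa [this] at hfin
        constructor
        · -- p ∣ c
          rcases Nat.eq_zero_or_pos c with rfl | hcpos
          · exact dvd_zero p
          rcases Nat.eq_zero_or_pos d with rfl | hdpos
          · -- c = n ∈ C
            have hcn : c = n := by omega
            subst hcn
            by_contra ht
            have htne : c % p ≠ 0 := fun h0 => ht (Nat.dvd_of_mod_eq_zero h0)
            have hnp : p ≤ c := hmin c hc hcpos
            obtain ⟨c₁, hc₁, d₁, hd₁, he⟩ := rep (c - 1) (by omega)
            rcases Nat.eq_zero_or_pos c₁ with rfl | hc₁pos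
            · -- c - 1 ∈ D, get double representation of p + (c - c % p)
              have hd₁n : d₁ = c - 1 := by omega
              obtain ⟨-, hdown₁⟩ := IH (c - 1) (by omega) 0 h0C d₁ hd₁ he
              have hnpp : c % p < p := Nat.mod_lt c hppos
              have hd₁m : d₁ % p = c % p - 1 := by rw [hd₁n, mod_pred' htne]
              have hbD : d₁ - (c % p - 1) ∈ D := hdown₁ (c % p - 1) (by omega)
              have hmle : c % p ≤ c := Nat.mod_le c p
              have hb' : d₁ - (c % p - 1) = c - c % p := by omega
              rw [hb'] at hbD
              have h2rep : p + (c - c % p) = c + (p - c % p) := by omega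
              obtain ⟨hpn, -⟩ := huniq p hpC (c - c % p) hbD c hc (p - c % p)
                (hIio _ (by omega)) h2rep
              have : c % p = 0 := by rw [← hpn, Nat.mod_self]
              exact htne this
            · have hD1 : d₁ + 1 ∈ D := aux c₁ hc₁ d₁ hd₁ (by omega) hc₁pos htne
              have := huniq c₁ hc₁ (d₁ + 1) hD1 c hc 0 h0D (by omega)
              omega
          · -- c < n
            exact (IH c (by omega) c hc 0 h0D (by omega)).1
        · -- downward closure
          intro s hs
          rcases Nat.eq_zero_or_pos c with rfl | hcpos
          · -- d = n
            have hdn : d = n := by omega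
            subst hdn
            rcases Nat.eq_zero_or_pos s with rfl | hspos
            · simpa using hd
            have htne : d % p ≠ 0 := by omega
            have hn1 : 1 ≤ d := by
              have := Nat.mod_le d p
              omega
            have hn1D : d - 1 ∈ D := by
              obtain ⟨c₁, hc₁, d₁, hd₁, he⟩ := rep (d - 1) (by omega)
              rcases Nat.eq_zero_or_pos c₁ with rfl | hc₁pos
              · have : d₁ = d - 1 := by omega
                rwa [← this]
              · have hD1 : d₁ + 1 ∈ D := aux c₁ hc₁ d₁ hd₁ (by omega) hc₁pos htne
                have := huniq 0 h0C d hd c₁ hc₁ (d₁ + 1) hD1 (by omega)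
                omega
            have hmp : (d - 1) % p = d % p - 1 := mod_pred' htne
            have hrec := (IH (d - 1) (by omega) 0 h0C (d - 1) hn1D (by omega)).2 (s - 1)
              (by omega)
            have heq : d - 1 - (s - 1) = d - s := by omega
            rwa [heq] at hrec
          · -- d < n
            exact (IH d (by omega) 0 h0C d hd (by omega)).2 s hs
    -- consequences of Q
    have F1 : ∀ c ∈ C, p ∣ c := fun c hc => (Q c c hc 0 h0D (by omega)).1
    have F2 : ∀ d ∈ D, ∀ s ≤ d % p, d - s ∈ D :=
      fun d hd => (Q d 0 h0C d hd (by omega)).2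
    have F3 : ∀ d ∈ D, p ∣ d → ∀ r < p, d + r ∈ D := by
      intro d hd hpd r hr
      have hdN : p + d < N := memN p hpC d hd
      obtain ⟨c₂, hc₂, d₂, hd₂, he⟩ := rep (d + r) (by omega)
      obtain ⟨hdvd, hdown⟩ := Q (d + r) c₂ hc₂ d₂ hd₂ he
      have hd₂r : d₂ % p = r := by
        have h1 : d₂ % p = (d + r) % p := mod_eq_of_dvd_add' hdvd he
        obtain ⟨y, rfl⟩ := hpd
        rw [h1, Nat.mul_add_mod, Nat.mod_eq_of_lt hr]
      have hrle : r ≤ d₂ := hd₂r ▸ Nat.mod_le d₂ p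
      have hbase : d₂ - r ∈ D := hdown r (le_of_eq hd₂r.symm)
      obtain ⟨h0c₂, -⟩ := huniq 0 h0C d hd c₂ hc₂ (d₂ - r) hbase (by omega)
      have : d₂ = d + r := by omega
      rwa [← this]
    -- p divides N
    have hpdvd : p ∣ N := by
      obtain ⟨c, hc, d, hd, he⟩ := rep (N - 1) (by omega)
      have hdvdc := F1 c hc
      have hbD : d - d % p ∈ D := F2 d hd (d % p) le_rfl
      have hpb : p ∣ (d - d % p) := by
        have h1 := Nat.mod_add_div d p
        exact ⟨d / p, by omega⟩
      have htop : d - d % p + (p - 1) ∈ D := F3 _ hbD hpb (p - 1) (by omega)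
      have hlt : c + (d - d % p + (p - 1)) < N := memN c hc _ htop
      have hmlt : d % p < p := Nat.mod_lt d hppos
      have hmle : d % p ≤ d := Nat.mod_le d p
      obtain ⟨x, hx⟩ := hdvdc
      obtain ⟨y, hy⟩ := hpb
      refine ⟨x + y + 1, ?_⟩
      have hNe : N = c + (d - d % p) + p := by omega
      rw [hNe, hx, hy]; ring
    obtain ⟨M, hM⟩ := hpdvd
    have hM1 : 1 ≤ M := Nat.one_le_iff_ne_zero.2 (by rintro rfl; simp at hM; omega)
    have hNdiv : N / p = M := by rw [hM, Nat.mul_div_cancel_left M hppos]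
    obtain ⟨r₀, hr₀⟩ : ∃ r₀, p = r₀ + 1 := ⟨p - 1, by omega⟩
    refine ⟨p, hp2, ⟨M, hM⟩, {k | p * k ∈ C}, {k | p * k ∈ D}, ⟨?_, ?_⟩, ?_, ?_⟩
    · -- sum set equals Iio (N / p)
      rw [hNdiv]
      ext k
      simp only [Set.mem_add, Set.mem_setOf_eq, Set.mem_Iio]
      constructor
      · -- k < M → decomposable
        intro hk
        have hks : p * (k + 1) ≤ p * M := Nat.mul_le_mul_left p (by omega)
        have hsucc : p * (k + 1) = p * k + p := by ring
        have hkN : p * k < N := by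
          rw [hM]
          have hp1 : 1 ≤ p := by omega
          linarith
        obtain ⟨c, hc, d, hd, he⟩ := rep (p * k) hkN
        obtain ⟨x, hx⟩ := F1 c hc
        have hdm : d % p = 0 := by
          have h1 : d % p = (p * k) % p := mod_eq_of_dvd_add' (F1 c hc) he
          rw [h1, Nat.mul_mod_right]
        have hdx : d = p * (d / p) := by
          have := Nat.mod_add_div d p
          omega
        refine ⟨x, by rwa [← hx], d / p, by rwa [← hdx], ?_⟩
        have h2 : p * (x + d / p) = p * k := by
          rw [Nat.mul_add, ← hx, ← hdx]; exact he
        exact Nat.eq_of_mul_eq_mul_left hppos h2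
      · rintro ⟨a, ha, b, hb, rfl⟩
        have htop : p * b + r₀ ∈ D := F3 _ hb ⟨b, rfl⟩ r₀ (by omega)
        have hlt : p * a + (p * b + r₀) < N := memN _ ha _ htop
        have he1 : p * (a + b + 1) = p * a + p * b + p := by ring
        have he2 : p * (a + b + 1) ≤ p * M := by
          rw [← hM, he1]
          linarith [hr₀]
        have := Nat.le_of_mul_le_mul_left he2 hppos
        omega
    · -- unique sums
      intro a ha b hb a' ha' b' hb' he
      simp only [Set.mem_setOf_eq] at ha hb ha' hb'
      obtain ⟨h1, h2⟩ := huniq (p * a) ha (p * b) hb (p * a') ha' (p * b') hb'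
        (by rw [← Nat.mul_add, ← Nat.mul_add, he])
      exact ⟨Nat.eq_of_mul_eq_mul_left hppos h1, Nat.eq_of_mul_eq_mul_left hppos h2⟩
    · -- C = p * C'
      ext x
      simp only [Set.mem_image, Set.mem_setOf_eq]
      constructor
      · intro hx
        obtain ⟨k, hk⟩ := F1 x hx
        exact ⟨k, by rwa [← hk], hk.symm⟩
      · rintro ⟨k, hk, rfl⟩
        exact hk
    · -- D = p * D' + Iio p
      ext x
      simp only [Set.mem_add, Set.mem_image, Set.mem_setOf_eq, Set.mem_Iio]
      constructor
      · intro hx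
        have hbD : x - x % p ∈ D := F2 x hx (x % p) le_rfl
        have hmle := Nat.mod_le x p
        have hmlt : x % p < p := Nat.mod_lt x hppos
        have hb : x - x % p = p * (x / p) := by
          have := Nat.mod_add_div x p
          omega
        refine ⟨p * (x / p), ⟨x / p, by rwa [hb] at hbD, rfl⟩, x % p, hmlt, ?_⟩
        have := Nat.mod_add_div x p
        omega
      · rintro ⟨y, ⟨k, hk, rfl⟩, r, hr, rfl⟩
        exact F3 (p * k) hk ⟨k, rfl⟩ r hr

theorem stmt12 (N : ℕ) (hN : 2 ≤ N) (C D : Set ℕ)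
    (h : IsDirectSum C D (Set.Iio N)) :
    ∃ p : ℕ, 2 ≤ p ∧ p ∣ N ∧ ∃ C' D' : Set ℕ,
      IsDirectSum C' D' (Set.Iio (N / p)) ∧
      ((C = (p * ·) '' C' ∧ D = (p * ·) '' D' + Set.Iio p) ∨
       (D = (p * ·) '' C' ∧ C = (p * ·) '' D' + Set.Iio p)) := by
  obtain ⟨hsum, huniq⟩ := h
  have rep : ∀ n < N, ∃ c ∈ C, ∃ d ∈ D, c + d = n := by
    intro n hn
    have : n ∈ C + D := by rw [← hsum]; exact hn
    exact Set.mem_add.1 this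
  have h0 : (0 : ℕ) ∈ C ∧ (0 : ℕ) ∈ D := by
    obtain ⟨c, hc, d, hd, he⟩ := rep 0 (by omega)
    have hc0 : c = 0 := by omega
    have hd0 : d = 0 := by omega
    exact ⟨hc0 ▸ hc, hd0 ▸ hd⟩
  obtain ⟨h0C, h0D⟩ := h0
  obtain ⟨c, hc, d, hd, he⟩ := rep 1 (by omega)
  rcases Nat.eq_zero_or_pos c with rfl | hcpos
  · -- 1 ∈ D
    have h1D : (1 : ℕ) ∈ D := by
      have : d = 1 := by omega
      rwa [← this]
    obtain ⟨p, hp2, hpN, C', D', hds, hCeq, hDeq⟩ :=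
      key' N hN C D ⟨hsum, huniq⟩ h0C h0D h1D
    exact ⟨p, hp2, hpN, C', D', hds, Or.inl ⟨hCeq, hDeq⟩⟩
  · -- 1 ∈ C
    have h1C : (1 : ℕ) ∈ C := by
      have : c = 1 := by omega
      rwa [← this]
    have hswap : IsDirectSum D C (Set.Iio N) := by
      refine ⟨by rw [hsum, add_comm], ?_⟩
      intro a ha b hb a' ha' b' hb' he'
      obtain ⟨h1, h2⟩ := huniq b hb a ha b' hb' a' ha' (by omega)
      exact ⟨h2, h1⟩
    obtain ⟨p, hp2, hpN, C', D', hds, hCeq, hDeq⟩ :=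
      key' N hN D C hswap h0D h0C h1C
    exact ⟨p, hp2, hpN, C', D', hds, Or.inr ⟨hCeq, hDeq⟩⟩
end

section
/- Let (T, J) be an ℕ-pair with both T and J infinite. Then there exists a sequence of interval pairs (C_k, D_k) of sizes N_k (so C_k ⊕ D_k = {0,…,N_k−1}) with C_k ⊆ C_{k+1}, D_k ⊆ D_{k+1}, ∪_k C_k = T, ∪_k D_k = J, and subsets A_k, B_k ⊆ ℕ such that T = C_k ⊕ N_k A_k and J = D_k ⊕ N_k B_k for every k. -/
open Pointwise

namespace Stmt13Aux

lemma rep_ex {T J : Set ℕ} (h : IsDirectSum T J Set.univ) (n : ℕ) :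
    ∃ t ∈ T, ∃ j ∈ J, t + j = n := by
  have : n ∈ T + J := by rw [← h.1]; trivial
  simpa [Set.mem_add] using this

lemma zeroT {T J : Set ℕ} (h : IsDirectSum T J Set.univ) : (0:ℕ) ∈ T := by
  obtain ⟨t, ht, j, hj, hsum⟩ := rep_ex h 0
  have : t = 0 := by omega
  exact this ▸ ht

lemma zeroJ {T J : Set ℕ} (h : IsDirectSum T J Set.univ) : (0:ℕ) ∈ J := by
  obtain ⟨t, ht, j, hj, hsum⟩ := rep_ex h 0
  have : j = 0 := by omega
  exact this ▸ hj

lemma pair_symm {T J : Set ℕ} (h : IsDirectSum T J Set.univ) :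
    IsDirectSum J T Set.univ := by
  refine ⟨by rw [h.1, add_comm], ?_⟩
  intro b hb a ha b' hb' a' ha' hsum
  obtain ⟨h1, h2⟩ := h.2 a ha b hb a' ha' b' hb' (by omega)
  exact ⟨h2, h1⟩

lemma core' {T J : Set ℕ} (h : IsDirectSum T J Set.univ) {M : ℕ} (hMJ : M ∈ J)
    (hM1 : 1 ≤ M) (hmin : ∀ j ∈ J, j ≠ 0 → M ≤ j) :
    ∀ n, (n ∈ J → M ∣ n) ∧ (∀ q r, r < M → M * q + r = n → (M * q ∈ T ↔ n ∈ T)) := by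
  have huniq := h.2
  have hex := rep_ex h
  have h0T : (0:ℕ) ∈ T := zeroT h
  have h0J : (0:ℕ) ∈ J := zeroJ h
  have low : ∀ r < M, r ∈ T := by
    intro r hr
    obtain ⟨t, ht, j, hj, hsum⟩ := hex r
    have hj0 : j = 0 := by
      by_contra hne
      have := hmin j hj hne; omega
    have : t = r := by omega
    exact this ▸ ht
  intro n
  induction n using Nat.strong_induction_on with
  | _ n ih =>
    have h1 : n ∈ J → M ∣ n := by
      intro hnJ
      by_contra hdvd
      obtain ⟨q, r, hqr, hrM⟩ : ∃ q r, M * q + r = n ∧ r < M :=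
        ⟨n / M, n % M, Nat.div_add_mod n M, Nat.mod_lt _ hM1⟩
      have hrpos : 0 < r := by
        rcases Nat.eq_zero_or_pos r with h0 | h0
        · exact absurd ⟨q, by omega⟩ hdvd
        · exact h0
      have hMn : M ≤ n := hmin n hnJ (by omega)
      have hq1 : 1 ≤ q := by
        rcases Nat.eq_zero_or_pos q with h0 | h0
        · rw [h0, mul_zero] at hqr; omega
        · exact h0
      obtain ⟨t₀, ht₀, j₀, hj₀, hsum₀⟩ := hex (M * q)
      obtain ⟨b₀, hb₀⟩ := (ih j₀ (by omega)).1 hj₀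
      rcases Nat.eq_zero_or_pos b₀ with hb00 | hbpos
      · rw [hb00, mul_zero] at hb₀
        have htMq : M * q ∈ T := by
          have : t₀ = M * q := by omega
          exact this ▸ ht₀
        have hMq1 : M * 1 ≤ M * q := Nat.mul_le_mul_left M hq1
        have hexp1 : M * 1 = M := by ring
        obtain ⟨e1, e2⟩ := huniq (M * q) htMq M hMJ
          (M - r) (low _ (by omega)) n hnJ (by omega)
        exact hdvd (e2 ▸ dvd_refl M)
      · have hb₀le : b₀ ≤ q := by
          refine Nat.le_of_mul_le_mul_left ?_ (show 0 < M by omega)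
          omega
        set a₀ := q - b₀ with ha₀
        have hsplit : M * a₀ + M * b₀ = M * q := by
          rw [← mul_add]; congr 1; omega
        have ht₀eq : t₀ = M * a₀ := by omega
        have hmul : M * (a₀ + 1) ≤ M * q := Nat.mul_le_mul_left M (by omega)
        have hexp : M * (a₀ + 1) = M * a₀ + M := by ring
        have hlt : M * a₀ + r < n := by omega
        have ihA := (ih (M * a₀ + r) hlt).2 a₀ r hrM rfl
        have htar : M * a₀ + r ∈ T := ihA.mp (ht₀eq ▸ ht₀)
        obtain ⟨e1, e2⟩ := huniq (M * a₀ + r) htar (M * b₀) (hb₀ ▸ hj₀)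
          0 h0T n hnJ (by omega)
        omega
    refine ⟨h1, ?_⟩
    intro q r hrM hqr
    rcases Nat.eq_zero_or_pos r with hr0 | hrpos
    · have : M * q = n := by omega
      rw [this]
    · obtain ⟨t, ht, j, hj, hsum⟩ := hex n
      rcases eq_or_lt_of_le (show j ≤ n by omega) with hjn | hjlt
      · have hnJ : n ∈ J := hjn ▸ hj
        obtain ⟨c, hc⟩ := h1 hnJ
        have hmod : n % M = r := by
          rw [← hqr, Nat.mul_add_mod, Nat.mod_eq_of_lt hrM]
        have : n % M = 0 := by
          rw [hc, Nat.mul_mod_right]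
        omega
      · obtain ⟨p, hp⟩ := (ih j hjlt).1 hj
        have hple : p ≤ q := by
          by_contra hgt
          have h2' : M * (q + 1) ≤ M * p := Nat.mul_le_mul_left M (by omega)
          have hexp : M * (q + 1) = M * q + M := by ring
          omega
        set a := q - p with ha
        have hsplit : M * a + M * p = M * q := by
          rw [← mul_add]; congr 1; omega
        have hteq : t = M * a + r := by omega
        rcases Nat.eq_zero_or_pos p with hp0 | hppos
        · rw [hp0, mul_zero] at hp
          have hnT : n ∈ T := by
            have : t = n := by omega
            exact this ▸ ht
          have hMqT : M * q ∈ T := by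
            obtain ⟨t₀, ht₀, j₀, hj₀, hsum₀⟩ := hex (M * q)
            obtain ⟨b₀, hb₀⟩ := (ih j₀ (by omega)).1 hj₀
            rcases Nat.eq_zero_or_pos b₀ with hb00 | hbpos
            · rw [hb00, mul_zero] at hb₀
              have : t₀ = M * q := by omega
              exact this ▸ ht₀
            · have hb₀le : b₀ ≤ q := by
                refine Nat.le_of_mul_le_mul_left ?_ (show 0 < M by omega)
                omega
              set a₀ := q - b₀ with ha₀
              have hsplit₀ : M * a₀ + M * b₀ = M * q := by
                rw [← mul_add]; congr 1; omega
              have ht₀eq : t₀ = M * a₀ := by omega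
              have hmul : M * (a₀ + 1) ≤ M * q := Nat.mul_le_mul_left M (by omega)
              have hexp : M * (a₀ + 1) = M * a₀ + M := by ring
              have hlt : M * a₀ + r < n := by omega
              have ihA := (ih (M * a₀ + r) hlt).2 a₀ r hrM rfl
              have htar : M * a₀ + r ∈ T := ihA.mp (ht₀eq ▸ ht₀)
              obtain ⟨e1, e2⟩ := huniq (M * a₀ + r) htar (M * b₀) (hb₀ ▸ hj₀)
                n hnT 0 h0J (by omega)
              have : 1 * 1 ≤ M * b₀ := Nat.mul_le_mul hM1 hbpos
              omega
          exact iff_of_true hMqT hnT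
        · have hMp1 : 1 * 1 ≤ M * p := Nat.mul_le_mul hM1 hppos
          have hnT : n ∉ T := by
            intro hnT
            obtain ⟨e1, e2⟩ := huniq t ht j hj n hnT 0 h0J (by omega)
            omega
          have hMqT : M * q ∉ T := by
            intro hMq
            have hmul : M * (a + 1) ≤ M * q := Nat.mul_le_mul_left M (by omega)
            have hexp : M * (a + 1) = M * a + M := by ring
            have hlt : M * a + r < n := by omega
            have ihA := (ih (M * a + r) hlt).2 a r hrM rfl
            have haT : M * a ∈ T := ihA.mpr (hteq ▸ ht)
            obtain ⟨e1, e2⟩ := huniq (M * a) haT (M * p) (hp ▸ hj)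
              (M * q) hMq 0 h0J (by omega)
            omega
          exact iff_of_false hMqT hnT

end Stmt13Aux

namespace Stmt13Aux

lemma half {T J : Set ℕ} (h : IsDirectSum T J Set.univ) (h1T : (1:ℕ) ∈ T)
    (hJinf : J.Infinite) :
    ∃ M T' J', 2 ≤ M ∧ T = Set.Iio M + (M * ·) '' T' ∧ J = (M * ·) '' J' ∧
      IsDirectSum T' J' Set.univ ∧ (T.Infinite → T'.Infinite) ∧
      (J.Infinite → J'.Infinite) := by
  classical
  have huniq := h.2
  have h0T : (0:ℕ) ∈ T := zeroT h
  have h0J : (0:ℕ) ∈ J := zeroJ h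
  have hne : {j : ℕ | j ∈ J ∧ j ≠ 0}.Nonempty := by
    obtain ⟨j, hj, hjne⟩ := (hJinf.diff (Set.finite_singleton 0)).nonempty
    exact ⟨j, hj, by simpa using hjne⟩
  set M := sInf {j : ℕ | j ∈ J ∧ j ≠ 0} with hMdef
  obtain ⟨hMJ, hMne⟩ : M ∈ J ∧ M ≠ 0 := Nat.sInf_mem hne
  have hmin : ∀ j ∈ J, j ≠ 0 → M ≤ j := fun j hj hne' => Nat.sInf_le ⟨hj, hne'⟩
  have hM1 : 1 ≤ M := by omega
  have hM2 : 2 ≤ M := by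
    rcases Nat.lt_or_ge M 2 with hlt | hge
    · have hM1' : M = 1 := by omega
      exfalso
      have h1J : (1:ℕ) ∈ J := hM1' ▸ hMJ
      obtain ⟨e1, e2⟩ := huniq 1 h1T 0 h0J 0 h0T 1 h1J (by omega)
      omega
    · exact hge
  have hc := core' h hMJ hM1 hmin
  refine ⟨M, {a | M * a ∈ T}, {b | M * b ∈ J}, hM2, ?_, ?_, ⟨?_, ?_⟩, ?_, ?_⟩
  · -- T = Iio M + M·T'
    ext t
    simp only [Set.mem_add, Set.mem_Iio, Set.mem_image, Set.mem_setOf_eq]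
    constructor
    · intro ht
      have hq := (hc t).2 (t / M) (t % M) (Nat.mod_lt _ hM1) (Nat.div_add_mod t M)
      exact ⟨t % M, Nat.mod_lt _ hM1, M * (t / M), ⟨t / M, hq.mpr ht, rfl⟩,
        Nat.mod_add_div t M⟩
    · rintro ⟨r, hr, _, ⟨a, ha, rfl⟩, rfl⟩
      exact ((hc (r + M * a)).2 a r hr (by omega)).mp ha
  · -- J = M·J'
    ext j
    simp only [Set.mem_image, Set.mem_setOf_eq]
    constructor
    · intro hj
      obtain ⟨b, hb⟩ := (hc j).1 hj
      exact ⟨b, hb ▸ hj, hb.symm⟩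
    · rintro ⟨b, hb, rfl⟩
      exact hb
  · -- univ = T' + J'
    ext n
    simp only [Set.mem_univ, true_iff, Set.mem_add, Set.mem_setOf_eq]
    obtain ⟨t, ht, j, hj, hsum⟩ := rep_ex h (M * n)
    obtain ⟨b, hb⟩ := (hc j).1 hj
    have hble : b ≤ n := by
      refine Nat.le_of_mul_le_mul_left ?_ (show 0 < M by omega)
      omega
    have hsplit : M * (n - b) + M * b = M * n := by
      rw [← mul_add]; congr 1; omega
    have hteq : t = M * (n - b) := by omega
    exact ⟨n - b, hteq ▸ ht, b, hb ▸ hj, by omega⟩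
  · -- uniqueness
    intro a ha b hb a' ha' b' hb' hs
    have : M * a + M * b = M * a' + M * b' := by
      rw [← mul_add, ← mul_add, hs]
    obtain ⟨e1, e2⟩ := huniq (M * a) ha (M * b) hb (M * a') ha' (M * b') hb' this
    constructor
    · exact Nat.eq_of_mul_eq_mul_left (by omega) e1
    · exact Nat.eq_of_mul_eq_mul_left (by omega) e2
  · -- T infinite → T' infinite
    intro hTinf
    by_contra hfin
    have hfin' : {a : ℕ | M * a ∈ T}.Finite := Set.not_infinite.mp hfin
    have : T.Finite := by
      have hTeq : T = Set.Iio M + (M * ·) '' {a | M * a ∈ T} := by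
        ext t
        simp only [Set.mem_add, Set.mem_Iio, Set.mem_image, Set.mem_setOf_eq]
        constructor
        · intro ht
          have hq := (hc t).2 (t / M) (t % M) (Nat.mod_lt _ hM1) (Nat.div_add_mod t M)
          exact ⟨t % M, Nat.mod_lt _ hM1, M * (t / M), ⟨t / M, hq.mpr ht, rfl⟩,
            Nat.mod_add_div t M⟩
        · rintro ⟨r, hr, _, ⟨a, ha, rfl⟩, rfl⟩
          exact ((hc (r + M * a)).2 a r hr (by omega)).mp ha
      rw [hTeq]
      exact (Set.finite_Iio M).add (hfin'.image _)
    exact hTinf this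
  · -- J infinite → J' infinite
    intro hJinf'
    by_contra hfin
    have hfin' : {b : ℕ | M * b ∈ J}.Finite := Set.not_infinite.mp hfin
    have : J.Finite := by
      have hJeq : J = (M * ·) '' {b | M * b ∈ J} := by
        ext j
        simp only [Set.mem_image, Set.mem_setOf_eq]
        constructor
        · intro hj
          obtain ⟨b, hb⟩ := (hc j).1 hj
          exact ⟨b, hb ▸ hj, hb.symm⟩
        · rintro ⟨b, hb, rfl⟩
          exact hb
      rw [hJeq]
      exact hfin'.image _
    exact hJinf' this

lemma main_step {T J : Set ℕ} (h : IsDirectSum T J Set.univ)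
    (hT : T.Infinite) (hJ : J.Infinite) :
    ∃ M P Q T' J', 2 ≤ M ∧ (0:ℕ) ∈ P ∧ (0:ℕ) ∈ Q ∧ P ⊆ Set.Iio M ∧ Q ⊆ Set.Iio M ∧
      P + Q = Set.Iio M ∧ T = P + (M * ·) '' T' ∧ J = Q + (M * ·) '' J' ∧
      IsDirectSum T' J' Set.univ ∧ T'.Infinite ∧ J'.Infinite := by
  obtain ⟨t, ht, j, hj, hsum⟩ := rep_ex h 1
  have h0T : (0:ℕ) ∈ T := zeroT h
  have h0J : (0:ℕ) ∈ J := zeroJ h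
  rcases (show t = 1 ∧ j = 0 ∨ t = 0 ∧ j = 1 by omega) with ⟨ht1, _⟩ | ⟨_, hj1⟩
  · obtain ⟨M, T', J', hM2, hTeq, hJeq, hpair, hTi', hJi'⟩ := half h (ht1 ▸ ht) hJ
    refine ⟨M, Set.Iio M, {0}, T', J', hM2, by simp; omega, rfl, le_refl _,
      by simp; omega, ?_, hTeq, ?_, hpair, hTi' hT, hJi' hJ⟩
    · rw [Set.singleton_zero, add_zero]
    · rw [Set.singleton_zero, zero_add]; exact hJeq
  · obtain ⟨M, J', T', hM2, hJeq, hTeq, hpair, hJi', hTi'⟩ := half (pair_symm h) (hj1 ▸ hj) hT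
    refine ⟨M, {0}, Set.Iio M, T', J', hM2, rfl, by simp; omega,
      by simp; omega, le_refl _, ?_, ?_, hJeq, pair_symm hpair, hTi' hT, hJi' hJ⟩
    · rw [Set.singleton_zero, zero_add]
    · rw [Set.singleton_zero, zero_add]; exact hTeq

end Stmt13Aux

namespace Stmt13Aux

lemma image_add_image (N : ℕ) (X Y : Set ℕ) :
    (N * ·) '' (X + Y) = (N * ·) '' X + (N * ·) '' Y := by
  ext n
  simp only [Set.mem_add, Set.mem_image]
  constructor
  · rintro ⟨x, ⟨a, ha, b, hb, rfl⟩, rfl⟩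
    exact ⟨N * a, ⟨a, ha, rfl⟩, N * b, ⟨b, hb, rfl⟩, (mul_add N a b).symm⟩
  · rintro ⟨_, ⟨a, ha, rfl⟩, _, ⟨b, hb, rfl⟩, rfl⟩
    exact ⟨a + b, ⟨a, ha, b, hb, rfl⟩, mul_add N a b⟩

lemma image_scale_scale (N M : ℕ) (X : Set ℕ) :
    (N * ·) '' ((M * ·) '' X) = (N * M * ·) '' X := by
  rw [Set.image_image]
  apply Set.image_congr
  intro a _
  ring

lemma Iio_add_Iio (N M : ℕ) (hN : 0 < N) :
    Set.Iio N + (N * ·) '' Set.Iio M = Set.Iio (N * M) := by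
  ext n
  simp only [Set.mem_add, Set.mem_image, Set.mem_Iio]
  constructor
  · rintro ⟨r, hr, _, ⟨a, ha, rfl⟩, rfl⟩
    have h1 : N * (a + 1) ≤ N * M := Nat.mul_le_mul_left N (by omega)
    have h2 : N * (a + 1) = N * a + N := by ring
    omega
  · intro hn
    refine ⟨n % N, Nat.mod_lt _ hN, N * (n / N), ⟨n / N, ?_, rfl⟩, Nat.mod_add_div n N⟩
    rw [Nat.div_lt_iff_lt_mul hN, mul_comm M N]
    exact hn

lemma add_scaled_lt {c p N M : ℕ} (hc : c < N) (hp : p < M) : c + N * p < N * M := by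
  have h1 : N * (p + 1) ≤ N * M := Nat.mul_le_mul_left N (by omega)
  have h2 : N * (p + 1) = N * p + N := by ring
  omega

lemma uniq_scaled {C X : Set ℕ} {N : ℕ} (hN : 0 < N) (hC : C ⊆ Set.Iio N) :
    UniqueSumsOn C ((N * ·) '' X) := by
  rintro c hc _ ⟨a, ha, rfl⟩ c' hc' _ ⟨a', ha', rfl⟩ hsum
  dsimp only at hsum ⊢
  have hc1 : c < N := hC hc
  have hc2 : c' < N := hC hc'
  have hcc : c = c' := by
    have h1 : (c + N * a) % N = c := by
      rw [Nat.add_mul_mod_self_left, Nat.mod_eq_of_lt hc1]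
    have h2 : (c' + N * a') % N = c' := by
      rw [Nat.add_mul_mod_self_left, Nat.mod_eq_of_lt hc2]
    rw [hsum] at h1
    omega
  refine ⟨hcc, ?_⟩
  have : N * a = N * a' := by omega
  exact this

lemma uniq_mono {T J C D : Set ℕ} (h : UniqueSumsOn T J) (hC : C ⊆ T) (hD : D ⊆ J) :
    UniqueSumsOn C D :=
  fun a ha b hb a' ha' b' hb' hs => h a (hC ha) b (hD hb) a' (hC ha') b' (hD hb') hs

lemma subset_left_of_eq {C X T : Set ℕ} {N : ℕ}
    (hTeq : T = C + (N * ·) '' X) (h0 : (0:ℕ) ∈ X) : C ⊆ T := by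
  rw [hTeq]
  exact Set.subset_add_left _ ⟨0, h0, mul_zero N⟩

lemma mem_left_of_lt {C X T : Set ℕ} {N : ℕ}
    (hTeq : T = C + (N * ·) '' X) {t : ℕ} (ht : t ∈ T) (hlt : t < N) : t ∈ C := by
  rw [hTeq] at ht
  obtain ⟨c, hc, _, ⟨a, ha, rfl⟩, hsum⟩ := Set.mem_add.mp ht
  dsimp only at hsum
  rcases Nat.eq_zero_or_pos a with h0 | h0
  · subst h0
    rw [mul_zero] at hsum
    rwa [show t = c by omega]
  · exfalso
    have h1 : N * 1 ≤ N * a := Nat.mul_le_mul_left _ h0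
    have h2 : N * 1 = N := by ring
    omega

structure GS (T J : Set ℕ) where
  C : Set ℕ
  D : Set ℕ
  N : ℕ
  Tk : Set ℕ
  Jk : Set ℕ
  hN : 0 < N
  hCD : C + D = Set.Iio N
  hCs : C ⊆ Set.Iio N
  hDs : D ⊆ Set.Iio N
  hTeq : T = C + (N * ·) '' Tk
  hJeq : J = D + (N * ·) '' Jk
  hpair : IsDirectSum Tk Jk Set.univ
  hTi : Tk.Infinite
  hJi : Jk.Infinite

variable {T J : Set ℕ}

lemma step_ex (s : GS T J) :
    ∃ s' : GS T J, s.C ⊆ s'.C ∧ s.D ⊆ s'.D ∧ 2 * s.N ≤ s'.N := by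
  obtain ⟨C, D, N, Tk, Jk, hN, hCD, hCs, hDs, hTeq, hJeq, hpair, hTi, hJi⟩ := s
  obtain ⟨M, P, Q, T', J', hM2, h0P, h0Q, hPs, hQs, hPQ, hTeq', hJeq', hpair', hTi', hJi'⟩ :=
    main_step hpair hTi hJi
  have hMpos : 0 < M := by omega
  refine ⟨⟨C + (N * ·) '' P, D + (N * ·) '' Q, N * M, T', J',
    Nat.mul_pos hN hMpos, ?_, ?_, ?_, ?_, ?_, hpair', hTi', hJi'⟩, ?_, ?_, ?_⟩
  · rw [add_add_add_comm, hCD, ← image_add_image, hPQ, Iio_add_Iio _ _ hN]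
  · rintro x hx
    obtain ⟨c, hc, _, ⟨p, hp, rfl⟩, rfl⟩ := Set.mem_add.mp hx
    exact add_scaled_lt (hCs hc) (hPs hp)
  · rintro x hx
    obtain ⟨c, hc, _, ⟨p, hp, rfl⟩, rfl⟩ := Set.mem_add.mp hx
    exact add_scaled_lt (hDs hc) (hQs hp)
  · rw [hTeq, hTeq', image_add_image, image_scale_scale, add_assoc]
  · rw [hJeq, hJeq', image_add_image, image_scale_scale, add_assoc]
  · exact Set.subset_add_left _ ⟨0, h0P, mul_zero N⟩
  · exact Set.subset_add_left _ ⟨0, h0Q, mul_zero N⟩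
  · show 2 * N ≤ N * M
    have h1 : N * 2 ≤ N * M := Nat.mul_le_mul_left _ hM2
    omega

end Stmt13Aux

open Stmt13Aux

theorem stmt13 (T J : Set ℕ) (h : IsDirectSum T J Set.univ)
    (hT : T.Infinite) (hJ : J.Infinite) :
    ∃ (C D : ℕ → Set ℕ) (N : ℕ → ℕ) (A B : ℕ → Set ℕ),
      (∀ k, IsDirectSum (C k) (D k) (Set.Iio (N k))) ∧
      (∀ k, C k ⊆ C (k + 1)) ∧ (∀ k, D k ⊆ D (k + 1)) ∧
      (⋃ k, C k) = T ∧ (⋃ k, D k) = J ∧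
      (∀ k, IsDirectSum (C k) ((N k * ·) '' A k) T) ∧
      (∀ k, IsDirectSum (D k) ((N k * ·) '' B k) J) := by
  classical
  let init : GS T J :=
    ⟨{0}, {0}, 1, T, J, one_pos,
      by ext n; simp [Set.mem_add, Nat.lt_one_iff],
      by intro x hx; simp_all [Nat.lt_one_iff],
      by intro x hx; simp_all [Nat.lt_one_iff],
      by rw [Set.singleton_zero, zero_add]; ext x; simp,
      by rw [Set.singleton_zero, zero_add]; ext x; simp,
      h, hT, hJ⟩
  let s : ℕ → GS T J := fun k => Nat.rec init (fun _ st => (step_ex st).choose) k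
  have hs : ∀ k, (s k).C ⊆ (s (k+1)).C ∧ (s k).D ⊆ (s (k+1)).D ∧
      2 * (s k).N ≤ (s (k+1)).N := fun k => (step_ex (s k)).choose_spec
  have hNk : ∀ k, k < (s k).N := by
    intro k
    induction k with
    | zero => exact (s 0).hN
    | succ k ih =>
      have := (hs k).2.2
      omega
  refine ⟨fun k => (s k).C, fun k => (s k).D, fun k => (s k).N,
    fun k => (s k).Tk, fun k => (s k).Jk,
    fun k => ⟨(s k).hCD.symm, uniq_mono h.2
      (subset_left_of_eq (s k).hTeq (zeroT (s k).hpair))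
      (subset_left_of_eq (s k).hJeq (zeroJ (s k).hpair))⟩,
    fun k => (hs k).1, fun k => (hs k).2.1, ?_, ?_,
    fun k => ⟨(s k).hTeq, uniq_scaled (s k).hN (s k).hCs⟩,
    fun k => ⟨(s k).hJeq, uniq_scaled (s k).hN (s k).hDs⟩⟩
  · refine subset_antisymm
      (Set.iUnion_subset fun k => subset_left_of_eq (s k).hTeq (zeroT (s k).hpair)) ?_
    intro t ht
    exact Set.mem_iUnion.mpr ⟨t, mem_left_of_lt (s t).hTeq ht (hNk t)⟩
  · refine subset_antisymm
      (Set.iUnion_subset fun k => subset_left_of_eq (s k).hJeq (zeroJ (s k).hpair)) ?_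
    intro t ht
    exact Set.mem_iUnion.mpr ⟨t, mem_left_of_lt (s t).hJeq ht (hNk t)⟩
end

section
/- Let (T, J) be an ℕ-pair with T finite. Then there exist an integer N ≥ 1 and a set D ⊆ ℕ such that T ⊕ D = {0,1,…,N−1} and J = D ⊕ Nℕ. -/
open Pointwise

theorem stmt14 (T J : Set ℕ) (h : IsDirectSum T J Set.univ) (hT : T.Finite) :
    ∃ N : ℕ, 1 ≤ N ∧ ∃ D : Set ℕ,
      IsDirectSum T D (Set.Iio N) ∧
      IsDirectSum D ((N * ·) '' Set.univ) J := by
  classical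
  obtain ⟨hcov, huniq⟩ := h
  have hdec : ∀ n : ℕ, ∃ t ∈ T, ∃ j ∈ J, t + j = n := by
    intro n
    have hn : n ∈ T + J := by rw [← hcov]; trivial
    simpa [Set.mem_add] using hn
  have h0T : (0:ℕ) ∈ T := by
    obtain ⟨t, ht, j, hj, htj⟩ := hdec 0
    have ht0 : t = 0 := by omega
    rwa [ht0] at ht
  have h0J : (0:ℕ) ∈ J := by
    obtain ⟨t, ht, j, hj, htj⟩ := hdec 0
    have hj0 : j = 0 := by omega
    rwa [hj0] at hj
  have hne : hT.toFinset.Nonempty := ⟨0, hT.mem_toFinset.mpr h0T⟩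
  set m := hT.toFinset.max' hne with hm
  have hmT : m ∈ T := by
    have := hT.toFinset.max'_mem hne
    rwa [hT.mem_toFinset] at this
  have hle : ∀ t ∈ T, t ≤ m := fun t ht =>
    hT.toFinset.le_max' t (hT.mem_toFinset.mpr ht)
  -- forward characterization
  have fwd : ∀ n : ℕ, (n + m ∈ J ↔ ∀ t ∈ T, t ≠ 0 → ∀ k ∈ J, t + k ≠ n + m) := by
    intro n
    constructor
    · intro hnm t ht ht0 k hk htk
      have := huniq 0 h0T (n+m) hnm t ht k hk (by omega)
      omega
    · intro hcond
      obtain ⟨t, ht, j, hj, htj⟩ := hdec (n + m)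
      rcases eq_or_ne t 0 with h0 | h0
      · have : j = n + m := by omega
        rwa [this] at hj
      · exact absurd htj (hcond t ht h0 j hj)
  -- backward characterization
  have bwd : ∀ n : ℕ, (n ∈ J ↔ ∀ t ∈ T, t ≠ m → ∀ k ∈ J, t + k ≠ n + m) := by
    intro n
    constructor
    · intro hn t ht htm k hk htk
      have := huniq m hmT n hn t ht k hk (by omega)
      exact htm this.1.symm
    · intro hcond
      obtain ⟨t, ht, j, hj, htj⟩ := hdec (n + m)
      rcases eq_or_ne t m with h0 | h0
      · have : j = n := by omega
        rwa [this] at hj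
      · exact absurd htj (hcond t ht h0 j hj)
  -- windows
  set W : ℕ → ℕ → Prop := fun a b => ∀ i ≤ m, (a + i ∈ J ↔ b + i ∈ J) with hW
  have Wsymm : ∀ a b, W a b → W b a := fun a b hw i hi => (hw i hi).symm
  have fwdW : ∀ a b, W a b → W (a+1) (b+1) := by
    have key : ∀ a b, W a b →
        (∀ t ∈ T, t ≠ 0 → ∀ k ∈ J, t + k ≠ a + 1 + m) →
        (∀ t ∈ T, t ≠ 0 → ∀ k ∈ J, t + k ≠ b + 1 + m) := by
      intro a b hw hc t ht ht0 k hk htk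
      have htm : t ≤ m := hle t ht
      -- k = b + (m + 1 - t), index i := m + 1 - t ∈ [1, m]
      have hi : m + 1 - t ≤ m := by omega
      have hk' : a + (m + 1 - t) ∈ J := by
        have := (hw (m + 1 - t) hi).mpr
        apply this
        have : b + (m + 1 - t) = k := by omega
        rwa [this]
      exact hc t ht ht0 _ hk' (by omega)
    intro a b hw i hi
    rcases Nat.lt_or_ge i m with hlt | hge
    · have := hw (i+1) (by omega)
      constructor
      · intro hx
        have : b + (i + 1) ∈ J := by
          apply (hw (i+1) (by omega)).mp
          have e : a + (i+1) = a + 1 + i := by ring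
          rwa [e]
        have e : b + (i+1) = b + 1 + i := by ring
        rwa [e] at this
      · intro hx
        have : a + (i + 1) ∈ J := by
          apply (hw (i+1) (by omega)).mpr
          have e : b + (i+1) = b + 1 + i := by ring
          rwa [e]
        have e : a + (i+1) = a + 1 + i := by ring
        rwa [e] at this
    · have hi' : i = m := by omega
      subst hi'
      rw [show a + 1 + m = (a+1) + m from rfl, show b + 1 + m = (b+1) + m from rfl,
        fwd (a+1), fwd (b+1)]
      exact ⟨key a b hw, key b a (Wsymm a b hw)⟩
  have bwdW : ∀ a b, W (a+1) (b+1) → W a b := by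
    have key : ∀ a b, W (a+1) (b+1) →
        (∀ t ∈ T, t ≠ m → ∀ k ∈ J, t + k ≠ a + m) →
        (∀ t ∈ T, t ≠ m → ∀ k ∈ J, t + k ≠ b + m) := by
      intro a b hw hc t ht htm k hk htk
      have htm' : t ≤ m := hle t ht
      have htlt : t < m := by omega
      -- k = b + (m - t) = (b+1) + (m - t - 1), index i := m - t - 1 ≤ m
      have hi : m - t - 1 ≤ m := by omega
      have hk' : a + 1 + (m - t - 1) ∈ J := by
        apply (hw (m - t - 1) hi).mpr
        have e : b + 1 + (m - t - 1) = k := by omega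
        rwa [e]
      exact hc t ht htm _ hk' (by omega)
    intro a b hw i hi
    rcases Nat.eq_zero_or_pos i with h0 | hpos
    · subst h0
      rw [show a + 0 = a from rfl, show b + 0 = b from rfl, bwd a, bwd b]
      exact ⟨key a b hw, key b a (Wsymm _ _ hw)⟩
    · obtain ⟨j, rfl⟩ : ∃ j, i = j + 1 := ⟨i - 1, by omega⟩
      have := hw j (by omega)
      constructor
      · intro hx
        have hx' : a + 1 + j ∈ J := by
          have e : a + (j+1) = a + 1 + j := by ring
          rwa [e] at hx
        have : b + 1 + j ∈ J := (hw j (by omega)).mp hx'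
        have e : b + (j+1) = b + 1 + j := by ring
        rwa [e]
      · intro hx
        have hx' : b + 1 + j ∈ J := by
          have e : b + (j+1) = b + 1 + j := by ring
          rwa [e] at hx
        have : a + 1 + j ∈ J := (hw j (by omega)).mpr hx'
        have e : a + (j+1) = a + 1 + j := by ring
        rwa [e]
  -- pigeonhole: find a < b with W a b
  have pigeon : ∃ a b : ℕ, a < b ∧ W a b := by
    obtain ⟨a, b, hab, hs⟩ := Finite.exists_ne_map_eq_of_infinite
      (fun n : ℕ => (fun i : Fin (m+1) => n + (i : ℕ) ∈ J))
    have hwab : W a b := by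
      intro i hi
      have := congrFun hs ⟨i, by omega⟩
      simp only at this
      rw [this]
    rcases Nat.lt_or_ge a b with hlt | hge
    · exact ⟨a, b, hlt, hwab⟩
    · exact ⟨b, a, by omega, Wsymm _ _ hwab⟩
  obtain ⟨a, b, hab, hwab⟩ := pigeon
  set p := b - a with hp
  have hp1 : 1 ≤ p := by omega
  -- propagate periodicity of windows
  have hWap : W a (a + p) := by
    have : a + p = b := by omega
    rwa [this]
  have fwdk : ∀ k, W (a + k) (a + k + p) := by
    intro k
    induction k with
    | zero => simpa using hWap
    | succ k ih =>
        have h2 := fwdW _ _ ih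
        have e : a + k + p + 1 = a + k + 1 + p := by ring
        rwa [e] at h2
  have bwdk : ∀ k, k ≤ a → W (a - k) (a - k + p) := by
    intro k
    induction k with
    | zero => intro _; simpa using hWap
    | succ k ih =>
        intro hk
        have h1 : W (a - k) (a - k + p) := ih (by omega)
        have e1 : a - k = (a - (k+1)) + 1 := by omega
        rw [e1] at h1
        have e2 : a - (k+1) + 1 + p = (a - (k+1) + p) + 1 := by ring
        rw [e2] at h1
        exact bwdW _ _ h1
  have per : ∀ n : ℕ, n ∈ J ↔ n + p ∈ J := by
    intro n
    rcases Nat.lt_or_ge n a with hlt | hge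
    · have := bwdk (a - n) (by omega) 0 (by omega)
      have e1 : a - (a - n) = n := by omega
      rw [e1] at this
      simpa using this
    · have := fwdk (n - a) 0 (by omega)
      have e1 : a + (n - a) = n := by omega
      rw [e1] at this
      simpa using this
  have perk : ∀ n k : ℕ, n ∈ J ↔ n + p * k ∈ J := by
    intro n k
    induction k with
    | zero => simp
    | succ k ih =>
        rw [ih, per (n + p * k)]
        have e : n + p * k + p = n + p * (k+1) := by ring
        rw [e]
  -- Define D
  refine ⟨p, hp1, {d | d ∈ J ∧ d < p}, ⟨?_, ?_⟩, ⟨?_, ?_⟩⟩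
  · -- Iio p = T + D
    ext x
    simp only [Set.mem_Iio, Set.mem_add, Set.mem_setOf_eq]
    constructor
    · intro hx
      obtain ⟨t, ht, j, hj, htj⟩ := hdec x
      exact ⟨t, ht, j, ⟨hj, by omega⟩, htj⟩
    · rintro ⟨t, ht, d, ⟨hdJ, hdlt⟩, rfl⟩
      by_contra hge
      push_neg at hge
      obtain ⟨t', ht', j', hj', htj'⟩ := hdec (t + d - p)
      have hj'p : j' + p ∈ J := (per j').mp hj'
      have := huniq t ht d hdJ t' ht' (j' + p) hj'p (by omega)
      omega
  · -- UniqueSumsOn T D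
    intro t ht d hd t' ht' d' hd' heq
    exact huniq t ht d hd.1 t' ht' d' hd'.1 heq
  · -- J = D + pℕ
    ext x
    simp only [Set.mem_add, Set.mem_setOf_eq, Set.image_univ, Set.mem_range]
    constructor
    · intro hx
      refine ⟨x % p, ⟨?_, Nat.mod_lt x (by omega)⟩, p * (x / p), ⟨x / p, rfl⟩, ?_⟩
      · have := (perk (x % p) (x / p)).mpr
        apply this
        rwa [Nat.mod_add_div x p]
      · exact Nat.mod_add_div x p
    · rintro ⟨d, ⟨hdJ, hdlt⟩, y, ⟨k, rfl⟩, rfl⟩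
      exact (perk d k).mp hdJ
  · -- UniqueSumsOn D pℕ
    rintro d ⟨hdJ, hdlt⟩ y hy d' ⟨hdJ', hdlt'⟩ y' hy' heq
    simp only [Set.image_univ, Set.mem_range] at hy hy'
    obtain ⟨k, rfl⟩ := hy
    obtain ⟨k', rfl⟩ := hy'
    have hd : d = d' := by
      have h1 : (d + p * k) % p = d := by
        rw [Nat.add_mul_mod_self_left, Nat.mod_eq_of_lt hdlt]
      have h2 : (d' + p * k') % p = d' := by
        rw [Nat.add_mul_mod_self_left, Nat.mod_eq_of_lt hdlt']
      rw [← h1, ← h2, heq]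
    refine ⟨hd, ?_⟩
    subst hd
    have : p * k = p * k' := by omega
    have := Nat.eq_of_mul_eq_mul_left (by omega : 0 < p) this
    rw [this]
end

section
/- Let (T, J) be an ℕ^n-pair with p·e₁ ∈ T and {0, e₁, 2e₁, …, (p−1)e₁} ⊆ J for some integer p ≥ 2. Then there exists an ℕ^n-pair (T̃, J̃) such that T = {(p·t₁, t₂, …, t_n) : t ∈ T̃} and J = {(j + p·s₁, s₂, …, s_n) : 0 ≤ j ≤ p−1, s ∈ J̃}, with the latter a direct-sum decomposition. -/
open Pointwise

namespace Stmt16Aux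

lemma mod_succ_lt {p x : ℕ} (h : x % p + 1 < p) : (x + 1) % p = x % p + 1 := by
  conv_lhs => rw [← Nat.mod_add_div x p]
  rw [show x % p + p * (x / p) + 1 = (x % p + 1) + (x / p) * p by ring,
    Nat.add_mul_mod_self_right, Nat.mod_eq_of_lt h]

lemma mod_pred {p x r : ℕ} (hr : 0 < r) (hrp : r < p) (h : (x + 1) % p = r) :
    x % p + 1 = r := by
  have hp : 0 < p := lt_trans hr hrp
  have hx : x % p < p := Nat.mod_lt _ hp
  rcases eq_or_lt_of_le (Nat.succ_le_of_lt hx) with he | hlt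
  · have h0 : (x + 1) % p = 0 := by
      conv_lhs => rw [← Nat.mod_add_div x p]
      rw [show x % p + p * (x / p) + 1 = (x % p + 1) + (x / p) * p by ring,
        Nat.add_mul_mod_self_right, show x % p + 1 = p from he, Nat.mod_self]
    omega
  · rw [mod_succ_lt hlt] at h; omega

lemma sum_update {n : ℕ} (i0 : Fin n) (x : Fin n → ℕ) (c : ℕ) :
    (∑ i, Function.update x i0 c i) + x i0 = (∑ i, x i) + c := by
  rw [Finset.sum_update_of_mem (Finset.mem_univ i0),
    ← Finset.add_sum_erase _ x (Finset.mem_univ i0), Finset.erase_eq]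
  ring

lemma one_le_sum {n : ℕ} {x : Fin n → ℕ} (hx : x ≠ 0) : 1 ≤ ∑ i, x i := by
  by_contra hle
  push_neg at hle
  apply hx
  funext i
  have := (Finset.sum_eq_zero_iff).mp (Nat.lt_one_iff.mp hle) i (Finset.mem_univ i)
  simpa using this

lemma le_sum {n : ℕ} (x : Fin n → ℕ) (i : Fin n) : x i ≤ ∑ j, x j :=
  Finset.single_le_sum (fun j _ => Nat.zero_le (x j)) (Finset.mem_univ i)

lemma add_eq_zero {n : ℕ} {a b : Fin n → ℕ} (h : a + b = 0) : a = 0 ∧ b = 0 := by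
  constructor <;> funext i <;>
  · have := congrFun h i
    simp only [Pi.add_apply, Pi.zero_apply] at this
    simp only [Pi.zero_apply]
    omega

lemma abc {n : ℕ} (hn : 0 < n) {T J : Set (Fin n → ℕ)}
    (huniq : UniqueSumsOn T J)
    (hdec : ∀ x : Fin n → ℕ, ∃ t ∈ T, ∃ j ∈ J, t + j = x)
    {p : ℕ} (hp : 2 ≤ p)
    (hpT : Pi.single (⟨0, hn⟩ : Fin n) p ∈ T)
    (hJ : ∀ j < p, Pi.single (⟨0, hn⟩ : Fin n) j ∈ J)
    (hT0 : (0 : Fin n → ℕ) ∈ T) (hJ0 : (0 : Fin n → ℕ) ∈ J) :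
    ∀ N : ℕ, ∀ x : Fin n → ℕ, (∑ i, x i) ≤ N →
      (x ∈ T → p ∣ x ⟨0, hn⟩) ∧
      (x ∈ J → x ⟨0, hn⟩ % p ≠ 0 →
        Function.update x ⟨0, hn⟩ (x ⟨0, hn⟩ - 1) ∈ J) ∧
      (x ∈ J → x ⟨0, hn⟩ % p + 1 < p →
        Function.update x ⟨0, hn⟩ (x ⟨0, hn⟩ + 1) ∈ J) := by
  intro N
  induction N using Nat.strong_induction_on with
  | _ N IH =>
    set i0 : Fin n := ⟨0, hn⟩ with hi0
    have step : ∀ x : Fin n → ℕ, (∑ i, x i) ≤ N → 1 ≤ x i0 → x i0 % p ≠ 0 →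
        ∃ t' ∈ T, ∃ j' ∈ J, t' + Function.update j' i0 (j' i0 + 1) = x ∧
          Function.update j' i0 (j' i0 + 1) ∈ J ∧
          t' + j' = Function.update x i0 (x i0 - 1) := by
      intro x hxN hx1 hr
      obtain ⟨t', ht', j', hj', hsum⟩ := hdec (Function.update x i0 (x i0 - 1))
      have hC : j' i0 + 1 + t' i0 = x i0 := by
        have hco := congrFun hsum i0
        simp only [Pi.add_apply, Function.update_self] at hco
        omega
      have hs : (∑ i, t' i) + (∑ i, j' i) + 1 = (∑ i, x i) := by
        have h1 := sum_update i0 x (x i0 - 1)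
        have h2 : (∑ i, (t' + j') i) = (∑ i, t' i) + (∑ i, j' i) := by
          simp [Finset.sum_add_distrib]
        rw [hsum] at h2
        omega
      have hNpos : 1 ≤ N := le_trans (le_trans hx1 (le_sum x i0)) hxN
      have IH' := IH (N - 1) (by omega)
      obtain ⟨k, hk⟩ := (IH' t' (by omega)).1 ht'
      have hmod : (j' i0 + 1) % p = x i0 % p := by
        conv_rhs => rw [← hC, hk]
        rw [show j' i0 + 1 + p * k = (j' i0 + 1) + k * p by ring,
          Nat.add_mul_mod_self_right]
      have hrlt : x i0 % p < p := Nat.mod_lt _ (by omega)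
      have hj'mod : j' i0 % p + 1 = x i0 % p :=
        mod_pred (Nat.pos_of_ne_zero hr) hrlt hmod
      have hCj' := (IH' j' (by omega)).2.2 hj' (by omega)
      refine ⟨t', ht', j', hj', ?_, hCj', hsum⟩
      funext i
      by_cases hi : i = i0
      · subst hi
        simp only [Pi.add_apply, Function.update_self]
        omega
      · have hco := congrFun hsum i
        simp only [Pi.add_apply, Function.update_of_ne hi] at hco ⊢
        exact hco
    have hA : ∀ x : Fin n → ℕ, (∑ i, x i) ≤ N → x ∈ T → p ∣ x i0 := by
      intro x hxN hxT
      by_contra hnd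
      have hr : x i0 % p ≠ 0 := fun h => hnd (Nat.dvd_of_mod_eq_zero h)
      have hx1 : 1 ≤ x i0 := by
        rcases Nat.eq_zero_or_pos (x i0) with h | h
        · exact absurd (by simp [h]) hr
        · exact h
      obtain ⟨t', ht', j', hj', hxeq, hCj', -⟩ := step x hxN hx1 hr
      have h2 := huniq x hxT 0 hJ0 t' ht' _ hCj' (by rw [add_zero, hxeq])
      have h3 := congrFun h2.2 i0
      simp only [Pi.zero_apply, Function.update_self] at h3
      omega
    have hB : ∀ x : Fin n → ℕ, (∑ i, x i) ≤ N → x ∈ J → x i0 % p ≠ 0 →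
        Function.update x i0 (x i0 - 1) ∈ J := by
      intro x hxN hxJ hr
      have hx1 : 1 ≤ x i0 := by
        rcases Nat.eq_zero_or_pos (x i0) with h | h
        · exact absurd (by simp [h]) hr
        · exact h
      obtain ⟨t', ht', j', hj', hxeq, hCj', hsum⟩ := step x hxN hx1 hr
      have h2 := huniq 0 hT0 x hxJ t' ht' _ hCj' (by rw [zero_add, hxeq])
      rw [← hsum, ← h2.1, zero_add]
      exact hj'
    have hC : ∀ x : Fin n → ℕ, (∑ i, x i) ≤ N → x ∈ J → x i0 % p + 1 < p →
        Function.update x i0 (x i0 + 1) ∈ J := by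
      intro x hxN hxJ hrlt
      obtain ⟨t', ht', j', hj', hsum⟩ := hdec (Function.update x i0 (x i0 + 1))
      by_cases ht'0 : t' = 0
      · rw [ht'0, zero_add] at hsum
        rw [← hsum]; exact hj'
      by_cases hj'0 : j' = 0
      · rw [hj'0, add_zero] at hsum
        have key : t' + Pi.single i0 (p - 1) = Pi.single i0 p + x := by
          funext i
          by_cases hi : i = i0
          · subst hi
            have := congrFun hsum i0
            simp only [Function.update_self] at this
            simp only [Pi.add_apply, Pi.single_eq_same, this]
            omega
          · have := congrFun hsum i
            simp only [Function.update_of_ne hi] at this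
            simp only [Pi.add_apply, Pi.single_eq_of_ne hi, this]
            omega
        have h2 := huniq t' ht' _ (hJ (p - 1) (by omega)) _ hpT x hxJ key
        have hx : x i0 = p - 1 := by
          rw [← h2.2]; simp
        rw [hx, Nat.mod_eq_of_lt (by omega)] at hrlt
        omega
      · have hC0 : t' i0 + j' i0 = x i0 + 1 := by
          have hco := congrFun hsum i0
          simp only [Pi.add_apply, Function.update_self] at hco
          omega
        have hs : (∑ i, t' i) + (∑ i, j' i) = (∑ i, x i) + 1 := by
          have h1 := sum_update i0 x (x i0 + 1)
          have h2 : (∑ i, (t' + j') i) = (∑ i, t' i) + (∑ i, j' i) := by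
            simp [Finset.sum_add_distrib]
          rw [hsum] at h2
          omega
        have hst := one_le_sum ht'0
        have hsj := one_le_sum hj'0
        obtain ⟨k, hk⟩ := hA t' (by omega) ht'
        have hmodj' : j' i0 % p = x i0 % p + 1 := by
          have e : x i0 + 1 = j' i0 + p * k := by rw [← hk]; omega
          have h3 : (x i0 + 1) % p = j' i0 % p := by
            rw [e, show j' i0 + p * k = j' i0 + k * p by ring, Nat.add_mul_mod_self_right]
          rw [← h3, mod_succ_lt hrlt]
        have hj'pos : j' i0 % p ≠ 0 := by omega
        have hj'1 : 1 ≤ j' i0 := by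
          rcases Nat.eq_zero_or_pos (j' i0) with h | h
          · rw [h] at hj'pos; simp at hj'pos
          · exact h
        have hBj' := hB j' (by omega) hj' hj'pos
        have hxeq : t' + Function.update j' i0 (j' i0 - 1) = x := by
          funext i
          by_cases hi : i = i0
          · subst hi
            simp only [Pi.add_apply, Function.update_self]
            omega
          · have hco := congrFun hsum i
            simp only [Pi.add_apply, Function.update_of_ne hi] at hco ⊢
            exact hco
        have h2 := huniq 0 hT0 x hxJ t' ht' _ hBj' (by rw [zero_add, hxeq])
        exact absurd h2.1.symm ht'0
    exact fun x hx => ⟨hA x hx, hB x hx, hC x hx⟩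

end Stmt16Aux

theorem stmt16 {n : ℕ} (hn : 0 < n) (T J : Set (Fin n → ℕ))
    (h : IsDirectSum T J Set.univ) (p : ℕ) (hp : 2 ≤ p)
    (hpT : Pi.single (⟨0, hn⟩ : Fin n) p ∈ T)
    (hJ : ∀ j < p, Pi.single (⟨0, hn⟩ : Fin n) j ∈ J) :
    ∃ T' J' : Set (Fin n → ℕ), IsDirectSum T' J' Set.univ ∧
      T = (fun t => Function.update t (⟨0, hn⟩ : Fin n) (p * t (⟨0, hn⟩ : Fin n))) '' T' ∧
      IsDirectSum {x : Fin n → ℕ | ∃ j < p, x = Pi.single (⟨0, hn⟩ : Fin n) j}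
        ((fun s => Function.update s (⟨0, hn⟩ : Fin n) (p * s (⟨0, hn⟩ : Fin n))) '' J')
        J := by
  obtain ⟨hset, huniq⟩ := h
  set i0 : Fin n := ⟨0, hn⟩ with hi0
  set φ : (Fin n → ℕ) → (Fin n → ℕ) := fun t => Function.update t i0 (p * t i0) with hφdef
  have hp0 : 0 < p := by omega
  have hdec : ∀ x : Fin n → ℕ, ∃ t ∈ T, ∃ j ∈ J, t + j = x := by
    intro x
    have hx : x ∈ T + J := by rw [← hset]; trivial
    exact Set.mem_add.mp hx
  obtain ⟨t0, ht0, j0, hj0, h0⟩ := hdec 0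
  obtain ⟨he1, he2⟩ := Stmt16Aux.add_eq_zero h0
  have hT0 : (0 : Fin n → ℕ) ∈ T := he1 ▸ ht0
  have hJ0 : (0 : Fin n → ℕ) ∈ J := he2 ▸ hj0
  have habc := Stmt16Aux.abc hn huniq hdec hp hpT hJ hT0 hJ0
  have hA : ∀ t ∈ T, p ∣ t i0 := fun t ht => (habc _ t le_rfl).1 ht
  have hBs : ∀ j ∈ J, j i0 % p ≠ 0 → Function.update j i0 (j i0 - 1) ∈ J :=
    fun j hj hm => (habc _ j le_rfl).2.1 hj hm
  have hCs : ∀ j ∈ J, j i0 % p + 1 < p → Function.update j i0 (j i0 + 1) ∈ J :=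
    fun j hj hm => (habc _ j le_rfl).2.2 hj hm
  have hφ0 : ∀ a : Fin n → ℕ, φ a i0 = p * a i0 := by
    intro a; simp only [hφdef]; exact Function.update_self _ _ _
  have hφne : ∀ a : Fin n → ℕ, ∀ i, i ≠ i0 → φ a i = a i := by
    intro a i hi; simp only [hφdef]; exact Function.update_of_ne hi _ _
  have hφadd : ∀ a b : Fin n → ℕ, φ (a + b) = φ a + φ b := by
    intro a b
    funext i
    by_cases hi : i = i0
    · subst hi
      simp only [Pi.add_apply, hφ0]
      ring
    · simp only [Pi.add_apply, hφne _ _ hi]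
  have hφinj : ∀ a b : Fin n → ℕ, φ a = φ b → a = b := by
    intro a b hab
    funext i
    by_cases hi : i = i0
    · subst hi
      have := congrFun hab i0
      rw [hφ0, hφ0] at this
      exact Nat.eq_of_mul_eq_mul_left hp0 this
    · have := congrFun hab i
      rwa [hφne _ _ hi, hφne _ _ hi] at this
  have hφsur : ∀ t : Fin n → ℕ, p ∣ t i0 → ∃ a, φ a = t := by
    rintro t ⟨k, hk⟩
    refine ⟨Function.update t i0 k, ?_⟩
    funext i
    by_cases hi : i = i0
    · subst hi
      rw [hφ0, Function.update_self]
      exact hk.symm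
    · rw [hφne _ _ hi, Function.update_of_ne hi]
  -- iterated down-closure of J
  have hdown : ∀ j ∈ J, ∀ k, k ≤ j i0 % p → Function.update j i0 (j i0 - k) ∈ J := by
    intro j hj k
    induction k with
    | zero => intro _; simpa using hj
    | succ k ih =>
      intro hk
      have hy := ih (by omega)
      have hqr : p * (j i0 / p) + j i0 % p = j i0 := Nat.div_add_mod _ _
      have hlt : j i0 % p < p := Nat.mod_lt _ hp0
      generalize hM : p * (j i0 / p) = M at hqr
      have hmod : (j i0 - k) % p = j i0 % p - k := by
        rw [show j i0 - k = (j i0 % p - k) + (j i0 / p) * p by rw [mul_comm, hM]; omega,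
          Nat.add_mul_mod_self_right, Nat.mod_eq_of_lt (by omega)]
      have hstep := hBs _ hy (by
        simp only [Function.update_self]
        rw [hmod]; omega)
      simp only [Function.update_idem, Function.update_self] at hstep
      rwa [show j i0 - k - 1 = j i0 - (k + 1) by omega] at hstep
  -- iterated up-closure of J from multiples of p
  have hup : ∀ j ∈ J, j i0 % p = 0 → ∀ s, s < p → Function.update j i0 (j i0 + s) ∈ J := by
    intro j hj hm s
    induction s with
    | zero => intro _; simpa using hj
    | succ s ih =>
      intro hs
      have hy := ih (by omega)
      have hqr : p * (j i0 / p) + j i0 % p = j i0 := Nat.div_add_mod _ _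
      generalize hM : p * (j i0 / p) = M at hqr
      have hmod : (j i0 + s) % p = s := by
        rw [show j i0 + s = s + (j i0 / p) * p by rw [mul_comm, hM]; omega,
          Nat.add_mul_mod_self_right, Nat.mod_eq_of_lt (by omega)]
      have hstep := hCs _ hy (by
        simp only [Function.update_self]
        rw [hmod]; omega)
      simp only [Function.update_idem, Function.update_self] at hstep
      rwa [show j i0 + s + 1 = j i0 + (s + 1) by omega] at hstep
  refine ⟨φ ⁻¹' T, φ ⁻¹' J, ⟨?_, ?_⟩, ?_, ?_, ?_⟩
  · -- univ = φ⁻¹T + φ⁻¹J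
    refine (Set.eq_univ_of_forall ?_).symm
    intro x
    obtain ⟨t, ht, j, hj, hsum⟩ := hdec (φ x)
    have hdt : p ∣ t i0 := hA t ht
    have hdj : p ∣ j i0 := by
      have h1 : p ∣ t i0 + j i0 := by
        have h2 := congrFun hsum i0
        rw [Pi.add_apply] at h2
        rw [h2, hφ0]
        exact Dvd.intro _ rfl
      exact (Nat.dvd_add_right hdt).mp h1
    obtain ⟨a, ha⟩ := hφsur t hdt
    obtain ⟨b, hb⟩ := hφsur j hdj
    have hx : a + b = x := hφinj _ _ (by rw [hφadd, ha, hb, hsum])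
    exact Set.mem_add.mpr ⟨a, by rw [Set.mem_preimage, ha]; exact ht,
      b, by rw [Set.mem_preimage, hb]; exact hj, hx⟩
  · -- uniqueness for preimages
    intro a ha b hb a' ha' b' hb' heq
    have h2 := huniq (φ a) ha (φ b) hb (φ a') ha' (φ b') hb'
      (by rw [← hφadd, ← hφadd, heq])
    exact ⟨hφinj _ _ h2.1, hφinj _ _ h2.2⟩
  · -- T = φ '' (φ⁻¹ T)
    ext t
    constructor
    · intro ht
      obtain ⟨a, ha⟩ := hφsur t (hA t ht)
      exact ⟨a, by rw [Set.mem_preimage, ha]; exact ht, ha⟩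
    · rintro ⟨a, haT, rfl⟩
      exact haT
  · -- J = P + φ '' (φ⁻¹ J)
    ext j
    constructor
    · intro hj
      have hrlt : j i0 % p < p := Nat.mod_lt _ hp0
      have hj0m : Function.update j i0 (j i0 - j i0 % p) ∈ J := hdown j hj _ le_rfl
      have hsub : j i0 - j i0 % p = p * (j i0 / p) :=
        Nat.sub_eq_of_eq_add (Nat.div_add_mod (j i0) p).symm
      rw [hsub] at hj0m
      have hphieq : φ (Function.update j i0 (j i0 / p)) =
          Function.update j i0 (p * (j i0 / p)) := by
        funext i
        by_cases hi : i = i0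
        · subst hi
          rw [hφ0, Function.update_self, Function.update_self]
        · rw [hφne _ _ hi, Function.update_of_ne hi, Function.update_of_ne hi]
      refine Set.mem_add.mpr ⟨Pi.single i0 (j i0 % p), ⟨j i0 % p, hrlt, rfl⟩,
        Function.update j i0 (p * (j i0 / p)),
        ⟨Function.update j i0 (j i0 / p), by rw [Set.mem_preimage, hphieq]; exact hj0m,
          hphieq⟩, ?_⟩
      funext i
      by_cases hi : i = i0
      · subst hi
        simp only [Pi.add_apply, Pi.single_eq_same, Function.update_self]
        rw [Nat.add_comm]
        exact Nat.div_add_mod _ _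
      · simp only [Pi.add_apply, Pi.single_eq_of_ne hi, Function.update_of_ne hi]
        omega
    · intro hjm
      obtain ⟨a, haP, b, hbI, hab⟩ := Set.mem_add.mp hjm
      obtain ⟨s, hs, rfl⟩ := haP
      obtain ⟨u, huJ, rfl⟩ := hbI
      rw [Set.mem_preimage] at huJ
      have hm0 : (φ u) i0 % p = 0 := by rw [hφ0]; exact Nat.mul_mod_right _ _
      have hupJ := hup (φ u) huJ hm0 s hs
      have key : Pi.single i0 s + φ u = Function.update (φ u) i0 ((φ u) i0 + s) := by
        funext i
        by_cases hi : i = i0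
        · subst hi
          simp only [Pi.add_apply, Pi.single_eq_same, Function.update_self]
          ring
        · simp only [Pi.add_apply, Pi.single_eq_of_ne hi, Function.update_of_ne hi]
          omega
      rw [← hab, key]
      exact hupJ
  · -- uniqueness for P and φ '' (φ⁻¹ J)
    intro a ha b hb a' ha' b' hb' heq
    obtain ⟨s, hs, rfl⟩ := ha
    obtain ⟨u, -, rfl⟩ := hb
    obtain ⟨s', hs', rfl⟩ := ha'
    obtain ⟨u', -, rfl⟩ := hb'
    have h0 := congrFun heq i0
    simp only [Pi.add_apply, Pi.single_eq_same, hφ0] at h0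
    have hss : s = s' := by
      have e1 : (s + p * u i0) % p = s := by
        rw [show s + p * u i0 = s + u i0 * p by ring, Nat.add_mul_mod_self_right,
          Nat.mod_eq_of_lt hs]
      have e2 : (s' + p * u' i0) % p = s' := by
        rw [show s' + p * u' i0 = s' + u' i0 * p by ring, Nat.add_mul_mod_self_right,
          Nat.mod_eq_of_lt hs']
      rw [h0, e2] at e1
      exact e1.symm
    subst hss
    have hu0 : u i0 = u' i0 := Nat.eq_of_mul_eq_mul_left hp0 (by omega)
    have huu : u = u' := by
      funext i
      by_cases hi : i = i0
      · subst hi; exact hu0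
      · have := congrFun heq i
        simp only [Pi.add_apply, Pi.single_eq_of_ne hi, hφne _ _ hi] at this
        omega
    exact ⟨rfl, by rw [huu]⟩
end

section
/- Let n ≥ 2 and let (T, J) be a primitive ℕ^n-pair, i.e., an ℕ^n-pair which is not a Cartesian product of an ℕ^p-pair and an ℕ^q-pair with p + q = n, p, q ≥ 1 (under any permutation of the coordinates). Write T ∩ ℕe₁ = A·e₁ and J ∩ ℕe₁ = B·e₁ with A, B ⊆ ℕ. Then A is finite or B is finite. -/
open Pointwise

/-- `(T, J)` is (up to a permutation of coordinates) the Cartesian product of an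
`ℕ^p`-pair and an `ℕ^q`-pair with `p, q ≥ 1`: there is a nonempty proper set `S`
of coordinates along which both `T` and `J` split into lower-dimensional pairs. -/
def IsProductPair {n : ℕ} (T J : Set (Fin n → ℕ)) : Prop :=
  ∃ S : Set (Fin n), S.Nonempty ∧ Sᶜ.Nonempty ∧
    ∃ (I₁ J₁ : Set (∀ _ : S, ℕ)) (I₂ J₂ : Set (∀ _ : ↥Sᶜ, ℕ)),
      IsDirectSum I₁ J₁ Set.univ ∧ IsDirectSum I₂ J₂ Set.univ ∧
      T = {x | (fun i : S => x i.1) ∈ I₁ ∧ (fun i : ↥Sᶜ => x i.1) ∈ I₂} ∧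
      J = {x | (fun i : S => x i.1) ∈ J₁ ∧ (fun i : ↥Sᶜ => x i.1) ∈ J₂}

structure NatPair (A B : Set ℕ) : Prop where
  ex : ∀ k, ∃ a ∈ A, ∃ b ∈ B, a + b = k
  uniq : ∀ a ∈ A, ∀ b ∈ B, ∀ a' ∈ A, ∀ b' ∈ B, a + b = a' + b' → a = a' ∧ b = b'

namespace NatPair

lemma zeroA {A B : Set ℕ} (h : NatPair A B) : 0 ∈ A := by
  obtain ⟨a, ha, b, hb, hab⟩ := h.ex 0
  have : a = 0 := by omega
  rwa [this] at ha

lemma zeroB {A B : Set ℕ} (h : NatPair A B) : 0 ∈ B := by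
  obtain ⟨a, ha, b, hb, hab⟩ := h.ex 0
  have : b = 0 := by omega
  rwa [this] at hb

lemma symm {A B : Set ℕ} (h : NatPair A B) : NatPair B A where
  ex := fun k => by obtain ⟨a, ha, b, hb, hab⟩ := h.ex k; exact ⟨b, hb, a, ha, by omega⟩
  uniq := fun b hb a ha b' hb' a' ha' e => by
    have := h.uniq a ha b hb a' ha' b' hb' (by omega)
    omega

lemma low {A B : Set ℕ} (h : NatPair A B) {m : ℕ}
    (hmin : ∀ b ∈ B, b ≠ 0 → m ≤ b) : ∀ j < m, j ∈ A := by
  intro j hj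
  obtain ⟨a, ha, b, hb, hab⟩ := h.ex j
  have hb0 : b = 0 := by
    by_contra hb0
    have := hmin b hb hb0
    omega
  have : a = j := by omega
  rwa [this] at ha

/-- de Bruijn structure lemma: with `m` the least positive element of `B`,
`B` consists of multiples of `m` and `A` is a union of full blocks `[qm, qm+m)`. -/
lemma SL {A B : Set ℕ} (h : NatPair A B) {m : ℕ} (hmB : m ∈ B) (hm0 : m ≠ 0)
    (hmin : ∀ b ∈ B, b ≠ 0 → m ≤ b) :
    ∀ k, (k ∈ B → m ∣ k) ∧ ∀ q s, s < m → k = m * q + s → (k ∈ A ↔ m * q ∈ A) := by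
  have hlow := h.low hmin
  have hmpos : 0 < m := Nat.pos_of_ne_zero hm0
  intro k
  induction k using Nat.strong_induction_on with
  | _ k IH =>
  have IHB : ∀ j, j < k → j ∈ B → ∃ t, j = m * t := by
    intro j hj hjB
    obtain ⟨t, ht⟩ := (IH j hj).1 hjB
    exact ⟨t, ht⟩
  -- B part
  have hBpart : k ∈ B → m ∣ k := by
    intro hkB
    obtain ⟨q, s, hsm, hks⟩ : ∃ q s, s < m ∧ k = m * q + s :=
      ⟨k / m, k % m, Nat.mod_lt _ hmpos, ((Nat.div_add_mod k m).symm ▸ rfl)⟩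
    suffices hs0 : s = 0 by exact ⟨q, by omega⟩
    by_contra hs0
    obtain ⟨a₂, ha₂, b₂, hb₂, e₂⟩ := h.ex (m * q)
    rcases Nat.eq_zero_or_pos b₂ with h0 | hpos
    · -- representation (m*q, 0) : m*q ∈ A ; compare reps of m*q + m
      have hqmA : m * q ∈ A := by
        have : a₂ = m * q := by omega
        rwa [this] at ha₂
      have hmsA : m - s ∈ A := hlow _ (by omega)
      have hu := h.uniq _ hmsA _ hkB _ hqmA _ hmB (by omega)
      have hmq : m * q = 0 ∨ m ≤ m * q := by
        rcases Nat.eq_zero_or_pos q with h1 | h1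
        · exact Or.inl (by rw [h1]; ring)
        · exact Or.inr (Nat.le_mul_of_pos_right m h1)
      omega
    · obtain ⟨q₂, hq₂⟩ := IHB b₂ (by omega) hb₂
      have hq₂q : q₂ ≤ q := Nat.le_of_mul_le_mul_left (by omega) hmpos
      have hexp : m * q = m * (q - q₂) + m * q₂ := by
        have h5 : q - q₂ + q₂ = q := by omega
        calc m * q = m * (q - q₂ + q₂) := by rw [h5]
        _ = m * (q - q₂) + m * q₂ := by ring
      have hasA : m * (q - q₂) + s ∈ A := by
        rw [(IH (m * (q - q₂) + s) (by omega)).2 (q - q₂) s hsm rfl]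
        have : a₂ = m * (q - q₂) := by omega
        rwa [this] at ha₂
      have := h.uniq _ hasA _ hb₂ _ h.zeroA _ hkB (by omega)
      omega
  refine ⟨hBpart, ?_⟩
  intro q s hsm hks
  rcases Nat.eq_zero_or_pos s with hs0 | hs0
  · have : m * q = k := by omega
    rw [this]
  constructor
  · intro hkA
    by_contra hqmA
    obtain ⟨a₂, ha₂, b₂, hb₂, e₂⟩ := h.ex (m * q)
    rcases Nat.eq_zero_or_pos b₂ with h0 | hpos
    · apply hqmA
      have h7 : a₂ = m * q := by omega
      rwa [h7] at ha₂
    · obtain ⟨q₂, hq₂⟩ := IHB b₂ (by omega) hb₂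
      have hq₂q : q₂ ≤ q := Nat.le_of_mul_le_mul_left (by omega) hmpos
      have hexp : m * q = m * (q - q₂) + m * q₂ := by
        have h5 : q - q₂ + q₂ = q := by omega
        calc m * q = m * (q - q₂ + q₂) := by rw [h5]
        _ = m * (q - q₂) + m * q₂ := by ring
      have hasA : m * (q - q₂) + s ∈ A := by
        rw [(IH (m * (q - q₂) + s) (by omega)).2 (q - q₂) s hsm rfl]
        have : a₂ = m * (q - q₂) := by omega
        rwa [this] at ha₂
      have := h.uniq _ hasA _ hb₂ _ hkA _ h.zeroB (by omega)
      omega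
  · intro hqmA
    obtain ⟨a, ha, b, hb, e⟩ := h.ex k
    rcases Nat.lt_or_ge b k with hbk | hbk
    · have hq'ex : ∃ t, b = m * t := by
        rcases Nat.eq_zero_or_pos b with h0 | hpos
        · exact ⟨0, by omega⟩
        · exact IHB b hbk hb
      obtain ⟨q', hq'⟩ := hq'ex
      rcases Nat.eq_zero_or_pos b with h0 | hpos
      · have : a = k := by omega
        rwa [this] at ha
      · exfalso
        have hq'q : q' ≤ q := by
          have h6 : m * (q + 1) = m * q + m := by ring
          have : m * q' < m * (q + 1) := by omega
          have := Nat.lt_of_mul_lt_mul_left this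
          omega
        have hexp : m * q = m * (q - q') + m * q' := by
          have h5 : q - q' + q' = q := by omega
          calc m * q = m * (q - q' + q') := by rw [h5]
          _ = m * (q - q') + m * q' := by ring
        have haA : m * (q - q') ∈ A := by
          rw [← (IH a (by omega)).2 (q - q') s hsm (by omega)]
          exact ha
        have := h.uniq _ haA _ hb _ hqmA _ h.zeroB (by omega)
        omega
    · exfalso
      have hbkeq : b = k := by omega
      rw [hbkeq] at hb
      obtain ⟨t, ht⟩ := hBpart hb
      have : s = k % m := by
        rw [hks, Nat.mul_add_mod, Nat.mod_eq_of_lt hsm]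
      have : k % m = 0 := by
        rw [ht, Nat.mul_mod_right]
      omega

end NatPair

/-- The configuration in the key one-dimensional lemma:
`ℕ = (C ⊕ B) ⊔ (A ⊕ D)` jointly uniquely, where `A ⊕ B = ℕ`, `0 ∈ C`, `B` infinite. -/
structure Inst (A B C D : Set ℕ) : Prop where
  pair : NatPair A B
  hBinf : B.Infinite
  hC0 : 0 ∈ C
  cover : ∀ k, (∃ c ∈ C, ∃ b ∈ B, c + b = k) ∨ (∃ a ∈ A, ∃ d ∈ D, a + d = k)
  uCB : ∀ c ∈ C, ∀ b ∈ B, ∀ c' ∈ C, ∀ b' ∈ B, c + b = c' + b' → c = c' ∧ b = b'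
  uAD : ∀ a ∈ A, ∀ d ∈ D, ∀ a' ∈ A, ∀ d' ∈ D, a + d = a' + d' → a = a' ∧ d = d'
  cross : ∀ c ∈ C, ∀ b ∈ B, ∀ a ∈ A, ∀ d ∈ D, c + b ≠ a + d

namespace Inst

variable {A B C D : Set ℕ}

lemma zeroD (h : Inst A B C D) : 0 ∉ D :=
  fun h0 => h.cross 0 h.hC0 0 h.pair.zeroB 0 h.pair.zeroA 0 h0 rfl

/-- Case P structure claim: if `m` is the least positive element of `B`,
then `D ⊆ mℕ` and `C` is a union of full blocks. -/
lemma CP (h : Inst A B C D) {m : ℕ} (hmB : m ∈ B) (hm0 : m ≠ 0)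
    (hmin : ∀ b ∈ B, b ≠ 0 → m ≤ b) :
    ∀ k, (k ∈ D → m ∣ k) ∧ ∀ q s, s < m → k = m * q + s → (k ∈ C ↔ m * q ∈ C) := by
  have hSL := h.pair.SL hmB hm0 hmin
  have hBmult : ∀ b ∈ B, ∃ t, b = m * t := fun b hb => (hSL b).1 hb
  have hAchar : ∀ k q s, s < m → k = m * q + s → (k ∈ A ↔ m * q ∈ A) := fun k => (hSL k).2
  have hlow := h.pair.low hmin
  have hmpos : 0 < m := Nat.pos_of_ne_zero hm0
  intro k
  induction k using Nat.strong_induction_on with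
  | _ k IH =>
  -- helper: subtract multiples
  have hsub : ∀ x y q q', x = m * q → y = m * q' → y ≤ x → x - y = m * (q - q') ∧ q' ≤ q := by
    intro x y q q' hx hy hxy
    have hq : q' ≤ q := Nat.le_of_mul_le_mul_left (by omega) hmpos
    have hexp : m * q = m * (q - q') + m * q' := by
      have h5 : q - q' + q' = q := by omega
      calc m * q = m * (q - q' + q') := by rw [h5]
      _ = m * (q - q') + m * q' := by ring
    exact ⟨by omega, hq⟩
  have hDpart : k ∈ D → m ∣ k := by
    intro hkD
    obtain ⟨q, s, hsm, hks⟩ : ∃ q s, s < m ∧ k = m * q + s :=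
      ⟨k / m, k % m, Nat.mod_lt _ hmpos, ((Nat.div_add_mod k m).symm ▸ rfl)⟩
    suffices hs0 : s = 0 by exact ⟨q, by omega⟩
    by_contra hs0
    rcases h.cover (m * q) with ⟨c, hc, b, hb, e⟩ | ⟨a, ha, d, hd, e⟩
    · obtain ⟨q', hq'⟩ := hBmult b hb
      obtain ⟨hcval, hq'q⟩ := hsub (m * q) b q q' rfl hq' (by omega)
      rcases Nat.eq_zero_or_pos b with h0 | hpos
      · -- c = m*q ∈ C ; compare reps of m*q + m
        have hcC : m * q ∈ C := by
          have h7 : c = m * q := by omega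
          rwa [h7] at hc
        exact h.cross (m * q) hcC m hmB (m - s) (hlow _ (by omega)) k hkD (by omega)
      · -- c + s ∈ C, rep (c+s, b) of k vs type-2 rep (0,k)
        have hcsC : m * (q - q') + s ∈ C := by
          rw [(IH (m * (q - q') + s) (by omega)).2 (q - q') s hsm rfl]
          have h7 : c = m * (q - q') := by omega
          rwa [h7] at hc
        exact h.cross _ hcsC b hb 0 h.pair.zeroA k hkD (by omega)
    · have hd0 : d ≠ 0 := fun h0 => h.zeroD (h0 ▸ hd)
      obtain ⟨q₃, hq₃⟩ := (IH d (by omega)).1 hd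
      obtain ⟨haval, hq₃q⟩ := hsub (m * q) d q q₃ rfl hq₃ (by omega)
      have hasA : m * (q - q₃) + s ∈ A := by
        rw [hAchar (m * (q - q₃) + s) (q - q₃) s hsm rfl]
        have h7 : a = m * (q - q₃) := by omega
        rwa [h7] at ha
      have := h.uAD _ hasA d hd 0 h.pair.zeroA k hkD (by omega)
      omega
  refine ⟨hDpart, ?_⟩
  intro q s hsm hks
  rcases Nat.eq_zero_or_pos s with hs0 | hs0
  · have h7 : m * q = k := by omega
    rw [h7]
  constructor
  · intro hkC
    by_contra hqmC
    rcases h.cover (m * q) with ⟨c, hc, b, hb, e⟩ | ⟨a, ha, d, hd, e⟩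
    · obtain ⟨q', hq'⟩ := hBmult b hb
      obtain ⟨hcval, hq'q⟩ := hsub (m * q) b q q' rfl hq' (by omega)
      rcases Nat.eq_zero_or_pos b with h0 | hpos
      · apply hqmC
        have h7 : c = m * q := by omega
        rwa [h7] at hc
      · have hcsC : m * (q - q') + s ∈ C := by
          rw [(IH (m * (q - q') + s) (by omega)).2 (q - q') s hsm rfl]
          have h7 : c = m * (q - q') := by omega
          rwa [h7] at hc
        have := h.uCB _ hcsC b hb k hkC 0 h.pair.zeroB (by omega)
        omega
    · have hd0 : d ≠ 0 := fun h0 => h.zeroD (h0 ▸ hd)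
      obtain ⟨q₃, hq₃⟩ := (IH d (by omega)).1 hd
      obtain ⟨haval, hq₃q⟩ := hsub (m * q) d q q₃ rfl hq₃ (by omega)
      have hasA : m * (q - q₃) + s ∈ A := by
        rw [hAchar (m * (q - q₃) + s) (q - q₃) s hsm rfl]
        have h7 : a = m * (q - q₃) := by omega
        rwa [h7] at ha
      exact h.cross k hkC 0 h.pair.zeroB _ hasA d hd (by omega)
  · intro hqmC
    rcases h.cover k with ⟨c, hc, b, hb, e⟩ | ⟨a, ha, d, hd, e⟩
    · obtain ⟨q', hq'⟩ := hBmult b hb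
      rcases Nat.eq_zero_or_pos b with h0 | hpos
      · have h7 : c = k := by omega
        rwa [← h7]
      · exfalso
        have hq'q : q' ≤ q := by
          have h6 : m * (q + 1) = m * q + m := by ring
          have h8 : m * q' < m * (q + 1) := by omega
          have := Nat.lt_of_mul_lt_mul_left h8
          omega
        have hexp : m * q = m * (q - q') + m * q' := by
          have h5 : q - q' + q' = q := by omega
          calc m * q = m * (q - q' + q') := by rw [h5]
          _ = m * (q - q') + m * q' := by ring
        have hcC : m * (q - q') ∈ C := by
          rw [← (IH c (by omega)).2 (q - q') s hsm (by omega)]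
          exact hc
        have := h.uCB _ hcC b hb _ hqmC 0 h.pair.zeroB (by omega)
        omega
    · exfalso
      rcases Nat.lt_or_ge d k with hdk | hdk
      · have hd0 : d ≠ 0 := fun h0 => h.zeroD (h0 ▸ hd)
        obtain ⟨q₃, hq₃⟩ := (IH d hdk).1 hd
        have hq₃q : q₃ ≤ q := by
          have h6 : m * (q + 1) = m * q + m := by ring
          have h8 : m * q₃ < m * (q + 1) := by omega
          have := Nat.lt_of_mul_lt_mul_left h8
          omega
        have hexp : m * q = m * (q - q₃) + m * q₃ := by
          have h5 : q - q₃ + q₃ = q := by omega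
          calc m * q = m * (q - q₃ + q₃) := by rw [h5]
          _ = m * (q - q₃) + m * q₃ := by ring
        have haA : m * (q - q₃) ∈ A := by
          rw [← hAchar a (q - q₃) s hsm (by omega)]
          exact ha
        exact h.cross (m * q) hqmC 0 h.pair.zeroB _ haA d hd (by omega)
      · have hdkeq : d = k := by omega
        rw [hdkeq] at hd
        obtain ⟨t, ht⟩ := hDpart hd
        have h8 : s = k % m := by
          rw [hks, Nat.mul_add_mod, Nat.mod_eq_of_lt hsm]
        have h9 : k % m = 0 := by rw [ht, Nat.mul_mod_right]
        omega

/-- Case Q structure claim: if `m` is the least positive element of `A`,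
then `C ⊆ mℕ` and `D` is a union of full blocks. -/
lemma CQ (h : Inst A B C D) {m : ℕ} (hmA : m ∈ A) (hm0 : m ≠ 0)
    (hmin : ∀ a ∈ A, a ≠ 0 → m ≤ a) :
    ∀ k, (k ∈ C → m ∣ k) ∧ ∀ q s, s < m → k = m * q + s → (k ∈ D ↔ m * q ∈ D) := by
  have hSL := h.pair.symm.SL hmA hm0 hmin
  have hAmult : ∀ a ∈ A, ∃ t, a = m * t := fun a ha => (hSL a).1 ha
  have hBchar : ∀ k q s, s < m → k = m * q + s → (k ∈ B ↔ m * q ∈ B) := fun k => (hSL k).2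
  have hlowB := h.pair.symm.low hmin
  have hmpos : 0 < m := Nat.pos_of_ne_zero hm0
  intro k
  induction k using Nat.strong_induction_on with
  | _ k IH =>
  have hqle : ∀ x q q', x = m * q' → x ≤ m * q + m - 1 → q' ≤ q := by
    intro x q q' hx hxq
    have h6 : m * (q + 1) = m * q + m := by ring
    have h8 : m * q' < m * (q + 1) := by omega
    have := Nat.lt_of_mul_lt_mul_left h8
    omega
  have hexp : ∀ q q', q' ≤ q → m * q = m * (q - q') + m * q' := by
    intro q q' hq
    have h5 : q - q' + q' = q := by omega
    calc m * q = m * (q - q' + q') := by rw [h5]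
    _ = m * (q - q') + m * q' := by ring
  have hCpart : k ∈ C → m ∣ k := by
    intro hkC
    obtain ⟨q, s, hsm, hks⟩ : ∃ q s, s < m ∧ k = m * q + s :=
      ⟨k / m, k % m, Nat.mod_lt _ hmpos, ((Nat.div_add_mod k m).symm ▸ rfl)⟩
    suffices hs0 : s = 0 by exact ⟨q, by omega⟩
    by_contra hs0
    rcases h.cover (m * q) with ⟨c, hc, b, hb, e⟩ | ⟨a, ha, d, hd, e⟩
    · obtain ⟨q₁, hq₁⟩ := (IH c (by omega)).1 hc
      have hq₁q : q₁ ≤ q := hqle c q q₁ hq₁ (by omega)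
      have he1 := hexp q q₁ hq₁q
      have hbsB : b + s ∈ B := by
        rw [hBchar (b + s) (q - q₁) s hsm (by omega)]
        have h7 : b = m * (q - q₁) := by omega
        rwa [h7] at hb
      have := h.uCB c hc _ hbsB k hkC 0 h.pair.zeroB (by omega)
      omega
    · obtain ⟨qa, hqa⟩ := hAmult a ha
      rcases Nat.eq_zero_or_pos a with h0 | hpos
      · have hdD : m * q ∈ D := by
          have h7 : d = m * q := by omega
          rwa [h7] at hd
        exact h.cross k hkC (m - s) (hlowB _ (by omega)) m hmA (m * q) hdD (by omega)
      · have hqaq : qa ≤ q := hqle a q qa hqa (by omega)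
        have he1 := hexp q qa hqaq
        have hdsD : d + s ∈ D := by
          have h7 : d + s = m * (q - qa) + s := by omega
          rw [h7, (IH (m * (q - qa) + s) (by omega)).2 (q - qa) s hsm rfl]
          have h8 : d = m * (q - qa) := by omega
          rwa [h8] at hd
        exact h.cross k hkC 0 h.pair.zeroB a ha _ hdsD (by omega)
  refine ⟨hCpart, ?_⟩
  intro q s hsm hks
  rcases Nat.eq_zero_or_pos s with hs0 | hs0
  · have h7 : m * q = k := by omega
    rw [h7]
  constructor
  · intro hkD
    by_contra hqmD
    rcases h.cover (m * q) with ⟨c, hc, b, hb, e⟩ | ⟨a, ha, d, hd, e⟩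
    · obtain ⟨q₁, hq₁⟩ := (IH c (by omega)).1 hc
      have hq₁q : q₁ ≤ q := hqle c q q₁ hq₁ (by omega)
      have he1 := hexp q q₁ hq₁q
      have hbsB : b + s ∈ B := by
        rw [hBchar (b + s) (q - q₁) s hsm (by omega)]
        have h7 : b = m * (q - q₁) := by omega
        rwa [h7] at hb
      exact h.cross c hc _ hbsB 0 h.pair.zeroA k hkD (by omega)
    · obtain ⟨qa, hqa⟩ := hAmult a ha
      rcases Nat.eq_zero_or_pos a with h0 | hpos
      · apply hqmD
        have h7 : d = m * q := by omega
        rwa [h7] at hd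
      · have hqaq : qa ≤ q := hqle a q qa hqa (by omega)
        have he1 := hexp q qa hqaq
        have hdsD : d + s ∈ D := by
          have h7 : d + s = m * (q - qa) + s := by omega
          rw [h7, (IH (m * (q - qa) + s) (by omega)).2 (q - qa) s hsm rfl]
          have h8 : d = m * (q - qa) := by omega
          rwa [h8] at hd
        have := h.uAD a ha _ hdsD 0 h.pair.zeroA k hkD (by omega)
        omega
  · intro hqmD
    rcases h.cover k with ⟨c, hc, b, hb, e⟩ | ⟨a, ha, d, hd, e⟩
    · exfalso
      rcases Nat.lt_or_ge c k with hck | hck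
      · obtain ⟨q₁, hq₁⟩ := (IH c hck).1 hc
        have hq₁q : q₁ ≤ q := hqle c q q₁ hq₁ (by omega)
        have he1 := hexp q q₁ hq₁q
        have hbmB : m * (q - q₁) ∈ B := by
          rw [← hBchar b (q - q₁) s hsm (by omega)]
          exact hb
        exact h.cross c hc _ hbmB 0 h.pair.zeroA (m * q) hqmD (by omega)
      · have hceq : c = k := by omega
        rw [hceq] at hc
        obtain ⟨t, ht⟩ := hCpart hc
        have h8 : s = k % m := by
          rw [hks, Nat.mul_add_mod, Nat.mod_eq_of_lt hsm]
        have h9 : k % m = 0 := by rw [ht, Nat.mul_mod_right]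
        omega
    · obtain ⟨qa, hqa⟩ := hAmult a ha
      rcases Nat.eq_zero_or_pos a with h0 | hpos
      · have h7 : d = k := by omega
        rwa [← h7]
      · exfalso
        have hqaq : qa ≤ q := hqle a q qa hqa (by omega)
        have he1 := hexp q qa hqaq
        have hdmD : m * (q - qa) ∈ D := by
          rw [← (IH d (by omega)).2 (q - qa) s hsm (by omega)]
          exact hd
        have := h.uAD a ha _ hdmD 0 h.pair.zeroA (m * q) hqmD (by omega)
        omega

/-- quotient of an infinite set is infinite -/
lemma infinite_quot {X Y : Set ℕ} {m : ℕ} (hm : m ≠ 0) (hmap : ∀ b ∈ X, b / m ∈ Y)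
    (hX : X.Infinite) : Y.Infinite := by
  intro hY
  apply hX
  have hsub : X ⊆ ⋃ q ∈ Y, Set.Ico (m * q) (m * q + m) := by
    intro b hb
    have h1 : m * (b / m) + b % m = b := Nat.div_add_mod b m
    have h2 : b % m < m := Nat.mod_lt _ (Nat.pos_of_ne_zero hm)
    exact Set.mem_biUnion (hmap b hb) (by simp only [Set.mem_Ico]; omega)
  exact Set.Finite.subset (Set.Finite.biUnion hY fun q _ => Set.finite_Ico _ _) hsub

/-- if one part of a sum `= m * k` is a multiple of `m`, so is the other -/
lemma other_mult {m y t a b : ℕ} (hm : 0 < m) (hb : b = m * y) (he : a + b = m * t) :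
    ∃ x, a = m * x := by
  have hy : y ≤ t := Nat.le_of_mul_le_mul_left (show m * y ≤ m * t by omega) hm
  refine ⟨t - y, ?_⟩
  have h5 : t - y + y = t := by omega
  have h6 : m * (t - y + y) = m * (t - y) + m * y := by ring
  rw [h5] at h6
  omega

/-- descent: dividing a level through by `m`. -/
lemma descend (h : Inst A B C D) {m : ℕ} (hm0 : m ≠ 0)
    (hCB : ∀ c ∈ C, ∀ b ∈ B, ∀ t, c + b = m * t → ∃ x y, c = m * x ∧ b = m * y)
    (hAB : ∀ a ∈ A, ∀ b ∈ B, ∀ t, a + b = m * t → ∃ x y, a = m * x ∧ b = m * y)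
    (hAD : ∀ a ∈ A, ∀ d ∈ D, ∀ t, a + d = m * t → ∃ x y, a = m * x ∧ d = m * y)
    (hqB : ∀ b ∈ B, m * (b / m) ∈ B) :
    Inst {q | m * q ∈ A} {q | m * q ∈ B} {q | m * q ∈ C} {q | m * q ∈ D} := by
  have hmpos : 0 < m := Nat.pos_of_ne_zero hm0
  have cancel : ∀ x y : ℕ, m * x = m * y → x = y := fun x y hxy =>
    Nat.eq_of_mul_eq_mul_left hmpos hxy
  have key : ∀ x y k : ℕ, m * x + m * y = m * k → x + y = k := by
    intro x y k hxy
    have h5 : m * (x + y) = m * x + m * y := by ring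
    exact cancel _ _ (by omega)
  have key2 : ∀ x y z w : ℕ, x + y = z + w → m * x + m * y = m * z + m * w := by
    intro x y z w hxy
    have h5 : m * (x + y) = m * x + m * y := by ring
    have h6 : m * (z + w) = m * z + m * w := by ring
    have h7 : m * (x + y) = m * (z + w) := by rw [hxy]
    omega
  refine ⟨⟨?_, ?_⟩, ?_, h.hC0, ?_, ?_, ?_, ?_⟩
  · intro k
    obtain ⟨a, ha, b, hb, e⟩ := h.pair.ex (m * k)
    obtain ⟨a₁, b₁, ha₁, hb₁⟩ := hAB a ha b hb k e
    refine ⟨a₁, ?_, b₁, ?_, key a₁ b₁ k (by omega)⟩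
    · simp only [Set.mem_setOf_eq]; rwa [← ha₁]
    · simp only [Set.mem_setOf_eq]; rwa [← hb₁]
  · intro a ha b hb a' ha' b' hb' e
    have := h.pair.uniq _ ha _ hb _ ha' _ hb' (key2 _ _ _ _ e)
    exact ⟨cancel _ _ this.1, cancel _ _ this.2⟩
  · refine infinite_quot hm0 (fun b hb => ?_) h.hBinf
    simp only [Set.mem_setOf_eq]
    exact hqB b hb
  · intro k
    rcases h.cover (m * k) with ⟨c, hc, b, hb, e⟩ | ⟨a, ha, d, hd, e⟩
    · obtain ⟨c₁, b₁, hc₁, hb₁⟩ := hCB c hc b hb k e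
      refine Or.inl ⟨c₁, ?_, b₁, ?_, key c₁ b₁ k (by omega)⟩
      · simp only [Set.mem_setOf_eq]; rwa [← hc₁]
      · simp only [Set.mem_setOf_eq]; rwa [← hb₁]
    · obtain ⟨a₁, d₁, ha₁, hd₁⟩ := hAD a ha d hd k e
      refine Or.inr ⟨a₁, ?_, d₁, ?_, key a₁ d₁ k (by omega)⟩
      · simp only [Set.mem_setOf_eq]; rwa [← ha₁]
      · simp only [Set.mem_setOf_eq]; rwa [← hd₁]
  · intro c hc b hb c' hc' b' hb' e
    have := h.uCB _ hc _ hb _ hc' _ hb' (key2 _ _ _ _ e)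
    exact ⟨cancel _ _ this.1, cancel _ _ this.2⟩
  · intro a ha d hd a' ha' d' hd' e
    have := h.uAD _ ha _ hd _ ha' _ hd' (key2 _ _ _ _ e)
    exact ⟨cancel _ _ this.1, cancel _ _ this.2⟩
  · intro c hc b hb a ha d hd e
    exact h.cross _ hc _ hb _ ha _ hd (key2 _ _ _ _ e)

/-- The key one-dimensional lemma: `D` is empty. -/
lemma crux : ∀ d : ℕ, ∀ {A B C D : Set ℕ}, Inst A B C D → d ∉ D := by
  intro d
  induction d using Nat.strong_induction_on with
  | _ d IH =>
  intro A B C D h hd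
  rcases Nat.eq_zero_or_pos d with hd0 | hdpos
  · exact h.zeroD (hd0 ▸ hd)
  have h1AB : 1 ∈ A ∨ 1 ∈ B := by
    obtain ⟨a, ha, b, hb, e⟩ := h.pair.ex 1
    rcases Nat.eq_zero_or_pos a with h0 | h1
    · refine Or.inr ?_
      have hb1 : b = 1 := by omega
      rwa [hb1] at hb
    · refine Or.inl ?_
      have ha1 : a = 1 := by omega
      rwa [ha1] at ha
  rcases h1AB with h1A | h1B
  · -- case P : 1 ∈ A, let m = least positive element of B
    have hne : {b | b ∈ B ∧ b ≠ 0}.Nonempty := by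
      obtain ⟨b, hb⟩ := (h.hBinf.diff (Set.finite_singleton 0)).nonempty
      exact ⟨b, hb.1, by simpa using hb.2⟩
    obtain ⟨hmB, hm0⟩ := Nat.sInf_mem hne
    set m := sInf {b | b ∈ B ∧ b ≠ 0} with hmdef
    have hmin : ∀ b ∈ B, b ≠ 0 → m ≤ b := fun b hb h0 => Nat.sInf_le ⟨hb, h0⟩
    have hm1 : m ≠ 1 := by
      intro h1
      have h1B : (1 : ℕ) ∈ B := h1 ▸ hmB
      have := h.pair.uniq 1 h1A 0 h.pair.zeroB 0 h.pair.zeroA 1 h1B (by omega)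
      omega
    have hSL := h.pair.SL hmB hm0 hmin
    have hCP := h.CP hmB hm0 hmin
    have hmpos : 0 < m := Nat.pos_of_ne_zero hm0
    have hinst := h.descend hm0
      (fun c hc b hb t e => by
        obtain ⟨y, hy⟩ := (hSL b).1 hb
        obtain ⟨x, hx⟩ := other_mult hmpos hy e
        exact ⟨x, y, hx, hy⟩)
      (fun a ha b hb t e => by
        obtain ⟨y, hy⟩ := (hSL b).1 hb
        obtain ⟨x, hx⟩ := other_mult hmpos hy e
        exact ⟨x, y, hx, hy⟩)
      (fun a ha d hd t e => by
        obtain ⟨y, hy⟩ := (hCP d).1 hd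
        obtain ⟨x, hx⟩ := other_mult hmpos hy e
        exact ⟨x, y, hx, hy⟩)
      (fun b hb => by
        obtain ⟨t, ht⟩ := (hSL b).1 hb
        have h9 : b / m = t := by rw [ht, Nat.mul_div_cancel_left _ (Nat.pos_of_ne_zero hm0)]
        rw [h9, ← ht]
        exact hb)
    have hdd : d / m ∈ {q | m * q ∈ D} := by
      obtain ⟨t, ht⟩ := (hCP d).1 hd
      have h9 : d / m = t := by rw [ht, Nat.mul_div_cancel_left _ (Nat.pos_of_ne_zero hm0)]
      simp only [Set.mem_setOf_eq, h9, ← ht]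
      exact hd
    exact IH (d / m) (Nat.div_lt_self hdpos (by omega)) hinst hdd
  · -- case Q : 1 ∈ B
    by_cases hA0 : ∀ a ∈ A, a = 0
    · -- A = {0} : directly B = ℕ and cross gives a contradiction
      obtain ⟨a, ha, b, hb, e⟩ := h.pair.ex d
      have ha0 : a = 0 := hA0 a ha
      have hbd : d ∈ B := by
        have : b = d := by omega
        rwa [this] at hb
      exact h.cross 0 h.hC0 d hbd 0 h.pair.zeroA d hd rfl
    · push_neg at hA0
      obtain ⟨a₀, ha₀, ha₀0⟩ := hA0
      have hne : {a | a ∈ A ∧ a ≠ 0}.Nonempty := ⟨a₀, ha₀, ha₀0⟩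
      obtain ⟨hmA, hm0⟩ := Nat.sInf_mem hne
      set m := sInf {a | a ∈ A ∧ a ≠ 0} with hmdef
      have hmin : ∀ a ∈ A, a ≠ 0 → m ≤ a := fun a ha h0 => Nat.sInf_le ⟨ha, h0⟩
      have hm1 : m ≠ 1 := by
        intro h1
        have h1A : (1 : ℕ) ∈ A := h1 ▸ hmA
        have := h.pair.uniq 1 h1A 0 h.pair.zeroB 0 h.pair.zeroA 1 h1B (by omega)
        omega
      have hSL := h.pair.symm.SL hmA hm0 hmin
      have hCQ := h.CQ hmA hm0 hmin
      have hmpos : 0 < m := Nat.pos_of_ne_zero hm0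
      have hinst := h.descend hm0
        (fun c hc b hb t e => by
          obtain ⟨x, hx⟩ := (hCQ c).1 hc
          obtain ⟨y, hy⟩ := other_mult hmpos hx (show b + c = m * t by omega)
          exact ⟨x, y, hx, hy⟩)
        (fun a ha b hb t e => by
          obtain ⟨x, hx⟩ := (hSL a).1 ha
          obtain ⟨y, hy⟩ := other_mult hmpos hx (show b + a = m * t by omega)
          exact ⟨x, y, hx, hy⟩)
        (fun a ha dd hdd t e => by
          obtain ⟨x, hx⟩ := (hSL a).1 ha
          obtain ⟨y, hy⟩ := other_mult hmpos hx (show dd + a = m * t by omega)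
          exact ⟨x, y, hx, hy⟩)
        (fun b hb => by
          have h1 : m * (b / m) + b % m = b := Nat.div_add_mod b m
          have h2 : b % m < m := Nat.mod_lt _ hmpos
          rw [← (hSL b).2 (b / m) (b % m) h2 (by omega)]
          exact hb)
      have hdd : d / m ∈ {q | m * q ∈ D} := by
        have h1 : m * (d / m) + d % m = d := Nat.div_add_mod d m
        have h2 : d % m < m := Nat.mod_lt _ hmpos
        simp only [Set.mem_setOf_eq]
        rw [← (hCQ d).2 (d / m) (d % m) h2 (by omega)]
        exact hd
      exact IH (d / m) (Nat.div_lt_self hdpos (by omega)) hinst hdd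

/-- Conclusion of the one-dimensional analysis : `D = ∅` and `C = A`. -/
lemma conclusion (h : Inst A B C D) : D = ∅ ∧ C = A := by
  have hD : D = ∅ := Set.eq_empty_iff_forall_notMem.2 fun d hd => crux d h hd
  refine ⟨hD, ?_⟩
  have main : ∀ k, k ∈ C ↔ k ∈ A := by
    intro k
    induction k using Nat.strong_induction_on with
    | _ k IH =>
    constructor
    · intro hkC
      obtain ⟨a, ha, b, hb, e⟩ := h.pair.ex k
      rcases Nat.eq_zero_or_pos b with h0 | hpos
      · have h7 : a = k := by omega
        rwa [h7] at ha
      · exfalso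
        have haC : a ∈ C := (IH a (by omega)).2 ha
        have := h.uCB a haC b hb k hkC 0 h.pair.zeroB (by omega)
        omega
    · intro hkA
      rcases h.cover k with ⟨c, hc, b, hb, e⟩ | ⟨a, ha, dd, hdd, e⟩
      · rcases Nat.eq_zero_or_pos b with h0 | hpos
        · have h7 : c = k := by omega
          rwa [h7] at hc
        · exfalso
          have hcA : c ∈ A := (IH c (by omega)).1 hc
          have := h.pair.uniq c hcA b hb k hkA 0 h.pair.zeroB (by omega)
          omega
      · exact absurd hdd (crux dd h)
  exact Set.ext main
end Inst


lemma MTpair {n : ℕ} (i₀ : Fin n) (T J : Set (Fin n → ℕ)) (hTJ : IsDirectSum T J Set.univ) :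
    NatPair {k : ℕ | Function.update (0 : Fin n → ℕ) i₀ k ∈ T}
      {k : ℕ | Function.update (0 : Fin n → ℕ) i₀ k ∈ J} := by
  have hex : ∀ z : Fin n → ℕ, ∃ t ∈ T, ∃ j ∈ J, t + j = z := by
    intro z
    have hz : z ∈ T + J := hTJ.1 ▸ Set.mem_univ z
    rwa [Set.mem_add] at hz
  have huniq := hTJ.2
  have single_add : ∀ a b : ℕ, Function.update (0 : Fin n → ℕ) i₀ a +
      Function.update (0 : Fin n → ℕ) i₀ b = Function.update (0 : Fin n → ℕ) i₀ (a + b) := by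
    intro a b
    funext l
    by_cases hl : l = i₀ <;> simp [hl, Function.update_apply]
  constructor
  · intro k
    obtain ⟨t, ht, j, hj, e⟩ := hex (Function.update (0 : Fin n → ℕ) i₀ k)
    have hzero : ∀ l, l ≠ i₀ → t l = 0 ∧ j l = 0 := by
      intro l hl
      have h1 := congrFun e l
      simp only [Pi.add_apply, Function.update_apply, if_neg hl, Pi.zero_apply] at h1
      omega
    have ht' : t = Function.update (0 : Fin n → ℕ) i₀ (t i₀) := by
      funext l
      by_cases hl : l = i₀
      · subst hl; simp
      · simp [Function.update_apply, hl, (hzero l hl).1]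
    have hj' : j = Function.update (0 : Fin n → ℕ) i₀ (j i₀) := by
      funext l
      by_cases hl : l = i₀
      · subst hl; simp
      · simp [Function.update_apply, hl, (hzero l hl).2]
    have hsum : t i₀ + j i₀ = k := by
      have h1 := congrFun e i₀
      simpa using h1
    exact ⟨t i₀, by rw [Set.mem_setOf_eq, ← ht']; exact ht,
           j i₀, by rw [Set.mem_setOf_eq, ← hj']; exact hj, hsum⟩
  · intro a ha b hb a' ha' b' hb' e
    have h1 := huniq _ ha _ hb _ ha' _ hb' (by rw [single_add, single_add, e])
    constructor
    · have := congrFun h1.1 i₀; simpa using this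
    · have := congrFun h1.2 i₀; simpa using this


section Dim

variable {n : ℕ} (i₀ : Fin n)

/-- The key structural theorem: if both axis fibres are infinite, then `T` and `J`
split off the `i₀` coordinate. -/
theorem MT (T J : Set (Fin n → ℕ)) (hTJ : IsDirectSum T J Set.univ)
    (hA : {k : ℕ | Function.update (0 : Fin n → ℕ) i₀ k ∈ T}.Infinite)
    (hB : {k : ℕ | Function.update (0 : Fin n → ℕ) i₀ k ∈ J}.Infinite) :
    ∀ u : Fin n → ℕ, u i₀ = 0 → ∀ k,
      (Function.update u i₀ k ∈ T ↔
        k ∈ {k : ℕ | Function.update (0 : Fin n → ℕ) i₀ k ∈ T} ∧ u ∈ T) ∧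
      (Function.update u i₀ k ∈ J ↔
        k ∈ {k : ℕ | Function.update (0 : Fin n → ℕ) i₀ k ∈ J} ∧ u ∈ J) := by
  set A := {k : ℕ | Function.update (0 : Fin n → ℕ) i₀ k ∈ T} with hAdef
  set B := {k : ℕ | Function.update (0 : Fin n → ℕ) i₀ k ∈ J} with hBdef
  have hex : ∀ z : Fin n → ℕ, ∃ t ∈ T, ∃ j ∈ J, t + j = z := by
    intro z
    have hz : z ∈ T + J := hTJ.1 ▸ Set.mem_univ z
    rwa [Set.mem_add] at hz
  have huniq := hTJ.2
  -- zero membership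
  have h0T : (0 : Fin n → ℕ) ∈ T := by
    obtain ⟨t, ht, j, hj, e⟩ := hex 0
    have : t = 0 := by
      funext l
      have := congrFun e l
      simp only [Pi.add_apply, Pi.zero_apply] at this ⊢
      omega
    rwa [this] at ht
  have h0J : (0 : Fin n → ℕ) ∈ J := by
    obtain ⟨t, ht, j, hj, e⟩ := hex 0
    have : j = 0 := by
      funext l
      have := congrFun e l
      simp only [Pi.add_apply, Pi.zero_apply] at this ⊢
      omega
    rwa [this] at hj
  -- single-coordinate functions
  have single_add : ∀ a b : ℕ, Function.update (0 : Fin n → ℕ) i₀ a +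
      Function.update (0 : Fin n → ℕ) i₀ b = Function.update (0 : Fin n → ℕ) i₀ (a + b) := by
    intro a b
    funext l
    by_cases hl : l = i₀ <;> simp [hl, Function.update_apply]
  have pair : NatPair A B := by
    constructor
    · intro k
      obtain ⟨t, ht, j, hj, e⟩ := hex (Function.update (0 : Fin n → ℕ) i₀ k)
      have hzero : ∀ l, l ≠ i₀ → t l = 0 ∧ j l = 0 := by
        intro l hl
        have := congrFun e l
        simp only [Pi.add_apply, Function.update_apply, if_neg hl, Pi.zero_apply] at this
        omega
      have ht' : t = Function.update (0 : Fin n → ℕ) i₀ (t i₀) := by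
        funext l
        by_cases hl : l = i₀
        · subst hl; simp
        · simp [Function.update_apply, hl, (hzero l hl).1]
      have hj' : j = Function.update (0 : Fin n → ℕ) i₀ (j i₀) := by
        funext l
        by_cases hl : l = i₀
        · subst hl; simp
        · simp [Function.update_apply, hl, (hzero l hl).2]
      have hsum : t i₀ + j i₀ = k := by
        have := congrFun e i₀
        simpa using this
      exact ⟨t i₀, by rw [hAdef, Set.mem_setOf_eq, ← ht']; exact ht,
             j i₀, by rw [hBdef, Set.mem_setOf_eq, ← hj']; exact hj, hsum⟩
    · intro a ha b hb a' ha' b' hb' e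
      have := huniq _ ha _ hb _ ha' _ hb' (by rw [single_add, single_add, e])
      constructor
      · have := congrFun this.1 i₀; simpa using this
      · have := congrFun this.2 i₀; simpa using this
  -- the main induction on the weight of u
  suffices H : ∀ N : ℕ, ∀ u : Fin n → ℕ, u i₀ = 0 → (∑ l, u l) = N → ∀ k,
      (Function.update u i₀ k ∈ T ↔ k ∈ A ∧ u ∈ T) ∧
      (Function.update u i₀ k ∈ J ↔ k ∈ B ∧ u ∈ J) by
    intro u hu k
    exact H (∑ l, u l) u hu rfl k
  intro N
  induction N using Nat.strong_induction_on with
  | _ N IH =>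
  intro u hu0 hsum k
  rcases Nat.eq_zero_or_pos N with hN | hN
  · -- u = 0
    have hu : u = 0 := by
      funext l
      have : ∀ l ∈ Finset.univ, u l = 0 :=
        (Finset.sum_eq_zero_iff).1 (by rw [hsum, hN])
      exact this l (Finset.mem_univ l)
    subst hu
    constructor
    · exact ⟨fun h => ⟨h, h0T⟩, fun h => h.1⟩
    · exact ⟨fun h => ⟨h, h0J⟩, fun h => h.1⟩
  · -- N > 0 : decompose u
    obtain ⟨p, hpT, q, hqJ, hpq⟩ := hex u
    have hpqi : p i₀ = 0 ∧ q i₀ = 0 := by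
      have h := congrFun hpq i₀
      simp only [Pi.add_apply, hu0] at h
      omega
    have hle : ∀ l, p l ≤ u l := by
      intro l
      have h := congrFun hpq l
      simp only [Pi.add_apply] at h
      omega
    have hqle : ∀ l, q l ≤ u l := by
      intro l
      have h := congrFun hpq l
      simp only [Pi.add_apply] at h
      omega
    have hlt : ∀ v : Fin n → ℕ, (∀ l, v l ≤ u l) → v ≠ u → ∑ l, v l < N := by
      intro v hv hne
      rw [← hsum]
      apply Finset.sum_lt_sum (fun i _ => hv i)
      obtain ⟨l, hl⟩ := Function.ne_iff.1 hne
      exact ⟨l, Finset.mem_univ l, lt_of_le_of_ne (hv l) hl⟩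
    obtain ⟨l₀, -, hl₀⟩ := Finset.exists_ne_zero_of_sum_ne_zero
      (show (∑ l, u l) ≠ 0 by omega)
    have hl₀i : l₀ ≠ i₀ := fun h => hl₀ (h ▸ hu0)
    have upd_self : Function.update u i₀ 0 = u := by
      conv_rhs => rw [← Function.update_eq_self i₀ u]
      rw [hu0]
    have upd_add_single : ∀ (v : Fin n → ℕ) c b, Function.update v i₀ c +
        Function.update (0 : Fin n → ℕ) i₀ b = Function.update v i₀ (c + b) := by
      intro v c b
      funext l
      by_cases hl : l = i₀ <;> simp [hl, Function.update_apply]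
    have single_add_upd : ∀ (v : Fin n → ℕ) a d, Function.update (0 : Fin n → ℕ) i₀ a +
        Function.update v i₀ d = Function.update v i₀ (a + d) := by
      intro v a d
      funext l
      by_cases hl : l = i₀ <;> simp [hl, Function.update_apply]
    -- dichotomy for decompositions of axis translates of u
    have dichotomy : (u ∈ T ∨ u ∈ J) → ∀ k' t j, t ∈ T → j ∈ J →
        t + j = Function.update u i₀ k' →
        (t = Function.update u i₀ (t i₀) ∧ j = Function.update (0 : Fin n → ℕ) i₀ (j i₀)) ∨
        (t = Function.update (0 : Fin n → ℕ) i₀ (t i₀) ∧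
          j = Function.update u i₀ (j i₀)) := by
      intro huTJ k' t j htT hjJ e
      set pt := Function.update t i₀ 0 with hptdef
      set pj := Function.update j i₀ 0 with hpjdef
      have hoff : ∀ l, l ≠ i₀ → t l + j l = u l := by
        intro l hl
        have h := congrFun e l
        simpa [Pi.add_apply, Function.update_apply, hl] using h
      have hsum_ptj : pt + pj = u := by
        funext l
        by_cases hl : l = i₀
        · subst hl; simp [hptdef, hpjdef, hu0]
        · simp [hptdef, hpjdef, Function.update_apply, hl, hoff l hl]
      have htpt : t = Function.update pt i₀ (t i₀) := by
        funext l
        by_cases hl : l = i₀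
        · subst hl; simp
        · simp [hptdef, Function.update_apply, hl]
      have hjpj : j = Function.update pj i₀ (j i₀) := by
        funext l
        by_cases hl : l = i₀
        · subst hl; simp
        · simp [hpjdef, Function.update_apply, hl]
      by_cases hptu : pt = u
      · left
        have hpj0 : pj = 0 := by
          funext l
          have h := congrFun hsum_ptj l
          rw [hptu] at h
          simp only [Pi.add_apply, Pi.zero_apply] at h ⊢
          omega
        rw [hptu] at htpt
        rw [hpj0] at hjpj
        exact ⟨htpt, hjpj⟩
      · by_cases hpju : pj = u
        · right
          have hpt0 : pt = 0 := by
            funext l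
            have h := congrFun hsum_ptj l
            rw [hpju] at h
            simp only [Pi.add_apply, Pi.zero_apply] at h ⊢
            omega
          rw [hpju] at hjpj
          rw [hpt0] at htpt
          exact ⟨htpt, hjpj⟩
        · exfalso
          have hptle : ∀ l, pt l ≤ u l := by
            intro l
            have h := congrFun hsum_ptj l
            simp only [Pi.add_apply] at h
            omega
          have hpjle : ∀ l, pj l ≤ u l := by
            intro l
            have h := congrFun hsum_ptj l
            simp only [Pi.add_apply] at h
            omega
          have hptT : pt ∈ T := by
            have h := (IH (∑ l, pt l) (hlt pt hptle hptu) pt (by simp [hptdef]) rfl (t i₀)).1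
            rw [← htpt] at h
            exact (h.1 htT).2
          have hpjJ : pj ∈ J := by
            have h := (IH (∑ l, pj l) (hlt pj hpjle hpju) pj (by simp [hpjdef]) rfl (j i₀)).2
            rw [← hjpj] at h
            exact (h.1 hjJ).2
          rcases huTJ with huT | huJ
          · exact hptu (huniq _ hptT _ hpjJ _ huT _ h0J (by rw [hsum_ptj, add_zero])).1
          · exact hpju (huniq _ hptT _ hpjJ _ h0T _ huJ (by rw [hsum_ptj, zero_add])).2
    by_cases hpu : p = u
    · -- case (ii) : u ∈ T
      have huT : u ∈ T := hpu ▸ hpT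
      have huJ : u ∉ J := by
        intro hJ
        have h := huniq _ huT _ h0J _ h0T _ hJ (by rw [add_zero, zero_add])
        have : u = 0 := h.1
        rw [this] at hsum
        simp at hsum
        omega
      have instT : Inst A B {k' | Function.update u i₀ k' ∈ T}
          {k' | Function.update u i₀ k' ∈ J} := by
        refine ⟨pair, hB, ?_, ?_, ?_, ?_, ?_⟩
        · show Function.update u i₀ 0 ∈ T
          rwa [upd_self]
        · intro k'
          obtain ⟨t, htT, j, hjJ, e⟩ := hex (Function.update u i₀ k')
          have hsum' : t i₀ + j i₀ = k' := by
            have h := congrFun e i₀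
            simpa using h
          rcases dichotomy (Or.inl huT) k' t j htT hjJ e with ⟨ht', hj'⟩ | ⟨ht', hj'⟩
          · left
            exact ⟨t i₀, by rw [Set.mem_setOf_eq, ← ht']; exact htT,
                   j i₀, by rw [hBdef, Set.mem_setOf_eq, ← hj']; exact hjJ, hsum'⟩
          · right
            exact ⟨t i₀, by rw [hAdef, Set.mem_setOf_eq, ← ht']; exact htT,
                   j i₀, by rw [Set.mem_setOf_eq, ← hj']; exact hjJ, hsum'⟩
        · intro c hc b hb c' hc' b' hb' e
          have h := huniq _ hc _ hb _ hc' _ hb'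
            (by rw [upd_add_single, upd_add_single, e])
          constructor
          · have := congrFun h.1 i₀; simpa using this
          · have := congrFun h.2 i₀; simpa using this
        · intro a ha d hd a' ha' d' hd' e
          have h := huniq _ ha _ hd _ ha' _ hd'
            (by rw [single_add_upd, single_add_upd, e])
          constructor
          · have := congrFun h.1 i₀; simpa using this
          · have := congrFun h.2 i₀; simpa using this
        · intro c hc b hb a ha d hd e
          have h := huniq _ hc _ hb _ ha _ hd
            (by rw [upd_add_single, single_add_upd, e])
          have h2 := congrFun h.1 l₀
          simp [Function.update_apply, hl₀i] at h2
          exact hl₀ h2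
      obtain ⟨hD, hCA⟩ := instT.conclusion
      constructor
      · constructor
        · intro hx
          have hk : k ∈ {k' | Function.update u i₀ k' ∈ T} := hx
          rw [hCA] at hk
          exact ⟨hk, huT⟩
        · intro hk
          have := hk.1
          rw [← hCA] at this
          exact this
      · constructor
        · intro hx
          have hk : k ∈ {k' | Function.update u i₀ k' ∈ J} := hx
          rw [hD] at hk
          exact absurd hk (Set.notMem_empty k)
        · intro hk
          exact absurd hk.2 huJ
    · by_cases hqu : q = u
      · -- case (iii) : u ∈ J
        have huJ : u ∈ J := hqu ▸ hqJ
        have huT : u ∉ T := by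
          intro hT
          have h := huniq _ hT _ h0J _ h0T _ huJ (by rw [add_zero, zero_add])
          have : u = 0 := h.1
          rw [this] at hsum
          simp at hsum
          omega
        have instJ : Inst B A {k' | Function.update u i₀ k' ∈ J}
            {k' | Function.update u i₀ k' ∈ T} := by
          refine ⟨pair.symm, hA, ?_, ?_, ?_, ?_, ?_⟩
          · show Function.update u i₀ 0 ∈ J
            rwa [upd_self]
          · intro k'
            obtain ⟨t, htT, j, hjJ, e⟩ := hex (Function.update u i₀ k')
            have hsum' : t i₀ + j i₀ = k' := by
              have h := congrFun e i₀
              simpa using h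
            rcases dichotomy (Or.inr huJ) k' t j htT hjJ e with ⟨ht', hj'⟩ | ⟨ht', hj'⟩
            · right
              exact ⟨j i₀, by rw [hBdef, Set.mem_setOf_eq, ← hj']; exact hjJ,
                     t i₀, by rw [Set.mem_setOf_eq, ← ht']; exact htT, by omega⟩
            · left
              exact ⟨j i₀, by rw [Set.mem_setOf_eq, ← hj']; exact hjJ,
                     t i₀, by rw [hAdef, Set.mem_setOf_eq, ← ht']; exact htT, by omega⟩
          · intro c hc b hb c' hc' b' hb' e
            have h := huniq _ hb _ hc _ hb' _ hc'
              (by rw [single_add_upd, single_add_upd, show b + c = b' + c' by omega])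
            constructor
            · have := congrFun h.2 i₀; simpa using this
            · have := congrFun h.1 i₀; simpa using this
          · intro a ha d hd a' ha' d' hd' e
            have h := huniq _ hd _ ha _ hd' _ ha'
              (by rw [upd_add_single, upd_add_single, show d + a = d' + a' by omega])
            constructor
            · have := congrFun h.2 i₀; simpa using this
            · have := congrFun h.1 i₀; simpa using this
          · intro c hc b hb a ha d hd e
            have h := huniq _ hb _ hc _ hd _ ha
              (by rw [single_add_upd, upd_add_single, show b + c = d + a by omega])
            have h2 := congrFun h.1 l₀
            simp [Function.update_apply, hl₀i] at h2
            exact hl₀ h2.symm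
        obtain ⟨hD, hCB⟩ := instJ.conclusion
        constructor
        · constructor
          · intro hx
            have hk : k ∈ {k' | Function.update u i₀ k' ∈ T} := hx
            rw [hD] at hk
            exact absurd hk (Set.notMem_empty k)
          · intro hk
            exact absurd hk.2 huT
        · constructor
          · intro hx
            have hk : k ∈ {k' | Function.update u i₀ k' ∈ J} := hx
            rw [hCB] at hk
            exact ⟨hk, huJ⟩
          · intro hk
            have := hk.1
            rw [← hCB] at this
            exact this
      · -- case (i) : u ∉ T, u ∉ J and no axis translate is in T or J
        have huT : u ∉ T := by
          intro hT
          have h := huniq _ hT _ h0J _ hpT _ hqJ (by rw [add_zero, hpq])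
          exact hpu h.1.symm
        have huJ : u ∉ J := by
          intro hJ
          have h := huniq _ hpT _ hqJ _ h0T _ hJ (by rw [hpq, zero_add])
          exact hqu h.2
        obtain ⟨a, haA, b, hbB, hab⟩ := pair.ex k
        have hpT' : Function.update p i₀ a ∈ T :=
          ((IH (∑ l, p l) (hlt p hle hpu) p hpqi.1 rfl a).1).2 ⟨haA, hpT⟩
        have hqJ' : Function.update q i₀ b ∈ J :=
          ((IH (∑ l, q l) (hlt q hqle hqu) q hpqi.2 rfl b).2).2 ⟨hbB, hqJ⟩
        have hsum' : Function.update p i₀ a + Function.update q i₀ b =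
            Function.update u i₀ k := by
          funext l
          by_cases hl : l = i₀
          · subst hl; simp [hab]
          · have h := congrFun hpq l
            simp only [Pi.add_apply] at h
            simp [Function.update_apply, hl, h]
        obtain ⟨lp, hlp⟩ := Function.ne_iff.1 hpu
        have hlpi : lp ≠ i₀ := by
          intro h
          subst h
          exact hlp (by rw [hpqi.1, hu0])
        obtain ⟨lq, hlq⟩ := Function.ne_iff.1 hqu
        have hlqi : lq ≠ i₀ := by
          intro h
          subst h
          exact hlq (by rw [hpqi.2, hu0])
        constructor
        · constructor
          · intro hx
            exfalso
            have h := huniq _ hx _ h0J _ hpT' _ hqJ' (by rw [add_zero, hsum'])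
            have h2 := congrFun h.1 lp
            simp [Function.update_apply, hlpi] at h2
            exact hlp h2.symm
          · intro hk
            exact absurd hk.2 huT
        · constructor
          · intro hx
            exfalso
            have h := huniq _ hpT' _ hqJ' _ h0T _ hx (by rw [hsum', zero_add])
            have h2 := congrFun h.2 lq
            simp [Function.update_apply, hlqi] at h2
            exact hlq h2
          · intro hk
            exact absurd hk.2 huJ

end Dim

theorem stmt17 {n : ℕ} (hn : 2 ≤ n) (T J : Set (Fin n → ℕ))
    (h : IsDirectSum T J Set.univ) (hprim : ¬ IsProductPair T J) :
    {k : ℕ | Pi.single (⟨0, by omega⟩ : Fin n) k ∈ T}.Finite ∨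
    {k : ℕ | Pi.single (⟨0, by omega⟩ : Fin n) k ∈ J}.Finite := by
  by_contra hcon
  push_neg at hcon
  obtain ⟨hAinf', hBinf'⟩ := hcon
  set i₀ : Fin n := ⟨0, by omega⟩ with hi₀def
  have hAinf : {k : ℕ | Function.update (0 : Fin n → ℕ) i₀ k ∈ T}.Infinite := hAinf'
  have hBinf : {k : ℕ | Function.update (0 : Fin n → ℕ) i₀ k ∈ J}.Infinite := hBinf'
  set A := {k : ℕ | Function.update (0 : Fin n → ℕ) i₀ k ∈ T} with hAdef
  set B := {k : ℕ | Function.update (0 : Fin n → ℕ) i₀ k ∈ J} with hBdef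
  have pair : NatPair A B := MTpair i₀ T J h
  have hmt := MT i₀ T J h hAinf hBinf
  have hex : ∀ z : Fin n → ℕ, ∃ t ∈ T, ∃ j ∈ J, t + j = z := by
    intro z
    have hz : z ∈ T + J := h.1 ▸ Set.mem_univ z
    rwa [Set.mem_add] at hz
  have huniq := h.2
  -- characterizations
  have charT : ∀ x : Fin n → ℕ, x ∈ T ↔ x i₀ ∈ A ∧ Function.update x i₀ 0 ∈ T := by
    intro x
    have h1 := (hmt (Function.update x i₀ 0) (by simp) (x i₀)).1
    rwa [Function.update_idem, Function.update_eq_self] at h1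
  have charJ : ∀ x : Fin n → ℕ, x ∈ J ↔ x i₀ ∈ B ∧ Function.update x i₀ 0 ∈ J := by
    intro x
    have h1 := (hmt (Function.update x i₀ 0) (by simp) (x i₀)).2
    rwa [Function.update_idem, Function.update_eq_self] at h1
  -- the product structure
  set S : Set (Fin n) := {i₀} with hSdef
  have hScompl : ∀ l : Fin n, l ∈ Sᶜ ↔ l ≠ i₀ := by
    intro l
    simp [hSdef]
  set x₀ : ↥S := ⟨i₀, rfl⟩ with hx₀def
  have hsingleton : ∀ s : ↥S, s = x₀ := by
    intro s
    exact Subtype.ext s.2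
  have hconstS : ∀ f : ↥S → ℕ, f = fun _ => f x₀ := by
    intro f
    funext s
    rw [hsingleton s]
  -- extension operator
  set ext : (↥Sᶜ → ℕ) → (Fin n → ℕ) :=
    fun f l => if hl : l = i₀ then 0 else f ⟨l, (hScompl l).2 hl⟩ with hextdef
  have ext_i₀ : ∀ f, ext f i₀ = 0 := fun f => dif_pos rfl
  have ext_ne : ∀ f (s : ↥Sᶜ), ext f s.1 = f s := by
    intro f s
    have hs : s.1 ≠ i₀ := (hScompl s.1).1 s.2
    simp only [hextdef, dif_neg hs]
  have ext_restrict : ∀ x : Fin n → ℕ,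
      ext (fun i : ↥Sᶜ => x i.1) = Function.update x i₀ 0 := by
    intro x
    funext l
    by_cases hl : l = i₀
    · subst hl; simp [hextdef]
    · simp [hextdef, dif_neg hl, Function.update_apply, hl]
  have ext_add : ∀ f g, ext (f + g) = ext f + ext g := by
    intro f g
    funext l
    by_cases hl : l = i₀
    · subst hl; simp [hextdef]
    · simp [hextdef, dif_neg hl]
  set I₁ : Set (↥S → ℕ) := {f | f x₀ ∈ A} with hI₁def
  set J₁ : Set (↥S → ℕ) := {f | f x₀ ∈ B} with hJ₁def
  set I₂ : Set (↥Sᶜ → ℕ) := {f | ext f ∈ T} with hI₂def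
  set J₂ : Set (↥Sᶜ → ℕ) := {f | ext f ∈ J} with hJ₂def
  apply hprim
  refine ⟨S, ⟨i₀, rfl⟩, ⟨⟨1, by omega⟩, (hScompl _).2 (by
    intro hl
    have := congrArg Fin.val hl
    simp [hi₀def] at this)⟩, I₁, J₁, I₂, J₂, ⟨?_, ?_⟩, ⟨?_, ?_⟩, ?_, ?_⟩
  · -- univ = I₁ + J₁
    apply Set.eq_of_subset_of_subset
    · intro f _
      obtain ⟨a, ha, b, hb, hab⟩ := pair.ex (f x₀)
      rw [Set.mem_add]
      refine ⟨fun _ => a, ha, fun _ => b, hb, ?_⟩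
      funext s
      rw [hsingleton s]
      exact hab
    · intro f _
      trivial
  · -- UniqueSumsOn I₁ J₁
    intro f hf g hg f' hf' g' hg' e
    have he : f x₀ + g x₀ = f' x₀ + g' x₀ := congrFun e x₀
    have := pair.uniq _ hf _ hg _ hf' _ hg' he
    constructor
    · rw [hconstS f, hconstS f', this.1]
    · rw [hconstS g, hconstS g', this.2]
  · -- univ = I₂ + J₂
    apply Set.eq_of_subset_of_subset
    · intro f _
      obtain ⟨t, htT, j, hjJ, e⟩ := hex (ext f)
      have hti : t i₀ = 0 ∧ j i₀ = 0 := by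
        have h1 := congrFun e i₀
        simp only [Pi.add_apply, ext_i₀] at h1
        omega
      have htext : ext (fun i : ↥Sᶜ => t i.1) = t := by
        rw [ext_restrict]
        conv_rhs => rw [← Function.update_eq_self i₀ t]
        rw [hti.1]
      have hjext : ext (fun i : ↥Sᶜ => j i.1) = j := by
        rw [ext_restrict]
        conv_rhs => rw [← Function.update_eq_self i₀ j]
        rw [hti.2]
      rw [Set.mem_add]
      refine ⟨fun i : ↥Sᶜ => t i.1, ?_, fun i : ↥Sᶜ => j i.1, ?_, ?_⟩
      · rw [hI₂def, Set.mem_setOf_eq, htext]; exact htT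
      · rw [hJ₂def, Set.mem_setOf_eq, hjext]; exact hjJ
      · funext s
        have h1 := congrFun e s.1
        simp only [Pi.add_apply] at h1 ⊢
        rw [ext_ne f s] at h1
        exact h1
    · intro f _
      trivial
  · -- UniqueSumsOn I₂ J₂
    intro f hf g hg f' hf' g' hg' e
    have he : ext f + ext g = ext f' + ext g' := by
      rw [← ext_add, ← ext_add, e]
    have h1 := huniq _ hf _ hg _ hf' _ hg' he
    constructor
    · funext s
      rw [← ext_ne f s, ← ext_ne f' s, h1.1]
    · funext s
      rw [← ext_ne g s, ← ext_ne g' s, h1.2]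
  · -- T splits
    apply Set.ext
    intro x
    rw [charT x]
    constructor
    · intro hx
      constructor
      · show (fun i : ↥S => x i.1) x₀ ∈ A
        exact hx.1
      · show ext (fun i : ↥Sᶜ => x i.1) ∈ T
        rw [ext_restrict]
        exact hx.2
    · intro hx
      refine ⟨hx.1, ?_⟩
      have h2 : ext (fun i : ↥Sᶜ => x i.1) ∈ T := hx.2
      rwa [ext_restrict] at h2
  · -- J splits
    apply Set.ext
    intro x
    rw [charJ x]
    constructor
    · intro hx
      constructor
      · show (fun i : ↥S => x i.1) x₀ ∈ B
        exact hx.1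
      · show ext (fun i : ↥Sᶜ => x i.1) ∈ J
        rw [ext_restrict]
        exact hx.2
    · intro hx
      refine ⟨hx.1, ?_⟩
      have h2 : ext (fun i : ↥Sᶜ => x i.1) ∈ J := hx.2
      rwa [ext_restrict] at h2
end

section
/- Let n ≥ 2 and (T, J) be a primitive ℕ^n-pair of class F₀, meaning that for each coordinate j, T ∩ ℕe_j equals {0} or ℕe_j. Then there exists an m-face Q₀ of ℕ^n with 2 ≤ m ≤ n such that the induced marginal pair (ρ(T ∩ Q₀), ρ(J ∩ Q₀)) is of pure type, i.e., contains L₀ = {x ∈ ℕ^m : some coordinate of x is 0} in one of its two members. -/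
open Pointwise

lemma two_elt : ∀ j k : Fin 2, j ≠ k → ∀ i : Fin 2, i = j ∨ i = k := by decide

lemma pair_subset {n : ℕ} {X : Set (Fin n → ℕ)} {j k : Fin n} (hjk : j ≠ k)
    (hj : ∀ m : ℕ, Pi.single j m ∈ X) (hk : ∀ m : ℕ, Pi.single k m ∈ X) :
    {x : Fin n → ℕ | (∀ i ∉ ({j, k} : Finset (Fin n)), x i = 0) ∧
      ∃ i ∈ ({j, k} : Finset (Fin n)), x i = 0} ⊆ X := by
  rintro x ⟨hs, i, hi, hxi⟩
  simp only [Finset.mem_insert, Finset.mem_singleton] at hi hs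
  have key : ∀ a b : Fin n, a ≠ b → (∀ m : ℕ, Pi.single b m ∈ X) → x a = 0 →
      (∀ i', i' ≠ a → i' ≠ b → x i' = 0) → x ∈ X := by
    intro a b hab hbX hxa hz
    have hx : x = Pi.single b (x b) := by
      funext i'
      by_cases h1 : i' = b
      · subst h1; simp
      · rw [Pi.single_eq_of_ne h1]
        by_cases h2 : i' = a
        · subst h2; exact hxa
        · exact hz i' h2 h1
    rw [hx]; exact hbX _
  rcases hi with h | h
  · exact key j k hjk hk (h ▸ hxi) (fun i' h1 h2 => hs i' (by tauto))
  · exact key k j hjk.symm hj (h ▸ hxi) (fun i' h1 h2 => hs i' (by tauto))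

lemma ds_univ_zero {α : Type*} [AddZeroClass α] :
    IsDirectSum (Set.univ : Set α) {0} Set.univ := by
  constructor
  · ext a
    constructor
    · intro _
      have : a + 0 ∈ (Set.univ : Set α) + {0} := Set.add_mem_add trivial rfl
      simpa using this
    · intro _; trivial
  · rintro a - b hb a' - b' hb'
    simp only [Set.mem_singleton_iff] at hb hb'
    subst hb; subst hb'
    intro hh
    exact ⟨by simpa using hh, rfl⟩

lemma ds_zero_univ {α : Type*} [AddZeroClass α] :
    IsDirectSum ({0} : Set α) Set.univ Set.univ := by
  constructor
  · ext a
    constructor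
    · intro _
      have : (0 : α) + a ∈ ({0} : Set α) + Set.univ := Set.add_mem_add rfl trivial
      simpa using this
    · intro _; trivial
  · rintro a ha b - a' ha' b' -
    simp only [Set.mem_singleton_iff] at ha ha'
    subst ha; subst ha'
    intro hh
    exact ⟨rfl, by simpa using hh⟩

lemma t_eq {T J : Set (Fin 2 → ℕ)} (h : IsDirectSum T J Set.univ) {j k : Fin 2} (hjk : j ≠ k)
    (hj : ∀ m : ℕ, Pi.single j m ∈ T) (hk : ∀ m : ℕ, Pi.single k m ∈ J) :
    T = {x | x k = 0} ∧ J = {x | x j = 0} := by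
  obtain ⟨hcov, huniq⟩ := h
  have h0T : (0 : Fin 2 → ℕ) ∈ T := by simpa using hj 0
  have h0J : (0 : Fin 2 → ℕ) ∈ J := by simpa using hk 0
  have hdec : ∀ x : Fin 2 → ℕ, x = Pi.single j (x j) + Pi.single k (x k) := by
    intro x; funext i
    rcases two_elt j k hjk i with rfl | rfl
    · simp [Pi.single_eq_of_ne hjk]
    · simp [Pi.single_eq_of_ne hjk.symm]
  constructor
  · ext t
    constructor
    · intro ht
      have hu := huniq t ht 0 h0J (Pi.single j (t j)) (hj _) (Pi.single k (t k)) (hk _)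
        (by rw [add_zero]; exact hdec t)
      have h2 := congrFun hu.2 k
      simp only [Pi.zero_apply, Pi.single_eq_same] at h2
      exact h2.symm
    · intro ht
      have : t = Pi.single j (t j) := by
        funext i
        rcases two_elt j k hjk i with rfl | rfl
        · simp
        · rw [Pi.single_eq_of_ne hjk.symm]; exact ht
      rw [this]; exact hj _
  · ext u
    constructor
    · intro hu
      have huu := huniq 0 h0T u hu (Pi.single j (u j)) (hj _) (Pi.single k (u k)) (hk _)
        (by rw [zero_add]; exact hdec u)
      have h1 := congrFun huu.1 j
      simp only [Pi.zero_apply, Pi.single_eq_same] at h1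
      exact h1.symm
    · intro hu
      have : u = Pi.single k (u k) := by
        funext i
        rcases two_elt j k hjk i with rfl | rfl
        · rw [Pi.single_eq_of_ne hjk]; exact hu
        · simp
      rw [this]; exact hk _

lemma prod_pair {T J : Set (Fin 2 → ℕ)} {j k : Fin 2} (hjk : j ≠ k)
    (hT : T = {x | x k = 0}) (hJ : J = {x | x j = 0}) : IsProductPair T J := by
  have hkc : k ∈ ({j} : Set (Fin 2))ᶜ := by simpa using hjk.symm
  refine ⟨{j}, ⟨j, rfl⟩, ⟨k, hkc⟩, Set.univ, {0}, {0}, Set.univ,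
    ds_univ_zero, ds_zero_univ, ?_, ?_⟩
  · rw [hT]; ext x
    simp only [Set.mem_setOf_eq, Set.mem_univ, true_and, Set.mem_singleton_iff]
    constructor
    · intro hx
      funext i
      obtain ⟨i, hi⟩ := i
      have hik : i = k := by
        rcases two_elt j k hjk i with rfl | rfl
        · exact absurd rfl hi
        · rfl
      subst hik
      simpa using hx
    · intro hx
      have := congrFun hx ⟨k, hkc⟩
      simpa using this
  · rw [hJ]; ext x
    simp only [Set.mem_setOf_eq, Set.mem_univ, and_true, Set.mem_singleton_iff]
    constructor
    · intro hx
      funext i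
      obtain ⟨i, hi⟩ := i
      have hij : i = j := hi
      subst hij
      simpa using hx
    · intro hx
      have := congrFun hx ⟨j, rfl⟩
      simpa using this

theorem stmt18 {n : ℕ} (hn : 2 ≤ n) (T J : Set (Fin n → ℕ))
    (h : IsDirectSum T J Set.univ) (hprim : ¬ IsProductPair T J)
    (hF0 : ∀ j : Fin n, {k : ℕ | Pi.single j k ∈ T} = {0} ∨
      {k : ℕ | Pi.single j k ∈ T} = Set.univ) :
    ∃ s : Finset (Fin n), 2 ≤ s.card ∧
      ({x : Fin n → ℕ | (∀ i ∉ s, x i = 0) ∧ ∃ i ∈ s, x i = 0} ⊆ T ∨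
       {x : Fin n → ℕ | (∀ i ∉ s, x i = 0) ∧ ∃ i ∈ s, x i = 0} ⊆ J) := by
  have hcol : ∀ j : Fin n, (∀ m : ℕ, Pi.single j m ∈ T) ∨ (∀ m : ℕ, Pi.single j m ∈ J) := by
    intro j
    rcases hF0 j with hj | hj
    · right
      intro m
      have hx : Pi.single j m ∈ T + J := h.1 ▸ Set.mem_univ _
      obtain ⟨a, ha, b, hb, hab⟩ := hx
      have haeq : a = Pi.single j (a j) := by
        funext i
        by_cases hij : i = j
        · subst hij; simp
        · rw [Pi.single_eq_of_ne hij]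
          have h1 : a i + b i = 0 := by
            have := congrFun hab i
            simpa [Pi.single_eq_of_ne hij] using this
          omega
      have haj : a j = 0 := by
        have h2 : a j ∈ {k | Pi.single j k ∈ T} := by
          show Pi.single j (a j) ∈ T
          rw [← haeq]; exact ha
        rw [hj] at h2
        exact h2
      have ha0 : a = 0 := by rw [haeq, haj, Pi.single_zero]
      have hbeq : b = Pi.single j m := by
        rw [ha0] at hab
        simpa using hab
      exact hbeq ▸ hb
    · left
      exact fun m => Set.eq_univ_iff_forall.mp hj m
  by_cases hsame : ∃ j k : Fin n, j ≠ k ∧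
      ((∀ m : ℕ, Pi.single j m ∈ T) ∧ (∀ m : ℕ, Pi.single k m ∈ T) ∨
       (∀ m : ℕ, Pi.single j m ∈ J) ∧ (∀ m : ℕ, Pi.single k m ∈ J))
  · obtain ⟨j, k, hjk, hc⟩ := hsame
    refine ⟨{j, k}, by rw [Finset.card_pair hjk], ?_⟩
    rcases hc with ⟨h1, h2⟩ | ⟨h1, h2⟩
    · exact Or.inl (pair_subset hjk h1 h2)
    · exact Or.inr (pair_subset hjk h1 h2)
  · rcases Nat.lt_or_ge n 3 with h3 | h3
    · have hn2 : n = 2 := by omega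
      subst hn2
      have hne : (0 : Fin 2) ≠ 1 := by decide
      rcases hcol 0 with h0 | h0 <;> rcases hcol 1 with h1 | h1
      · exact (hsame ⟨0, 1, hne, Or.inl ⟨h0, h1⟩⟩).elim
      · obtain ⟨hT, hJ⟩ := t_eq h hne h0 h1
        exact (hprim (prod_pair hne hT hJ)).elim
      · obtain ⟨hT, hJ⟩ := t_eq h hne.symm h1 h0
        exact (hprim (prod_pair hne.symm hT hJ)).elim
      · exact (hsame ⟨0, 1, hne, Or.inr ⟨h0, h1⟩⟩).elim
    · obtain ⟨a, ha0⟩ : ∃ a : Fin n, (a : ℕ) = 0 := ⟨⟨0, by omega⟩, rfl⟩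
      obtain ⟨b, hb1⟩ : ∃ b : Fin n, (b : ℕ) = 1 := ⟨⟨1, by omega⟩, rfl⟩
      obtain ⟨c, hc2⟩ : ∃ c : Fin n, (c : ℕ) = 2 := ⟨⟨2, by omega⟩, rfl⟩
      have hab : a ≠ b := fun e => by rw [e] at ha0; omega
      have hac : a ≠ c := fun e => by rw [e] at ha0; omega
      have hbc : b ≠ c := fun e => by rw [e] at hb1; omega
      rcases hcol a with hA | hA <;> rcases hcol b with hB | hB <;> rcases hcol c with hC | hC
      · exact (hsame ⟨a, b, hab, Or.inl ⟨hA, hB⟩⟩).elim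
      · exact (hsame ⟨a, b, hab, Or.inl ⟨hA, hB⟩⟩).elim
      · exact (hsame ⟨a, c, hac, Or.inl ⟨hA, hC⟩⟩).elim
      · exact (hsame ⟨b, c, hbc, Or.inr ⟨hB, hC⟩⟩).elim
      · exact (hsame ⟨b, c, hbc, Or.inl ⟨hB, hC⟩⟩).elim
      · exact (hsame ⟨a, c, hac, Or.inr ⟨hA, hC⟩⟩).elim
      · exact (hsame ⟨a, b, hab, Or.inr ⟨hA, hB⟩⟩).elim
      · exact (hsame ⟨a, b, hab, Or.inr ⟨hA, hB⟩⟩).elim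
end
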